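/- arXiv:1203.4017 — 7 statements merged into one kernel-verified Lean document; each statement's English description precedes it below -/
import Mathlib

section
/- For every bounded continuous initial function φ : (−∞,0] → ℝ and every t ≥ 0, the solution satisfies |x_φ(t)| ≤ ‖φ‖ (1 + ρ|b|/μ) e^{(|a|+|b|) t}. -/
open MeasureTheory Real Set

/-- The sup norm of the initial function over `(-∞, 0]`. -/
noncomputable def phiNorm (φ : ℝ → ℝ) : ℝ := ⨆ θ : Set.Iic (0 : ℝ), |φ (θ : ℝ)|

/-- `x` is the solution of the delay equation
`x'(t) = a x(t) + b ∫₀^∞ K(s) x(t-s) ds` with initial function `φ` on `(-∞, 0]`. -/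
def IsSolution (a b : ℝ) (K : ℝ → ℝ) (φ : ℝ → ℝ) (x : ℝ → ℝ) : Prop :=
  (∀ t ≤ (0 : ℝ), x t = φ t) ∧ ContinuousOn x (Set.Ici 0) ∧
  ∀ t ≥ (0 : ℝ), x t = φ 0 + ∫ u in (0 : ℝ)..t,
    (a * x u + b * ∫ s in Set.Ioi (0 : ℝ), K s * x (u - s))

set_option maxHeartbeats 1000000 in
theorem stmt0 (a b μ : ℝ) (K : ℝ → ℝ)
    (hKmeas : Measurable K) (hKpos : ∀ s ≥ (0 : ℝ), 0 ≤ K s)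
    (hKint : IntegrableOn K (Set.Ioi 0))
    (hKone : (∫ s in Set.Ioi (0 : ℝ), K s) = 1)
    (hμ : 0 < μ)
    (hρint : IntegrableOn (fun s => Real.exp (μ * s) * K s) (Set.Ioi 0))
    (ρ : ℝ) (hρ : ρ = ∫ s in Set.Ioi (0 : ℝ), Real.exp (μ * s) * K s)
    (φ x : ℝ → ℝ)
    (hφc : ContinuousOn φ (Set.Iic 0))
    (hφb : ∃ C, ∀ θ ≤ (0 : ℝ), |φ θ| ≤ C)
    (hx : IsSolution a b K φ x) :
    ∀ t ≥ (0 : ℝ),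
      |x t| ≤ phiNorm φ * (1 + ρ * |b| / μ) * Real.exp ((|a| + |b|) * t) := by
  obtain ⟨hx0, hxcOn, hxeq⟩ := hx
  obtain ⟨C0, hC0⟩ := hφb
  set M := phiNorm φ with hMdef
  -- the sup norm bounds φ
  have hMbd : ∀ θ ≤ (0:ℝ), |φ θ| ≤ M := by
    intro θ hθ
    have hbdd : BddAbove (Set.range fun θ : Set.Iic (0:ℝ) => |φ (θ : ℝ)|) := by
      refine ⟨C0, ?_⟩
      rintro y ⟨⟨θ', hθ'⟩, rfl⟩
      exact hC0 θ' hθ'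
    exact le_ciSup hbdd (⟨θ, hθ⟩ : Set.Iic (0:ℝ))
  have hM0 : 0 ≤ M := (abs_nonneg _).trans (hMbd 0 le_rfl)
  -- x is continuous on all of ℝ
  have hxIic : ContinuousOn x (Iic 0) := hφc.congr fun t ht => hx0 t ht
  have hxcont : Continuous x := by
    rw [← continuousOn_univ, ← Set.Iic_union_Ici (a := (0:ℝ))]
    intro t _
    have h1 : ContinuousWithinAt x (Iic 0) t := by
      rcases le_or_gt t 0 with h | h
      · exact hxIic t h
      · exact continuousWithinAt_of_notMem_closure (by rw [closure_Iic]; exact not_le.2 h)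
    have h2 : ContinuousWithinAt x (Ici 0) t := by
      rcases le_or_gt 0 t with h | h
      · exact hxcOn t h
      · exact continuousWithinAt_of_notMem_closure (by rw [closure_Ici]; exact not_le.2 h)
    exact h1.union h2
  have hxm : Measurable x := hxcont.measurable
  -- ρ ≥ 1
  have hρ1 : 1 ≤ ρ := by
    rw [hρ, ← hKone]
    refine setIntegral_mono_on hKint hρint measurableSet_Ioi fun s hs => ?_
    have h1 : 1 ≤ Real.exp (μ * s) := Real.one_le_exp (mul_nonneg hμ.le (le_of_lt hs))
    nlinarith [hKpos s (le_of_lt hs)]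
  have hρ0 : 0 ≤ ρ := zero_le_one.trans hρ1
  have hRnn : 0 ≤ ρ * |b| / μ := div_nonneg (mul_nonneg hρ0 (abs_nonneg b)) hμ.le
  have hR0 : 0 < 1 + ρ * |b| / μ := by linarith
  have hc0 : 0 ≤ |a| + |b| := by positivity
  -- bound on x on (-∞, 0]
  have hxneg : ∀ v ≤ (0:ℝ), |x v| ≤ M := fun v hv => by rw [hx0 v hv]; exact hMbd v hv
  -- tail estimate for K
  have htail : ∀ u, 0 ≤ u → (∫ s in Ioi u, K s) ≤ ρ * Real.exp (-μ * u) := by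
    intro u hu
    have hsub : Ioi u ⊆ Ioi (0:ℝ) := Ioi_subset_Ioi hu
    have hint1 : IntegrableOn K (Ioi u) := hKint.mono_set hsub
    have hint2 : IntegrableOn (fun s => Real.exp (-μ*u) * (Real.exp (μ*s) * K s)) (Ioi u) :=
      (hρint.mono_set hsub).const_mul _
    have h1 : (∫ s in Ioi u, K s) ≤ ∫ s in Ioi u, Real.exp (-μ*u) * (Real.exp (μ*s) * K s) := by
      refine setIntegral_mono_on hint1 hint2 measurableSet_Ioi fun s hs => ?_
      have hK : 0 ≤ K s := hKpos s (hu.trans (le_of_lt hs))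
      have h2 : Real.exp (μ*u) ≤ Real.exp (μ*s) :=
        Real.exp_le_exp.2 (mul_le_mul_of_nonneg_left (le_of_lt hs) hμ.le)
      have h3 : Real.exp (-μ*u) * Real.exp (μ*u) = 1 := by
        rw [← Real.exp_add]; ring_nf; exact Real.exp_zero
      have h6 : 1 ≤ Real.exp (-μ*u) * Real.exp (μ*s) := by
        rw [← h3]; exact mul_le_mul_of_nonneg_left h2 (Real.exp_pos _).le
      nlinarith [mul_le_mul_of_nonneg_right h6 hK]
    have h4 : (∫ s in Ioi u, Real.exp (-μ*u) * (Real.exp (μ*s) * K s))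
        = Real.exp (-μ*u) * ∫ s in Ioi u, Real.exp (μ*s) * K s := integral_const_mul _ _
    have h5 : (∫ s in Ioi u, Real.exp (μ*s) * K s) ≤ ρ := by
      rw [hρ]
      refine setIntegral_mono_set hρint ?_ (HasSubset.Subset.eventuallyLE hsub)
      filter_upwards [ae_restrict_mem measurableSet_Ioi] with s hs
      have := hKpos s (le_of_lt hs)
      positivity
    calc (∫ s in Ioi u, K s) ≤ Real.exp (-μ*u) * ∫ s in Ioi u, Real.exp (μ*s) * K s := by
          rw [← h4]; exact h1
      _ ≤ Real.exp (-μ*u) * ρ := by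
          exact mul_le_mul_of_nonneg_left h5 (Real.exp_pos _).le
      _ = ρ * Real.exp (-μ*u) := by ring
  -- the key estimate with an ε of room
  have key : ∀ ε > (0:ℝ), ∀ t ≥ (0:ℝ),
      |x t| ≤ (M + ε) * (1 + ρ * |b| / μ) * Real.exp ((|a| + |b|) * t) := by
    intro ε hε
    by_contra hcon
    push_neg at hcon
    obtain ⟨t1, ht1, hlt1⟩ := hcon
    set S : Set ℝ := {t : ℝ | 0 ≤ t ∧
      (M + ε) * (1 + ρ * |b| / μ) * Real.exp ((|a| + |b|) * t) < |x t|} with hSdef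
    have hSne : S.Nonempty := ⟨t1, ht1, hlt1⟩
    have hSbdd : BddBelow S := ⟨0, fun t ht => ht.1⟩
    set t₀ := sInf S with ht₀def
    have ht₀0 : 0 ≤ t₀ := le_csInf hSne fun t ht => ht.1
    have hBcont : Continuous fun t => (M + ε) * (1 + ρ * |b| / μ) * Real.exp ((|a| + |b|) * t) := by
      fun_prop
    have hge : (M + ε) * (1 + ρ * |b| / μ) * Real.exp ((|a| + |b|) * t₀) ≤ |x t₀| := by
      have hsubset : closure S ⊆ {t : ℝ |
          (M + ε) * (1 + ρ * |b| / μ) * Real.exp ((|a| + |b|) * t) ≤ |x t|} :=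
        closure_minimal (fun t ht => le_of_lt ht.2) (isClosed_le hBcont hxcont.abs)
      exact hsubset (csInf_mem_closure hSne hSbdd)
    have hprev : ∀ u, 0 ≤ u → u < t₀ → |x u| ≤
        (M + ε) * (1 + ρ * |b| / μ) * Real.exp ((|a| + |b|) * u) := by
      intro u hu hut
      by_contra h'
      exact absurd (csInf_le hSbdd ⟨hu, lt_of_not_ge h'⟩) (not_le.2 hut)
    -- global bound for x on (-∞, t₀]
    obtain ⟨Cb, hCb⟩ := (isCompact_Icc : IsCompact (Icc (0:ℝ) t₀)).exists_bound_of_continuousOn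
      hxcont.continuousOn
    set C' := max M Cb with hC'def
    have hxbd : ∀ v ≤ t₀, |x v| ≤ C' := by
      intro v hv
      rcases le_or_gt v 0 with h | h
      · exact (hxneg v h).trans (le_max_left _ _)
      · exact le_trans (by simpa using hCb v ⟨h.le, hv⟩) (le_max_right _ _)
    -- integrability of the delayed term
    have hinner : ∀ u ≤ t₀, IntegrableOn (fun s => K s * x (u - s)) (Ioi 0) := by
      intro u hu
      have hmeas : AEStronglyMeasurable (fun s => K s * x (u - s)) (volume.restrict (Ioi 0)) :=
        (hKmeas.mul (hxm.comp (measurable_const.sub measurable_id))).aestronglyMeasurable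
      refine Integrable.mono' (hKint.const_mul C') hmeas ?_
      filter_upwards [ae_restrict_mem measurableSet_Ioi] with s hs
      have hK : 0 ≤ K s := hKpos s (le_of_lt hs)
      have hxv : |x (u - s)| ≤ C' := hxbd _ (by linarith [hs.out])
      rw [Real.norm_eq_abs, abs_mul, abs_of_nonneg hK]
      calc K s * |x (u-s)| ≤ K s * C' := mul_le_mul_of_nonneg_left hxv hK
        _ = C' * K s := by ring
    -- the delayed term is measurable in u
    have hImeas : StronglyMeasurable fun u => ∫ s in Ioi (0:ℝ), K s * x (u - s) := by
      have h : StronglyMeasurable fun p : ℝ × ℝ => K p.2 * x (p.1 - p.2) :=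
        ((hKmeas.comp measurable_snd).mul
          (hxm.comp (measurable_fst.sub measurable_snd))).stronglyMeasurable
      exact h.integral_prod_right'
    -- pointwise bound for the delayed term
    have hIbd : ∀ u ∈ Ioc (0:ℝ) t₀, |∫ s in Ioi (0:ℝ), K s * x (u - s)| ≤
        (M + ε) * (1 + ρ * |b| / μ) * Real.exp ((|a| + |b|) * u) + M * (ρ * Real.exp (-μ * u)) := by
      intro u hu
      obtain ⟨hu0, hut⟩ := hu
      have hB0 : 0 ≤ (M + ε) * (1 + ρ * |b| / μ) * Real.exp ((|a| + |b|) * u) := by positivity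
      have hint1 : IntegrableOn (fun s => K s * x (u - s)) (Ioc 0 u) :=
        (hinner u hut).mono_set Ioc_subset_Ioi_self
      have hint2 : IntegrableOn (fun s => K s * x (u - s)) (Ioi u) :=
        (hinner u hut).mono_set (Ioi_subset_Ioi hu0.le)
      have hsplit : (∫ s in Ioi (0:ℝ), K s * x (u - s))
          = (∫ s in Ioc 0 u, K s * x (u - s)) + ∫ s in Ioi u, K s * x (u - s) := by
        rw [← setIntegral_union Ioc_disjoint_Ioi_same measurableSet_Ioi hint1 hint2,
          Ioc_union_Ioi_eq_Ioi hu0.le]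
      have hbd1 : |∫ s in Ioc (0:ℝ) u, K s * x (u - s)| ≤
          (M + ε) * (1 + ρ * |b| / μ) * Real.exp ((|a| + |b|) * u) := by
        have h1 : |∫ s in Ioc (0:ℝ) u, K s * x (u - s)| ≤
            ∫ s in Ioc (0:ℝ) u, ‖K s * x (u - s)‖ := by
          simpa [Real.norm_eq_abs] using
            norm_integral_le_integral_norm (μ := volume.restrict (Ioc (0:ℝ) u))
              (f := fun s => K s * x (u - s))
        have h2 : (∫ s in Ioc (0:ℝ) u, ‖K s * x (u - s)‖) ≤
            ∫ s in Ioc (0:ℝ) u, K s * ((M + ε) * (1 + ρ * |b| / μ) * Real.exp ((|a| + |b|) * u)) := by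
          refine setIntegral_mono_on hint1.norm
            ((hKint.mono_set Ioc_subset_Ioi_self).mul_const _) measurableSet_Ioc fun s hs => ?_
          have hK : 0 ≤ K s := hKpos s hs.1.le
          have hv0 : 0 ≤ u - s := by linarith [hs.2]
          have hvt : u - s < t₀ := by linarith [hs.1, hut]
          have hxv : |x (u - s)| ≤
              (M + ε) * (1 + ρ * |b| / μ) * Real.exp ((|a| + |b|) * (u - s)) := hprev _ hv0 hvt
          have hmono : Real.exp ((|a| + |b|) * (u - s)) ≤ Real.exp ((|a| + |b|) * u) :=
            Real.exp_le_exp.2 (mul_le_mul_of_nonneg_left (by linarith [hs.1]) hc0)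
          rw [Real.norm_eq_abs, abs_mul, abs_of_nonneg hK]
          have hMε : 0 ≤ (M + ε) * (1 + ρ * |b| / μ) := by positivity
          have hxv2 : |x (u - s)| ≤ (M + ε) * (1 + ρ * |b| / μ) * Real.exp ((|a| + |b|) * u) :=
            hxv.trans (mul_le_mul_of_nonneg_left hmono hMε)
          exact mul_le_mul_of_nonneg_left hxv2 hK
        have h3 : (∫ s in Ioc (0:ℝ) u, K s *
            ((M + ε) * (1 + ρ * |b| / μ) * Real.exp ((|a| + |b|) * u)))
            = (∫ s in Ioc (0:ℝ) u, K s) *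
              ((M + ε) * (1 + ρ * |b| / μ) * Real.exp ((|a| + |b|) * u)) := integral_mul_const _ _
        have h4 : (∫ s in Ioc (0:ℝ) u, K s) ≤ 1 := by
          rw [← hKone]
          refine setIntegral_mono_set hKint ?_
            (HasSubset.Subset.eventuallyLE Ioc_subset_Ioi_self)
          filter_upwards [ae_restrict_mem measurableSet_Ioi] with s hs
          exact hKpos s (le_of_lt hs)
        calc |∫ s in Ioc (0:ℝ) u, K s * x (u - s)| ≤ _ := h1
          _ ≤ _ := h2
          _ = (∫ s in Ioc (0:ℝ) u, K s) *
              ((M + ε) * (1 + ρ * |b| / μ) * Real.exp ((|a| + |b|) * u)) := h3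
          _ ≤ 1 * ((M + ε) * (1 + ρ * |b| / μ) * Real.exp ((|a| + |b|) * u)) :=
            mul_le_mul_of_nonneg_right h4 hB0
          _ = _ := one_mul _
      have hbd2 : |∫ s in Ioi u, K s * x (u - s)| ≤ M * (ρ * Real.exp (-μ * u)) := by
        have h1 : |∫ s in Ioi u, K s * x (u - s)| ≤ ∫ s in Ioi u, ‖K s * x (u - s)‖ := by
          simpa [Real.norm_eq_abs] using
            norm_integral_le_integral_norm (μ := volume.restrict (Ioi u))
              (f := fun s => K s * x (u - s))
        have h2 : (∫ s in Ioi u, ‖K s * x (u - s)‖) ≤ ∫ s in Ioi u, K s * M := by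
          refine setIntegral_mono_on hint2.norm
            ((hKint.mono_set (Ioi_subset_Ioi hu0.le)).mul_const _) measurableSet_Ioi fun s hs => ?_
          have hK : 0 ≤ K s := hKpos s (hu0.le.trans (le_of_lt hs))
          have hv : u - s ≤ 0 := by linarith [hs.out]
          have hxv : |x (u - s)| ≤ M := hxneg _ hv
          rw [Real.norm_eq_abs, abs_mul, abs_of_nonneg hK]
          exact mul_le_mul_of_nonneg_left hxv hK
        have h3 : (∫ s in Ioi u, K s * M) = (∫ s in Ioi u, K s) * M := integral_mul_const _ _
        calc |∫ s in Ioi u, K s * x (u - s)| ≤ _ := h1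
          _ ≤ _ := h2
          _ = (∫ s in Ioi u, K s) * M := h3
          _ ≤ (ρ * Real.exp (-μ * u)) * M :=
            mul_le_mul_of_nonneg_right (htail u hu0.le) hM0
          _ = M * (ρ * Real.exp (-μ * u)) := by ring
      calc |∫ s in Ioi (0:ℝ), K s * x (u - s)|
          = |(∫ s in Ioc 0 u, K s * x (u - s)) + ∫ s in Ioi u, K s * x (u - s)| := by rw [hsplit]
        _ ≤ |∫ s in Ioc (0:ℝ) u, K s * x (u - s)| + |∫ s in Ioi u, K s * x (u - s)| := abs_add_le _ _
        _ ≤ _ := add_le_add hbd1 hbd2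
    -- the a.e. bound for the integrand of the integral equation
    have hae : ∀ᵐ u ∂volume.restrict (Set.uIoc (0:ℝ) t₀),
        ‖a * x u + b * ∫ s in Ioi (0:ℝ), K s * x (u - s)‖ ≤
          (M + ε) * (1 + ρ * |b| / μ) * (Real.exp ((|a| + |b|) * u) * (|a| + |b|)) +
            |b| * M * ρ * Real.exp (-μ * u) := by
      have hIoc : Set.uIoc (0:ℝ) t₀ = Ioc 0 t₀ := uIoc_of_le ht₀0
      rw [hIoc]
      have h0 : ∀ᵐ u : ℝ, u ≠ t₀ := by
        rw [ae_iff]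
        simp only [ne_eq, not_not, setOf_eq_eq_singleton]
        exact Real.volume_singleton
      filter_upwards [ae_restrict_mem measurableSet_Ioc, ae_restrict_of_ae h0] with u hu hne
      obtain ⟨hu0, hut⟩ := hu
      have hxu : |x u| ≤ (M + ε) * (1 + ρ * |b| / μ) * Real.exp ((|a| + |b|) * u) :=
        hprev u hu0.le (lt_of_le_of_ne hut hne)
      have hIu := hIbd u ⟨hu0, hut⟩
      rw [Real.norm_eq_abs]
      calc |a * x u + b * ∫ s in Ioi (0:ℝ), K s * x (u - s)|
          ≤ |a| * |x u| + |b| * |∫ s in Ioi (0:ℝ), K s * x (u - s)| := by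
            rw [← abs_mul, ← abs_mul]; exact abs_add_le _ _
        _ ≤ |a| * ((M + ε) * (1 + ρ * |b| / μ) * Real.exp ((|a| + |b|) * u)) +
            |b| * ((M + ε) * (1 + ρ * |b| / μ) * Real.exp ((|a| + |b|) * u) +
              M * (ρ * Real.exp (-μ * u))) :=
            add_le_add (mul_le_mul_of_nonneg_left hxu (abs_nonneg a))
              (mul_le_mul_of_nonneg_left hIu (abs_nonneg b))
        _ = (M + ε) * (1 + ρ * |b| / μ) * (Real.exp ((|a| + |b|) * u) * (|a| + |b|)) +
            |b| * M * ρ * Real.exp (-μ * u) := by ring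
    -- compute the integral of the dominating function
    have hG1 : ∫ u in (0:ℝ)..t₀, Real.exp ((|a| + |b|) * u) * (|a| + |b|)
        = Real.exp ((|a| + |b|) * t₀) - 1 := by
      rw [intervalIntegral.integral_eq_sub_of_hasDerivAt
        (f := fun v => Real.exp ((|a| + |b|) * v))
        (fun u _ => by simpa using ((hasDerivAt_id u).const_mul (|a| + |b|)).exp)
        ((by fun_prop : Continuous fun u => Real.exp ((|a| + |b|) * u) * (|a| + |b|)).intervalIntegrable _ _)]
      simp
    have hG2 : ∫ u in (0:ℝ)..t₀, Real.exp (-μ * u) = (1 - Real.exp (-μ * t₀)) / μ := by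
      have hd : ∀ u ∈ uIcc (0:ℝ) t₀,
          HasDerivAt (fun v => -Real.exp (-μ * v) / μ) (Real.exp (-μ * u)) u := by
        intro u _
        have h := (((hasDerivAt_id u).const_mul (-μ)).exp).neg.div_const μ
        convert h using 1
        · rfl
        · rfl
        · rfl
        · simp only [id, mul_one]
          field_simp
      rw [intervalIntegral.integral_eq_sub_of_hasDerivAt hd
        ((by fun_prop : Continuous fun u => Real.exp (-μ * u)).intervalIntegrable _ _)]
      simp only [mul_zero, Real.exp_zero]
      ring
    have hGint : IntervalIntegrable (fun u =>
        (M + ε) * (1 + ρ * |b| / μ) * (Real.exp ((|a| + |b|) * u) * (|a| + |b|)) +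
          |b| * M * ρ * Real.exp (-μ * u)) volume 0 t₀ :=
      (by fun_prop : Continuous fun u =>
        (M + ε) * (1 + ρ * |b| / μ) * (Real.exp ((|a| + |b|) * u) * (|a| + |b|)) +
          |b| * M * ρ * Real.exp (-μ * u)).intervalIntegrable _ _
    have hGval : (∫ u in (0:ℝ)..t₀,
        ((M + ε) * (1 + ρ * |b| / μ) * (Real.exp ((|a| + |b|) * u) * (|a| + |b|)) +
          |b| * M * ρ * Real.exp (-μ * u)))
        = (M + ε) * (1 + ρ * |b| / μ) * (Real.exp ((|a| + |b|) * t₀) - 1) +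
          |b| * M * ρ * ((1 - Real.exp (-μ * t₀)) / μ) := by
      rw [intervalIntegral.integral_add
          (((by fun_prop : Continuous fun u =>
            (M + ε) * (1 + ρ * |b| / μ) * (Real.exp ((|a| + |b|) * u) * (|a| + |b|)))).intervalIntegrable _ _)
          (((by fun_prop : Continuous fun u =>
            |b| * M * ρ * Real.exp (-μ * u))).intervalIntegrable _ _),
        intervalIntegral.integral_const_mul, intervalIntegral.integral_const_mul, hG1, hG2]
    -- the dominating integral is nonnegative
    have hE1 : 1 ≤ Real.exp ((|a| + |b|) * t₀) := Real.one_le_exp (by positivity)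
    have hE2 : Real.exp (-μ * t₀) ≤ 1 := Real.exp_le_one_iff.2 (by nlinarith)
    have hE2' : 0 ≤ Real.exp (-μ * t₀) := (Real.exp_pos _).le
    -- put everything together
    have hxeqt := hxeq t₀ ht₀0
    have hb2 : |∫ u in (0:ℝ)..t₀,
        (a * x u + b * ∫ s in Ioi (0:ℝ), K s * x (u - s))| ≤
        (M + ε) * (1 + ρ * |b| / μ) * (Real.exp ((|a| + |b|) * t₀) - 1) +
          |b| * M * ρ * ((1 - Real.exp (-μ * t₀)) / μ) := by
      have h := intervalIntegral.norm_integral_le_abs_of_norm_le hae hGint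
      rw [Real.norm_eq_abs, hGval] at h
      have h1 : 0 ≤ (M + ε) * (1 + ρ * |b| / μ) * (Real.exp ((|a| + |b|) * t₀) - 1) := by
        have h1' : 0 ≤ (M + ε) * (1 + ρ * |b| / μ) := by positivity
        nlinarith
      have h2 : 0 ≤ |b| * M * ρ * ((1 - Real.exp (-μ * t₀)) / μ) := by
        have h3 : 0 ≤ (1 - Real.exp (-μ * t₀)) / μ := div_nonneg (by linarith) hμ.le
        have h4 : 0 ≤ |b| * M * ρ := by positivity
        exact mul_nonneg h4 h3
      have hnn : 0 ≤ (M + ε) * (1 + ρ * |b| / μ) * (Real.exp ((|a| + |b|) * t₀) - 1) +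
          |b| * M * ρ * ((1 - Real.exp (-μ * t₀)) / μ) := by linarith
      rw [abs_of_nonneg hnn] at h
      exact h
    have hb1 : |x t₀| ≤ M + ((M + ε) * (1 + ρ * |b| / μ) * (Real.exp ((|a| + |b|) * t₀) - 1) +
          |b| * M * ρ * ((1 - Real.exp (-μ * t₀)) / μ)) := by
      rw [hxeqt]
      calc |φ 0 + ∫ u in (0:ℝ)..t₀, (a * x u + b * ∫ s in Ioi (0:ℝ), K s * x (u - s))|
          ≤ |φ 0| + |∫ u in (0:ℝ)..t₀, (a * x u + b * ∫ s in Ioi (0:ℝ), K s * x (u - s))| :=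
            abs_add_le _ _
        _ ≤ _ := add_le_add (hMbd 0 le_rfl) hb2
    -- contradiction
    have hfinal : M + ((M + ε) * (1 + ρ * |b| / μ) * (Real.exp ((|a| + |b|) * t₀) - 1) +
          |b| * M * ρ * ((1 - Real.exp (-μ * t₀)) / μ)) <
        (M + ε) * (1 + ρ * |b| / μ) * Real.exp ((|a| + |b|) * t₀) := by
      have h1 : |b| * M * ρ * ((1 - Real.exp (-μ * t₀)) / μ) ≤ |b| * M * ρ * (1 / μ) := by
        have h4 : 0 ≤ |b| * M * ρ := by positivity
        have h5 : (1 - Real.exp (-μ * t₀)) / μ ≤ 1 / μ := by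
          gcongr
          linarith
        exact mul_le_mul_of_nonneg_left h5 h4
      have h2 : M + |b| * M * ρ * (1 / μ) = M * (1 + ρ * |b| / μ) := by
        field_simp
      have h3 : (M + ε) * (1 + ρ * |b| / μ) * Real.exp ((|a| + |b|) * t₀)
          = (M + ε) * (1 + ρ * |b| / μ) * (Real.exp ((|a| + |b|) * t₀) - 1)
            + (M + ε) * (1 + ρ * |b| / μ) := by ring
      have h6 : M * (1 + ρ * |b| / μ) < (M + ε) * (1 + ρ * |b| / μ) := by nlinarith
      linarith
    linarith [hge, hb1, hfinal]
  -- remove the ε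
  intro t ht
  have hP0 : 0 < (1 + ρ * |b| / μ) * Real.exp ((|a| + |b|) * t) :=
    mul_pos hR0 (Real.exp_pos _)
  have hPne : (1 + ρ * |b| / μ) * Real.exp ((|a| + |b|) * t) ≠ 0 := ne_of_gt hP0
  refine le_of_forall_pos_le_add fun δ hδ => ?_
  have hεpos : 0 < δ / ((1 + ρ * |b| / μ) * Real.exp ((|a| + |b|) * t)) := div_pos hδ hP0
  have h := key _ hεpos t ht
  calc |x t| ≤ (M + δ / ((1 + ρ * |b| / μ) * Real.exp ((|a| + |b|) * t))) *
        (1 + ρ * |b| / μ) * Real.exp ((|a| + |b|) * t) := h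
    _ = M * (1 + ρ * |b| / μ) * Real.exp ((|a| + |b|) * t) +
        (δ / ((1 + ρ * |b| / μ) * Real.exp ((|a| + |b|) * t))) *
          ((1 + ρ * |b| / μ) * Real.exp ((|a| + |b|) * t)) := by ring
    _ = M * (1 + ρ * |b| / μ) * Real.exp ((|a| + |b|) * t) + δ := by
        rw [div_mul_cancel₀ _ hPne]
end

section
/- For every bounded continuous initial function φ : (−∞,0] → ℝ and every t ≥ 0, the variation-of-constants formula holds: x_φ(t) = X(t)·φ(0) + b ∫₀ᵗ X(t−s) ( ∫_s^∞ K(θ) φ(s−θ) dθ ) ds. -/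
open MeasureTheory Real Set

/-- `X` is the fundamental solution of the delay equation. -/
def IsFundamental (a b : ℝ) (K : ℝ → ℝ) (X : ℝ → ℝ) : Prop :=
  (∀ t < (0 : ℝ), X t = 0) ∧ X 0 = 1 ∧ ContinuousOn X (Set.Ici 0) ∧
  ∀ t ≥ (0 : ℝ), X t = 1 + ∫ u in (0 : ℝ)..t,
    (a * X u + b * ∫ s in Set.Ioi (0 : ℝ), K s * X (u - s))


lemma meas_param (F : ℝ → ℝ → ℝ) (hF : Measurable (Function.uncurry F)) :
    Measurable fun t => ∫ s, F t s :=
  (hF.stronglyMeasurable.integral_prod_right).measurable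

lemma meas_conv (F : ℝ → ℝ → ℝ) (hF : Measurable (Function.uncurry F)) :
    Measurable fun u => ∫ s in Ioc (0:ℝ) u, F u s := by
  have hset : MeasurableSet {p : ℝ × ℝ | p.2 ∈ Ioc 0 p.1} :=
    (measurableSet_lt measurable_const measurable_snd).inter
      (measurableSet_le measurable_snd measurable_fst)
  have h1 : ∀ u, (∫ s in Ioc (0:ℝ) u, F u s) =
      ∫ s, ({p : ℝ × ℝ | p.2 ∈ Ioc 0 p.1}.indicator (Function.uncurry F)) (u, s) := by
    intro u
    rw [← integral_indicator measurableSet_Ioc]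
    refine integral_congr_ae (Filter.Eventually.of_forall (fun s => ?_))
    simp only [Set.indicator_apply, Set.mem_Ioc, Set.mem_setOf_eq, Function.uncurry]
  simp only [h1]
  exact meas_param _ (hF.indicator hset)

lemma volterra_unique (a b : ℝ) (K z : ℝ → ℝ)
    (hKmeas : Measurable K) (hKpos : ∀ s ≥ (0:ℝ), 0 ≤ K s)
    (hKint : IntegrableOn K (Ioi 0)) (hKone : (∫ s in Ioi (0:ℝ), K s) = 1)
    (hz : Measurable z)
    (hzb : ∀ T, ∃ B, 0 ≤ B ∧ ∀ v ∈ Icc (0:ℝ) T, |z v| ≤ B)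
    (heq : ∀ t ≥ (0:ℝ), z t = ∫ u in Ioc (0:ℝ) t,
      (a * z u + b * ∫ s in Ioc (0:ℝ) u, K s * z (u - s))) :
    ∀ t ≥ (0:ℝ), z t = 0 := by
  -- integral of K over Ioc 0 u is in [0,1]
  have hKnn : ∀ u : ℝ, (0:ℝ) ≤ ∫ s in Ioc (0:ℝ) u, K s :=
    fun u => setIntegral_nonneg measurableSet_Ioc (fun s hs => hKpos s hs.1.le)
  have hKle : ∀ u : ℝ, (∫ s in Ioc (0:ℝ) u, K s) ≤ 1 := by
    intro u
    rw [← hKone]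
    refine setIntegral_mono_set hKint ?_ (HasSubset.Subset.eventuallyLE Ioc_subset_Ioi_self)
    exact ae_restrict_of_forall_mem measurableSet_Ioi (fun s hs => hKpos s (le_of_lt hs))
  intro t ht
  set T := t with hT
  obtain ⟨B, hB0, hB⟩ := hzb T
  set c := |a| + |b| with hc
  have hc0 : 0 ≤ c := by positivity
  -- integrability of inner integrand
  have hIint : ∀ u ∈ Icc (0:ℝ) T, IntegrableOn (fun s => K s * z (u - s)) (Ioc 0 u) := by
    intro u hu
    refine Integrable.mono' (((hKint.mono_set Ioc_subset_Ioi_self).norm.mul_const B)) ?_ ?_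
    · exact ((hKmeas.mul (hz.comp (measurable_const.sub measurable_id))).aestronglyMeasurable)
    · refine ae_restrict_of_forall_mem measurableSet_Ioc (fun s hs => ?_)
      rw [norm_mul]
      refine mul_le_mul_of_nonneg_left ?_ (norm_nonneg _)
      rw [Real.norm_eq_abs]
      exact hB (u - s) ⟨by linarith [hs.2], by linarith [hs.1, hu.2]⟩
  -- key bound on the inner integral
  have hIbound : ∀ u ∈ Icc (0:ℝ) T, ∀ D, 0 ≤ D → (∀ v ∈ Icc (0:ℝ) u, |z v| ≤ D) →
      |∫ s in Ioc (0:ℝ) u, K s * z (u - s)| ≤ D := by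
    intro u hu D hD0 hD
    calc |∫ s in Ioc (0:ℝ) u, K s * z (u - s)|
        ≤ ∫ s in Ioc (0:ℝ) u, ‖K s * z (u - s)‖ := by
          simpa [Real.norm_eq_abs] using
            norm_integral_le_integral_norm (μ := volume.restrict (Ioc (0:ℝ) u))
              (fun s => K s * z (u - s))
      _ ≤ ∫ s in Ioc (0:ℝ) u, K s * D := by
          refine setIntegral_mono_on (hIint u hu).norm ?_ measurableSet_Ioc ?_
          · exact (hKint.mono_set Ioc_subset_Ioi_self).mul_const D
          · intro s hs
            rw [norm_mul, Real.norm_eq_abs, Real.norm_eq_abs, abs_of_nonneg (hKpos s hs.1.le)]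
            exact mul_le_mul_of_nonneg_left
              (hD (u - s) ⟨by linarith [hs.2], by linarith [hs.1]⟩) (hKpos s hs.1.le)
      _ = (∫ s in Ioc (0:ℝ) u, K s) * D := by rw [integral_mul_const]
      _ ≤ 1 * D := mul_le_mul_of_nonneg_right (hKle u) hD0
      _ = D := one_mul D
  -- measurability of the inner integral
  have hImeas : Measurable fun u => ∫ s in Ioc (0:ℝ) u, K s * z (u - s) :=
    meas_conv _ ((hKmeas.comp measurable_snd).mul (hz.comp (measurable_fst.sub measurable_snd)))
  -- induction claim
  have claim : ∀ n : ℕ, ∀ u ∈ Icc (0:ℝ) T, |z u| ≤ B * (c * u) ^ n / n.factorial := by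
    intro n
    induction n with
    | zero => intro u hu; simpa using hB u hu
    | succ n ih =>
      intro u hu
      have hu0 : (0:ℝ) ≤ u := hu.1
      set κ := B * c ^ n / n.factorial with hκ
      have hκ0 : 0 ≤ κ := div_nonneg (mul_nonneg hB0 (pow_nonneg hc0 n)) (Nat.cast_nonneg _)
      have key : ∀ v ∈ Ioc (0:ℝ) u,
          |a * z v + b * ∫ s in Ioc (0:ℝ) v, K s * z (v - s)| ≤ c * κ * v ^ n := by
        intro v hv
        have hvT : v ∈ Icc (0:ℝ) T := ⟨hv.1.le, hv.2.trans hu.2⟩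
        have hzv : ∀ w ∈ Icc (0:ℝ) v, |z w| ≤ κ * v ^ n := by
          intro w hw
          have : |z w| ≤ B * (c * w) ^ n / n.factorial :=
            ih w ⟨hw.1, hw.2.trans hvT.2⟩
          refine this.trans ?_
          have hpow : (c * w) ^ n ≤ (c * v) ^ n :=
            pow_le_pow_left₀ (mul_nonneg hc0 hw.1) (mul_le_mul_of_nonneg_left hw.2 hc0) n
          calc B * (c * w) ^ n / n.factorial ≤ B * (c * v) ^ n / n.factorial := by gcongr
            _ = κ * v ^ n := by rw [hκ, mul_pow]; ring
        have h1 : |z v| ≤ κ * v ^ n := hzv v ⟨hv.1.le, le_refl v⟩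
        have h2 : |∫ s in Ioc (0:ℝ) v, K s * z (v - s)| ≤ κ * v ^ n :=
          hIbound v hvT (κ * v ^ n) (mul_nonneg hκ0 (pow_nonneg hv.1.le n)) hzv
        calc |a * z v + b * ∫ s in Ioc (0:ℝ) v, K s * z (v - s)|
            ≤ |a| * |z v| + |b| * |∫ s in Ioc (0:ℝ) v, K s * z (v - s)| := by
              refine (abs_add_le _ _).trans ?_
              rw [abs_mul, abs_mul]
          _ ≤ |a| * (κ * v ^ n) + |b| * (κ * v ^ n) :=
              add_le_add (mul_le_mul_of_nonneg_left h1 (abs_nonneg a))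
                (mul_le_mul_of_nonneg_left h2 (abs_nonneg b))
          _ = c * κ * v ^ n := by rw [hc]; ring
      -- integrability of the full integrand on Ioc 0 u
      have hGmeas : Measurable fun v => a * z v + b * ∫ s in Ioc (0:ℝ) v, K s * z (v - s) :=
        ((hz.const_mul a).add (hImeas.const_mul b))
      have hGint : IntegrableOn (fun v => a * z v + b * ∫ s in Ioc (0:ℝ) v, K s * z (v - s))
          (Ioc 0 u) := by
        refine Integrable.mono' (g := fun v => c * κ * v ^ n)
          (Continuous.integrableOn_Ioc (continuous_const.mul (continuous_pow n))) hGmeas.aestronglyMeasurable ?_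
        exact ae_restrict_of_forall_mem measurableSet_Ioc (fun v hv => key v hv)
      have heval : (∫ v in Ioc (0:ℝ) u, c * κ * v ^ n) = c * κ * (u ^ (n+1) / (n+1)) := by
        rw [← intervalIntegral.integral_of_le hu0, intervalIntegral.integral_const_mul,
          integral_pow]
        push_cast
        ring
      calc |z u| = |∫ v in Ioc (0:ℝ) u, (a * z v + b * ∫ s in Ioc (0:ℝ) v, K s * z (v - s))| := by
            rw [← heq u hu0]
        _ ≤ ∫ v in Ioc (0:ℝ) u, ‖a * z v + b * ∫ s in Ioc (0:ℝ) v, K s * z (v - s)‖ := by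
            simpa [Real.norm_eq_abs] using
              norm_integral_le_integral_norm (μ := volume.restrict (Ioc (0:ℝ) u))
                (fun v => a * z v + b * ∫ s in Ioc (0:ℝ) v, K s * z (v - s))
        _ ≤ ∫ v in Ioc (0:ℝ) u, c * κ * v ^ n := by
            refine setIntegral_mono_on hGint.norm
              (Continuous.integrableOn_Ioc (continuous_const.mul (continuous_pow n))) measurableSet_Ioc ?_
            intro v hv
            exact key v hv
        _ = c * κ * (u ^ (n+1) / (n+1)) := heval
        _ = B * (c * u) ^ (n + 1) / (n+1).factorial := by
            rw [hκ, Nat.factorial_succ, mul_pow]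
            push_cast
            have hn : (n.factorial : ℝ) ≠ 0 := Nat.cast_ne_zero.2 n.factorial_ne_zero
            field_simp
            ring
      -- end
  have hlim : Filter.Tendsto (fun n : ℕ => B * (c * t) ^ n / n.factorial)
      Filter.atTop (nhds 0) := by
    have := (FloorSemiring.tendsto_pow_div_factorial_atTop (K := ℝ) (c * t)).const_mul B
    simpa [mul_div_assoc] using this
  have : |z t| ≤ 0 :=
    ge_of_tendsto hlim (Filter.Eventually.of_forall (fun n => claim n t ⟨ht, le_refl t⟩))
  exact abs_eq_zero.1 (le_antisymm this (abs_nonneg _))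

lemma meas_of_vanish (X : ℝ → ℝ) (h0 : ∀ t < (0:ℝ), X t = 0)
    (hc : ContinuousOn X (Ici 0)) : Measurable X := by
  have hcont : Continuous fun t => X (max t 0) :=
    hc.comp_continuous (continuous_id.max continuous_const) (fun t => mem_Ici.2 (le_max_right _ _))
  have : X = (Ici (0:ℝ)).indicator (fun t => X (max t 0)) := by
    funext t
    by_cases ht : (0:ℝ) ≤ t
    · simp [Set.indicator_of_mem (mem_Ici.2 ht), max_eq_left ht]
    · rw [Set.indicator_of_notMem (by simpa using ht)]
      exact h0 t (lt_of_not_ge ht)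
  rw [this]
  exact hcont.measurable.indicator measurableSet_Ici

lemma meas_of_piece (x φ : ℝ → ℝ) (hxφ : ∀ t ≤ (0:ℝ), x t = φ t)
    (hφc : ContinuousOn φ (Iic 0)) (hc : ContinuousOn x (Ici 0)) : Measurable x := by
  have h1 : Continuous fun t => φ (min t 0) :=
    hφc.comp_continuous (continuous_id.min continuous_const) (fun t => mem_Iic.2 (min_le_right _ _))
  have h2 : Continuous fun t => x (max t 0) :=
    hc.comp_continuous (continuous_id.max continuous_const) (fun t => mem_Ici.2 (le_max_right _ _))
  have : x = Set.piecewise (Iic (0:ℝ)) (fun t => φ (min t 0)) (fun t => x (max t 0)) := by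
    funext t
    by_cases ht : t ≤ 0
    · rw [Set.piecewise_eq_of_mem _ _ _ (mem_Iic.2 ht), min_eq_left ht, hxφ t ht]
    · rw [Set.piecewise_eq_of_notMem _ _ _ (by simpa using ht),
        max_eq_left (le_of_lt (lt_of_not_ge ht))]
  rw [this]
  exact Measurable.piecewise measurableSet_Iic h1.measurable h2.measurable

lemma bound_on_Icc (X : ℝ → ℝ) (hc : ContinuousOn X (Ici 0)) (T : ℝ) :
    ∃ B, 0 ≤ B ∧ ∀ v ∈ Icc (0:ℝ) T, |X v| ≤ B := by
  obtain ⟨C, hC⟩ := (isCompact_Icc (a := (0:ℝ)) (b := T)).exists_bound_of_continuousOn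
    (hc.mono (fun v hv => hv.1))
  exact ⟨max C 0, le_max_right _ _, fun v hv => (hC v hv).trans (le_max_left _ _)⟩


lemma fubini_conv (E f : ℝ → ℝ) (hE : Measurable E) (hf : Measurable f)
    (t ME MF : ℝ) (ht : 0 ≤ t) (hME : 0 ≤ ME) (hMF : 0 ≤ MF)
    (hEb : ∀ v ∈ Iic t, |E v| ≤ ME) (hfb : ∀ s ∈ Ioc (0:ℝ) t, |f s| ≤ MF) :
    (∫ u in Ioc (0:ℝ) t, (∫ s in Ioc (0:ℝ) u, E (u - s) * f s)) =
      ∫ s in Ioc (0:ℝ) t, f s * ∫ v in Ioc (0:ℝ) (t - s), E v := by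
  set S : Set (ℝ × ℝ) := {p | p.1 ∈ Ioc (0:ℝ) t ∧ p.2 ∈ Ioc (0:ℝ) p.1} with hS
  have hSm : MeasurableSet S := by
    refine MeasurableSet.inter ?_ ?_
    · exact measurable_fst measurableSet_Ioc
    · exact (measurableSet_lt measurable_const measurable_snd).inter
        (measurableSet_le measurable_snd measurable_fst)
  set F : ℝ × ℝ → ℝ := fun p => E (p.1 - p.2) * f p.2 with hF
  have hFm : Measurable F :=
    (hE.comp (measurable_fst.sub measurable_snd)).mul (hf.comp measurable_snd)
  set P : ℝ × ℝ → ℝ := S.indicator F with hP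
  have hPm : Measurable P := hFm.indicator hSm
  have hPint : Integrable P (volume.prod volume) := by
    refine Integrable.mono' (g := (Ioc (0:ℝ) t ×ˢ Ioc (0:ℝ) t).indicator fun _ => ME * MF)
      ?_ hPm.aestronglyMeasurable ?_
    · rw [integrable_indicator_iff (measurableSet_Ioc.prod measurableSet_Ioc)]
      refine integrableOn_const (lt_top_iff_ne_top.1 ?_)
      rw [Measure.prod_prod]
      exact ENNReal.mul_lt_top (by simp) (by simp)
    · refine Filter.Eventually.of_forall (fun p => ?_)
      by_cases hp : p ∈ S
      · rw [hP, Set.indicator_of_mem hp,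
          Set.indicator_of_mem (show p ∈ Ioc (0:ℝ) t ×ˢ Ioc (0:ℝ) t from
            ⟨hp.1, hp.2.1, hp.2.2.trans hp.1.2⟩)]
        rw [Real.norm_eq_abs, hF, abs_mul]
        exact mul_le_mul (hEb _ (mem_Iic.2 (by have := hp.2.1; have := hp.1.2; simp at *; linarith)))
          (hfb _ ⟨hp.2.1, hp.2.2.trans hp.1.2⟩) (abs_nonneg _) hME
      · rw [hP, Set.indicator_of_notMem hp, norm_zero]
        exact Set.indicator_nonneg (fun _ _ => by positivity) _
  have step1 : (∫ u in Ioc (0:ℝ) t, (∫ s in Ioc (0:ℝ) u, E (u - s) * f s)) =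
      ∫ u, ∫ s, P (u, s) := by
    rw [← integral_indicator measurableSet_Ioc]
    refine integral_congr_ae (Filter.Eventually.of_forall (fun u => ?_))
    beta_reduce
    by_cases hu : u ∈ Ioc (0:ℝ) t
    · rw [Set.indicator_of_mem hu]
      rw [← integral_indicator measurableSet_Ioc]
      refine integral_congr_ae (Filter.Eventually.of_forall (fun s => ?_))
      beta_reduce
      by_cases hs : s ∈ Ioc (0:ℝ) u
      · rw [Set.indicator_of_mem hs, show P = S.indicator F from rfl, Set.indicator_of_mem (show (u,s) ∈ S from ⟨hu, hs⟩)]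
      · rw [Set.indicator_of_notMem hs, show P = S.indicator F from rfl,
          Set.indicator_of_notMem (show (u,s) ∉ S from fun h => hs h.2)]
    · rw [Set.indicator_of_notMem hu]
      symm
      rw [← integral_zero ℝ ℝ (μ := volume)]
      refine integral_congr_ae (Filter.Eventually.of_forall (fun s => ?_))
      beta_reduce
      rw [show P = S.indicator F from rfl,
        Set.indicator_of_notMem (show (u,s) ∉ S from fun h => hu h.1)]
  have step2 : (∫ u, ∫ s, P (u, s)) = ∫ s, ∫ u, P (u, s) :=
    integral_integral_swap hPint
  have step3 : (∫ s, ∫ u, P (u, s)) =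
      ∫ s in Ioc (0:ℝ) t, f s * ∫ v in Ioc (0:ℝ) (t - s), E v := by
    rw [← integral_indicator measurableSet_Ioc]
    refine integral_congr_ae (Filter.Eventually.of_forall (fun s => ?_))
    beta_reduce
    by_cases hs : s ∈ Ioc (0:ℝ) t
    · have hkey : (fun u => P (u, s)) = (Icc s t).indicator (fun u => E (u - s) * f s) := by
        funext u
        by_cases hu : u ∈ Icc s t
        · rw [Set.indicator_of_mem hu, show P = S.indicator F from rfl, Set.indicator_of_mem
            (show (u,s) ∈ S from ⟨⟨hs.1.trans_le hu.1, hu.2⟩, hs.1, hu.1⟩)]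
        · rw [Set.indicator_of_notMem hu, show P = S.indicator F from rfl,
            Set.indicator_of_notMem]
          intro h
          exact hu ⟨h.2.2, h.1.2⟩
      rw [hkey, integral_indicator measurableSet_Icc, Set.indicator_of_mem hs]
      rw [integral_Icc_eq_integral_Ioc, ← intervalIntegral.integral_of_le hs.2,
        intervalIntegral.integral_mul_const, intervalIntegral.integral_comp_sub_right (fun v => E v) s,
        sub_self, intervalIntegral.integral_of_le (by linarith [hs.2]), mul_comm]
    · rw [Set.indicator_of_notMem hs]
      rw [← integral_zero ℝ ℝ (μ := volume)]
      refine integral_congr_ae (Filter.Eventually.of_forall (fun u => ?_))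
      beta_reduce
      rw [show P = S.indicator F from rfl, Set.indicator_of_notMem]
      intro h
      exact hs ⟨h.2.1, h.2.2.trans h.1.2⟩
  rw [step1, step2, step3]

lemma fubini_K (K X f : ℝ → ℝ) (hK : Measurable K) (hX : Measurable X) (hf : Measurable f)
    (hKint : IntegrableOn K (Ioi 0)) (u MX MF : ℝ) (hu : 0 ≤ u)
    (hMX : 0 ≤ MX) (hMF : 0 ≤ MF)
    (hXb : ∀ v ∈ Iic u, |X v| ≤ MX) (hfb : ∀ r ∈ Ioc (0:ℝ) u, |f r| ≤ MF) :
    (∫ s in Ioc (0:ℝ) u, K s * ∫ r in Ioc (0:ℝ) (u - s), X (u - s - r) * f r) =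
      ∫ r in Ioc (0:ℝ) u, (∫ s in Ioc (0:ℝ) (u - r), K s * X ((u - r) - s)) * f r := by
  set S : Set (ℝ × ℝ) := {p | p.1 ∈ Ioc (0:ℝ) u ∧ p.2 ∈ Ioc (0:ℝ) (u - p.1)} with hS
  have hSm : MeasurableSet S := by
    refine MeasurableSet.inter ?_ ?_
    · exact measurable_fst measurableSet_Ioc
    · exact (measurableSet_lt measurable_const measurable_snd).inter
        (measurableSet_le measurable_snd (measurable_const.sub measurable_fst))
  set F : ℝ × ℝ → ℝ := fun p => K p.1 * (X (u - p.1 - p.2) * f p.2) with hF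
  have hFm : Measurable F :=
    (hK.comp measurable_fst).mul
      (((hX.comp ((measurable_const.sub measurable_fst).sub measurable_snd))).mul
        (hf.comp measurable_snd))
  set P : ℝ × ℝ → ℝ := S.indicator F with hPdef
  have hPm : Measurable P := hFm.indicator hSm
  have hPint : Integrable P (volume.prod volume) := by
    refine Integrable.mono'
      (g := fun p => (Ioc (0:ℝ) u).indicator (fun s => |K s| * (MX * MF)) p.1 *
        (Ioc (0:ℝ) u).indicator (fun _ => (1:ℝ)) p.2) ?_ hPm.aestronglyMeasurable ?_
    · refine Integrable.mul_prod
        (MeasureTheory.IntegrableOn.integrable_indicator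
          ((hKint.mono_set Ioc_subset_Ioi_self).norm.mul_const (MX * MF)) measurableSet_Ioc)
        (MeasureTheory.IntegrableOn.integrable_indicator
          (integrableOn_const (lt_top_iff_ne_top.1 (by simp))) measurableSet_Ioc)
    · refine Filter.Eventually.of_forall (fun p => ?_)
      beta_reduce
      by_cases hp : p ∈ S
      · have h1 : p.1 ∈ Ioc (0:ℝ) u := hp.1
        have h2 : p.2 ∈ Ioc (0:ℝ) u :=
          ⟨hp.2.1, hp.2.2.trans (by linarith [h1.1])⟩
        rw [show P = S.indicator F from rfl, Set.indicator_of_mem hp,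
          Set.indicator_of_mem h1, Set.indicator_of_mem h2, Real.norm_eq_abs, hF]
        have hXv : |X (u - p.1 - p.2)| ≤ MX :=
          hXb _ (mem_Iic.2 (by linarith [h1.1, hp.2.1]))
        have hfv : |f p.2| ≤ MF := hfb _ h2
        calc |K p.1 * (X (u - p.1 - p.2) * f p.2)|
            = |K p.1| * (|X (u - p.1 - p.2)| * |f p.2|) := by rw [abs_mul, abs_mul]
          _ ≤ |K p.1| * (MX * MF) :=
              mul_le_mul_of_nonneg_left
                (mul_le_mul hXv hfv (abs_nonneg _) hMX) (abs_nonneg _)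
          _ = |K p.1| * (MX * MF) * 1 := by ring
      · rw [show P = S.indicator F from rfl, Set.indicator_of_notMem hp, norm_zero]
        exact mul_nonneg (Set.indicator_nonneg (fun _ _ => by positivity) _)
          (Set.indicator_nonneg (fun _ _ => by norm_num) _)
  have step1 : (∫ s in Ioc (0:ℝ) u, K s * ∫ r in Ioc (0:ℝ) (u - s), X (u - s - r) * f r) =
      ∫ s, ∫ r, P (s, r) := by
    rw [← integral_indicator measurableSet_Ioc]
    refine integral_congr_ae (Filter.Eventually.of_forall (fun s => ?_))
    beta_reduce
    by_cases hs : s ∈ Ioc (0:ℝ) u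
    · rw [Set.indicator_of_mem hs, ← integral_const_mul, ← integral_indicator measurableSet_Ioc]
      refine integral_congr_ae (Filter.Eventually.of_forall (fun r => ?_))
      beta_reduce
      by_cases hr : r ∈ Ioc (0:ℝ) (u - s)
      · rw [Set.indicator_of_mem hr, show P = S.indicator F from rfl,
          Set.indicator_of_mem (show (s,r) ∈ S from ⟨hs, hr⟩)]
      · rw [Set.indicator_of_notMem hr, show P = S.indicator F from rfl,
          Set.indicator_of_notMem (show (s,r) ∉ S from fun h => hr h.2)]
    · rw [Set.indicator_of_notMem hs]
      symm
      rw [← integral_zero ℝ ℝ (μ := volume)]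
      refine integral_congr_ae (Filter.Eventually.of_forall (fun r => ?_))
      beta_reduce
      rw [show P = S.indicator F from rfl,
        Set.indicator_of_notMem (show (s,r) ∉ S from fun h => hs h.1)]
  have step2 : (∫ s, ∫ r, P (s, r)) = ∫ r, ∫ s, P (s, r) :=
    integral_integral_swap hPint
  have step3 : (∫ r, ∫ s, P (s, r)) =
      ∫ r in Ioc (0:ℝ) u, (∫ s in Ioc (0:ℝ) (u - r), K s * X ((u - r) - s)) * f r := by
    rw [← integral_indicator measurableSet_Ioc]
    refine integral_congr_ae (Filter.Eventually.of_forall (fun r => ?_))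
    beta_reduce
    by_cases hr : r ∈ Ioc (0:ℝ) u
    · have hkey : (fun s => P (s, r)) =
          (Ioc (0:ℝ) (u - r)).indicator (fun s => K s * (X (u - s - r) * f r)) := by
        funext s
        by_cases hsr : s ∈ Ioc (0:ℝ) (u - r)
        · rw [Set.indicator_of_mem hsr, show P = S.indicator F from rfl,
            Set.indicator_of_mem (show (s,r) ∈ S from
              ⟨⟨hsr.1, by linarith [hsr.2, hr.1]⟩, hr.1, by linarith [hsr.2]⟩)]
        · rw [Set.indicator_of_notMem hsr, show P = S.indicator F from rfl,
            Set.indicator_of_notMem]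
          intro h
          exact hsr ⟨h.1.1, by linarith [h.2.2]⟩
      rw [hkey, integral_indicator measurableSet_Ioc, Set.indicator_of_mem hr]
      rw [show (∫ s in Ioc (0:ℝ) (u - r), K s * (X (u - s - r) * f r)) =
          ∫ s in Ioc (0:ℝ) (u - r), (K s * X ((u - r) - s)) * f r from
        setIntegral_congr_fun measurableSet_Ioc (fun s _ => by ring_nf),
        integral_mul_const]
    · rw [Set.indicator_of_notMem hr]
      rw [← integral_zero ℝ ℝ (μ := volume)]
      refine integral_congr_ae (Filter.Eventually.of_forall (fun s => ?_))
      beta_reduce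
      rw [show P = S.indicator F from rfl, Set.indicator_of_notMem]
      intro h
      exact hr ⟨h.2.1, by linarith [h.2.2, h.1.1]⟩
  rw [step1, step2, step3]


lemma meas_param' (F : ℝ → ℝ → ℝ) (hF : Measurable (Function.uncurry F)) :
    Measurable fun t => ∫ s, F t s :=
  (hF.stronglyMeasurable.integral_prod_right).measurable

lemma meas_slice (S : Set (ℝ × ℝ)) (hS : MeasurableSet S) (F : ℝ → ℝ → ℝ)
    (hF : Measurable (Function.uncurry F)) :
    Measurable fun t => ∫ s in {s : ℝ | (t, s) ∈ S}, F t s := by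
  have h1 : ∀ t, (∫ s in {s : ℝ | (t, s) ∈ S}, F t s) =
      ∫ s, (S.indicator (Function.uncurry F)) (t, s) := by
    intro t
    rw [← integral_indicator (show MeasurableSet {s : ℝ | (t, s) ∈ S} from measurable_prodMk_left hS)]
    refine integral_congr_ae (Filter.Eventually.of_forall (fun s => ?_))
    beta_reduce
    by_cases hm : (t, s) ∈ S
    · rw [Set.indicator_of_mem (show s ∈ {s | (t, s) ∈ S} from hm), Set.indicator_of_mem hm]
      rfl
    · rw [Set.indicator_of_notMem (show s ∉ {s | (t, s) ∈ S} from hm),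
        Set.indicator_of_notMem hm]
  simp only [h1]
  exact meas_param' _ (hF.indicator hS)

lemma intOn_bdd (f : ℝ → ℝ) (S : Set ℝ) (hSm : MeasurableSet S) (hfin : volume S < ⊤)
    (M : ℝ) (hmeas : Measurable f) (hb : ∀ s ∈ S, |f s| ≤ M) : IntegrableOn f S := by
  refine Integrable.mono' (g := fun _ => M) (integrableOn_const (lt_top_iff_ne_top.1 hfin)) hmeas.aestronglyMeasurable ?_
  exact ae_restrict_of_forall_mem hSm (fun s hs => by simpa [Real.norm_eq_abs] using hb s hs)

lemma intOn_K_mul (K y : ℝ → ℝ) (S : Set ℝ) (hSm : MeasurableSet S)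
    (hK : IntegrableOn K S) (hym : Measurable y) (M : ℝ) (hb : ∀ s ∈ S, |y s| ≤ M) :
    IntegrableOn (fun s => K s * y s) S := by
  refine Integrable.mono' (hK.norm.mul_const M)
    ((hK.aestronglyMeasurable.aemeasurable.mul hym.aemeasurable).aestronglyMeasurable) ?_
  refine ae_restrict_of_forall_mem hSm (fun s hs => ?_)
  rw [Real.norm_eq_abs, abs_mul]
  exact mul_le_mul_of_nonneg_left (hb s hs) (abs_nonneg _)

lemma abs_integral_Ioc_le (f : ℝ → ℝ) (c d M : ℝ) (hcd : c ≤ d)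
    (h : IntegrableOn f (Ioc c d)) (hM : 0 ≤ M) (hb : ∀ s ∈ Ioc c d, |f s| ≤ M) :
    |∫ s in Ioc c d, f s| ≤ M * (d - c) := by
  calc |∫ s in Ioc c d, f s| ≤ ∫ s in Ioc c d, ‖f s‖ := by
        simpa [Real.norm_eq_abs] using
          norm_integral_le_integral_norm (μ := volume.restrict (Ioc c d)) f
    _ ≤ ∫ _ in Ioc c d, M := by
        refine setIntegral_mono_on h.norm (integrableOn_const (lt_top_iff_ne_top.1 (by simp)))
          measurableSet_Ioc ?_
        intro s hs
        simpa [Real.norm_eq_abs] using hb s hs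
    _ = M * (d - c) := by
        rw [setIntegral_const, measureReal_def, Real.volume_Ioc, smul_eq_mul,
          ENNReal.toReal_ofReal (by linarith), mul_comm]

lemma abs_K_conv_le (K y : ℝ → ℝ) (hKpos : ∀ s ≥ (0:ℝ), 0 ≤ K s)
    (hKint : IntegrableOn K (Ioi 0)) (hKone : (∫ s in Ioi (0:ℝ), K s) = 1)
    (hym : Measurable y) (M : ℝ) (hM : 0 ≤ M) (S : Set ℝ) (hSm : MeasurableSet S)
    (hSsub : S ⊆ Ioi 0) (hb : ∀ s ∈ S, |y s| ≤ M) :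
    |∫ s in S, K s * y s| ≤ M := by
  have hKS : IntegrableOn K S := hKint.mono_set hSsub
  calc |∫ s in S, K s * y s| ≤ ∫ s in S, ‖K s * y s‖ := by
        simpa [Real.norm_eq_abs] using
          norm_integral_le_integral_norm (μ := volume.restrict S) (fun s => K s * y s)
    _ ≤ ∫ s in S, K s * M := by
        refine setIntegral_mono_on (intOn_K_mul K y S hSm hKS hym M hb).norm
          (hKS.mul_const M) hSm ?_
        intro s hs
        rw [Real.norm_eq_abs, abs_mul, abs_of_nonneg (hKpos s (le_of_lt (hSsub hs)))]
        exact mul_le_mul_of_nonneg_left (hb s hs) (hKpos s (le_of_lt (hSsub hs)))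
    _ = (∫ s in S, K s) * M := by rw [integral_mul_const]
    _ ≤ 1 * M := by
        refine mul_le_mul_of_nonneg_right ?_ hM
        rw [← hKone]
        refine setIntegral_mono_set hKint ?_ (HasSubset.Subset.eventuallyLE hSsub)
        exact ae_restrict_of_forall_mem measurableSet_Ioi (fun s hs => hKpos s (le_of_lt hs))
    _ = M := one_mul M

theorem main_aux (a b : ℝ) (K φ x X : ℝ → ℝ) (C : ℝ)
    (hKmeas : Measurable K) (hKpos : ∀ s ≥ (0:ℝ), 0 ≤ K s)
    (hKint : IntegrableOn K (Ioi 0)) (hKone : (∫ s in Ioi (0:ℝ), K s) = 1)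
    (hφc : Continuous φ) (hφb : ∀ θ, |φ θ| ≤ C)
    (hx0 : ∀ t ≤ (0:ℝ), x t = φ t) (hxc : ContinuousOn x (Ici 0))
    (hxeq : ∀ t ≥ (0:ℝ), x t = φ 0 + ∫ u in (0:ℝ)..t,
      (a * x u + b * ∫ s in Ioi (0:ℝ), K s * x (u - s)))
    (hX0 : ∀ t < (0:ℝ), X t = 0) (hX1 : X 0 = 1) (hXc : ContinuousOn X (Ici 0))
    (hXeq : ∀ t ≥ (0:ℝ), X t = 1 + ∫ u in (0:ℝ)..t,
      (a * X u + b * ∫ s in Ioi (0:ℝ), K s * X (u - s))) :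
    ∀ t ≥ (0:ℝ), x t = X t * φ 0 +
      b * ∫ s in Ioc (0:ℝ) t, X (t - s) * ∫ θ in Ioi s, K θ * φ (s - θ) := by
  -- basic measurability and bounds
  have hC0 : 0 ≤ C := (abs_nonneg (φ 0)).trans (hφb 0)
  have hXm : Measurable X := meas_of_vanish X hX0 hXc
  have hxm : Measurable x := meas_of_piece x φ hx0 hφc.continuousOn hxc
  have hφm : Measurable φ := hφc.measurable
  set f : ℝ → ℝ := fun s => ∫ θ in Ioi s, K θ * φ (s - θ) with hfdef
  set J : ℝ → ℝ := fun v => ∫ s in Ioi (0:ℝ), K s * X (v - s) with hJdef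
  set w : ℝ → ℝ := fun r => ∫ s in Ioc (0:ℝ) r, X (r - s) * f s with hwdef
  set E : ℝ → ℝ := fun v => a * X v + b * J v with hEdef
  set g : ℝ → ℝ := fun r => X r * φ 0 + b * w r with hgdef
  have hfm : Measurable f := by
    rw [hfdef]
    exact meas_slice {p : ℝ × ℝ | p.1 < p.2} (measurableSet_lt measurable_fst measurable_snd)
      (fun s θ => K θ * φ (s - θ))
      ((hKmeas.comp measurable_snd).mul (hφm.comp (measurable_fst.sub measurable_snd)))
  have hfbd : ∀ s ≥ (0:ℝ), |f s| ≤ C := by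
    intro s hs
    exact abs_K_conv_le K (fun θ => φ (s - θ)) hKpos hKint hKone
      (hφm.comp (measurable_const.sub measurable_id)) C hC0 (Ioi s) measurableSet_Ioi
      (Ioi_subset_Ioi hs) (fun θ _ => hφb _)
  have hXB : ∀ T : ℝ, ∃ B, 0 ≤ B ∧ ∀ v ∈ Iic T, |X v| ≤ B := by
    intro T
    obtain ⟨B, hB0, hB⟩ := bound_on_Icc X hXc T
    refine ⟨B, hB0, fun v hv => ?_⟩
    by_cases h0 : 0 ≤ v
    · exact hB v ⟨h0, hv⟩
    · rw [hX0 v (lt_of_not_ge h0), abs_zero]; exact hB0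
  have hxB : ∀ T : ℝ, ∃ B, 0 ≤ B ∧ ∀ v ∈ Iic T, |x v| ≤ B := by
    intro T
    obtain ⟨B, hB0, hB⟩ := bound_on_Icc x hxc T
    refine ⟨max B C, le_trans hB0 (le_max_left _ _), fun v hv => ?_⟩
    by_cases h0 : 0 ≤ v
    · exact (hB v ⟨h0, hv⟩).trans (le_max_left _ _)
    · rw [hx0 v (le_of_not_ge h0)]
      exact (hφb v).trans (le_max_right _ _)
  have hJm : Measurable J := by
    rw [hJdef]
    exact meas_slice {p : ℝ × ℝ | (0:ℝ) < p.2} (measurableSet_lt measurable_const measurable_snd)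
      (fun v s => K s * X (v - s))
      ((hKmeas.comp measurable_snd).mul (hXm.comp (measurable_fst.sub measurable_snd)))
  have hJB : ∀ T : ℝ, ∃ B, 0 ≤ B ∧ ∀ v ∈ Iic T, |J v| ≤ B := by
    intro T
    obtain ⟨B, hB0, hB⟩ := hXB T
    refine ⟨B, hB0, fun v hv => ?_⟩
    exact abs_K_conv_le K (fun s => X (v - s)) hKpos hKint hKone
      (hXm.comp (measurable_const.sub measurable_id)) B hB0 (Ioi 0) measurableSet_Ioi
      (subset_refl _) (fun s hs => hB (v - s) (by simp only [mem_Iic]; linarith [mem_Ioi.1 hs, mem_Iic.1 hv]))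
  have hJIoc : ∀ v ≥ (0:ℝ), J v = ∫ s in Ioc (0:ℝ) v, K s * X (v - s) := by
    intro v hv
    obtain ⟨B, hB0, hB⟩ := hXB v
    rw [hJdef]
    beta_reduce
    rw [← Ioc_union_Ioi_eq_Ioi hv, setIntegral_union (Ioc_disjoint_Ioi le_rfl)
      measurableSet_Ioi
      (intOn_K_mul K (fun s => X (v - s)) (Ioc 0 v) measurableSet_Ioc
        (hKint.mono_set Ioc_subset_Ioi_self)
        (hXm.comp (measurable_const.sub measurable_id)) B
        (fun s hs => hB (v - s) (by simp only [mem_Iic]; linarith [hs.1])))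
      ((integrableOn_zero (μ := volume) (s := Ioi v)).congr_fun
        (fun s hs => by
          show (0:ℝ) = K s * X (v - s)
          rw [hX0 (v - s) (by linarith [mem_Ioi.1 hs]), mul_zero])
        measurableSet_Ioi)]
    have h0 : EqOn (fun s => K s * X (v - s)) (fun _ => (0:ℝ)) (Ioi v) := fun s hs => by
      simp only []
      rw [hX0 (v - s) (by linarith [mem_Ioi.1 hs]), mul_zero]
    rw [setIntegral_congr_fun measurableSet_Ioi h0, integral_zero, add_zero]
  have hJneg : ∀ v < (0:ℝ), J v = 0 := by
    intro v hv
    rw [hJdef]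
    beta_reduce
    have h0 : EqOn (fun s => K s * X (v - s)) (fun _ => (0:ℝ)) (Ioi (0:ℝ)) := fun s hs => by
      simp only []
      rw [hX0 (v - s) (by linarith [mem_Ioi.1 hs]), mul_zero]
    rw [setIntegral_congr_fun measurableSet_Ioi h0, integral_zero]
  have hEm : Measurable E := (hXm.const_mul a).add (hJm.const_mul b)
  have hEB : ∀ T : ℝ, ∃ B, 0 ≤ B ∧ ∀ v ∈ Iic T, |E v| ≤ B := by
    intro T
    obtain ⟨B1, hB10, hB1⟩ := hXB T
    obtain ⟨B2, hB20, hB2⟩ := hJB T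
    refine ⟨|a| * B1 + |b| * B2, by positivity, fun v hv => ?_⟩
    rw [hEdef]
    calc |a * X v + b * J v| ≤ |a * X v| + |b * J v| := abs_add_le _ _
      _ = |a| * |X v| + |b| * |J v| := by rw [abs_mul, abs_mul]
      _ ≤ |a| * B1 + |b| * B2 := add_le_add
          (mul_le_mul_of_nonneg_left (hB1 v hv) (abs_nonneg a))
          (mul_le_mul_of_nonneg_left (hB2 v hv) (abs_nonneg b))
  have hXeq' : ∀ r ≥ (0:ℝ), X r = 1 + ∫ u in Ioc (0:ℝ) r, E u := by
    intro r hr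
    have := hXeq r hr
    rwa [intervalIntegral.integral_of_le hr] at this
  have hwm : Measurable w := by
    rw [hwdef]
    exact meas_slice {p : ℝ × ℝ | p.2 ∈ Ioc 0 p.1}
      ((measurableSet_lt measurable_const measurable_snd).inter
        (measurableSet_le measurable_snd measurable_fst))
      (fun r s => X (r - s) * f s)
      ((hXm.comp (measurable_fst.sub measurable_snd)).mul (hfm.comp measurable_snd))
  have hwzero : ∀ r ≤ (0:ℝ), w r = 0 := by
    intro r hr
    rw [hwdef]
    beta_reduce
    rw [Ioc_eq_empty (not_lt.2 hr), Measure.restrict_empty, integral_zero_measure]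
  have hwB : ∀ T : ℝ, ∃ B, 0 ≤ B ∧ ∀ r ∈ Iic T, |w r| ≤ B := by
    intro T
    obtain ⟨BX, hBX0, hBX⟩ := hXB T
    refine ⟨BX * C * max T 0, by positivity, fun r hr => ?_⟩
    by_cases h0 : r ≤ 0
    · rw [hwzero r h0, abs_zero]; positivity
    · push_neg at h0
      have hrT : r ≤ T := mem_Iic.1 hr
      rw [hwdef]
      beta_reduce
      have hb : ∀ s ∈ Ioc (0:ℝ) r, |X (r - s) * f s| ≤ BX * C := by
        intro s hs
        rw [abs_mul]
        exact mul_le_mul (hBX (r - s) (by simp only [mem_Iic]; linarith [hs.1]))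
          (hfbd s hs.1.le) (abs_nonneg _) hBX0
      have hint : IntegrableOn (fun s => X (r - s) * f s) (Ioc 0 r) :=
        intOn_bdd _ _ measurableSet_Ioc (by simp) (BX * C)
          ((hXm.comp (measurable_const.sub measurable_id)).mul hfm) hb
      have hle := abs_integral_Ioc_le (fun s => X (r - s) * f s) 0 r (BX * C) h0.le hint
        (by positivity) hb
      refine hle.trans ?_
      rw [sub_zero]
      have hrm : r ≤ max T 0 := le_trans hrT (le_max_left _ _)
      exact mul_le_mul_of_nonneg_left hrm (by positivity)
  have hgm : Measurable g := by
    rw [hgdef]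
    exact (hXm.mul_const _).add (hwm.const_mul b)
  have hgB : ∀ T : ℝ, ∃ B, 0 ≤ B ∧ ∀ r ∈ Iic T, |g r| ≤ B := by
    intro T
    obtain ⟨B1, hB10, hB1⟩ := hXB T
    obtain ⟨B2, hB20, hB2⟩ := hwB T
    refine ⟨B1 * C + |b| * B2, by positivity, fun r hr => ?_⟩
    rw [hgdef]
    beta_reduce
    calc |X r * φ 0 + b * w r| ≤ |X r * φ 0| + |b * w r| := abs_add_le _ _
      _ = |X r| * |φ 0| + |b| * |w r| := by rw [abs_mul, abs_mul]
      _ ≤ B1 * C + |b| * B2 := add_le_add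
          (mul_le_mul (hB1 r hr) (hφb 0) (abs_nonneg _) hB10)
          (mul_le_mul_of_nonneg_left (hB2 r hr) (abs_nonneg b))
  -- splitting the x-convolution
  have hxconv : ∀ u ≥ (0:ℝ), (∫ s in Ioi (0:ℝ), K s * x (u - s)) =
      (∫ s in Ioc (0:ℝ) u, K s * x (u - s)) + f u := by
    intro u hu
    obtain ⟨B, hB0, hB⟩ := hxB u
    have i1 : IntegrableOn (fun s => K s * x (u - s)) (Ioc 0 u) :=
      intOn_K_mul K (fun s => x (u - s)) (Ioc 0 u) measurableSet_Ioc
        (hKint.mono_set Ioc_subset_Ioi_self)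
        (hxm.comp (measurable_const.sub measurable_id)) B
        (fun s hs => hB (u - s) (by simp only [mem_Iic]; linarith [hs.1]))
    have heqon : EqOn (fun s => K s * x (u - s)) (fun s => K s * φ (u - s)) (Ioi u) := by
      intro s hs
      simp only []
      rw [hx0 (u - s) (by linarith [mem_Ioi.1 hs])]
    have i2 : IntegrableOn (fun s => K s * x (u - s)) (Ioi u) := by
      refine (intOn_K_mul K (fun s => φ (u - s)) (Ioi u) measurableSet_Ioi
        (hKint.mono_set (Ioi_subset_Ioi hu))
        (hφm.comp (measurable_const.sub measurable_id)) C
        (fun s _ => hφb _)).congr_fun heqon.symm measurableSet_Ioi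
    rw [← Ioc_union_Ioi_eq_Ioi hu, setIntegral_union (Ioc_disjoint_Ioi le_rfl)
      measurableSet_Ioi i1 i2]
    congr 1
    rw [setIntegral_congr_fun measurableSet_Ioi heqon, hfdef]
  have hxeq' : ∀ r ≥ (0:ℝ), x r = φ 0 + ∫ u in Ioc (0:ℝ) r,
      (a * x u + b * ((∫ s in Ioc (0:ℝ) u, K s * x (u - s)) + f u)) := by
    intro r hr
    rw [hxeq r hr, intervalIntegral.integral_of_le hr]
    congr 1
    refine setIntegral_congr_fun measurableSet_Ioc (fun u hu => ?_)
    rw [hxconv u hu.1.le]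
  have hSIoc : MeasurableSet {p : ℝ × ℝ | p.2 ∈ Ioc 0 p.1} :=
    (measurableSet_lt measurable_const measurable_snd).inter
      (measurableSet_le measurable_snd measurable_fst)
  have hgeq : ∀ r ≥ (0:ℝ), g r = φ 0 + ∫ u in Ioc (0:ℝ) r,
      (a * g u + b * ((∫ s in Ioc (0:ℝ) u, K s * g (u - s)) + f u)) := by
    intro r hr
    obtain ⟨BX, hBX0, hBX⟩ := hXB r
    obtain ⟨BJ, hBJ0, hBJ⟩ := hJB r
    obtain ⟨BE, hBE0, hBE⟩ := hEB r
    obtain ⟨Bw, hBw0, hBw⟩ := hwB r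
    -- Step A : expand the inner convolution with g
    have stepA : ∀ u ∈ Ioc (0:ℝ) r, (∫ s in Ioc (0:ℝ) u, K s * g (u - s)) =
        φ 0 * J u + b * ∫ s in Ioc (0:ℝ) u, J (u - s) * f s := by
      intro u hu
      have hu0 : (0:ℝ) ≤ u := hu.1.le
      have e1 : (∫ s in Ioc (0:ℝ) u, K s * g (u - s)) =
          ∫ s in Ioc (0:ℝ) u, (φ 0 * (K s * X (u - s)) + b * (K s * w (u - s))) := by
        refine setIntegral_congr_fun measurableSet_Ioc (fun s _ => ?_)
        rw [hgdef]
        simp only []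
        ring
      have i1 : IntegrableOn (fun s => φ 0 * (K s * X (u - s))) (Ioc 0 u) :=
        (intOn_K_mul K (fun s => X (u - s)) (Ioc 0 u) measurableSet_Ioc
          (hKint.mono_set Ioc_subset_Ioi_self)
          (hXm.comp (measurable_const.sub measurable_id)) BX
          (fun s hs => hBX (u - s) (by simp only [mem_Iic]; linarith [hs.1, hu.2]))).const_mul _
      have i2 : IntegrableOn (fun s => b * (K s * w (u - s))) (Ioc 0 u) :=
        (intOn_K_mul K (fun s => w (u - s)) (Ioc 0 u) measurableSet_Ioc
          (hKint.mono_set Ioc_subset_Ioi_self)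
          (hwm.comp (measurable_const.sub measurable_id)) Bw
          (fun s hs => hBw (u - s) (by simp only [mem_Iic]; linarith [hs.1, hu.2]))).const_mul _
      rw [e1, integral_add i1 i2, integral_const_mul, integral_const_mul, ← hJIoc u hu0]
      congr 2
      have e2 : (∫ s in Ioc (0:ℝ) u, K s * w (u - s)) =
          ∫ s in Ioc (0:ℝ) u, K s * ∫ r' in Ioc (0:ℝ) (u - s), X (u - s - r') * f r' := by
        refine setIntegral_congr_fun measurableSet_Ioc (fun s _ => ?_)
        rw [hwdef]
      rw [e2, fubini_K K X f hKmeas hXm hfm hKint u BX C hu0 hBX0 hC0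
        (fun v hv => hBX v (by simp only [mem_Iic]; linarith [mem_Iic.1 hv, hu.2]))
        (fun s hs => hfbd s hs.1.le)]
      refine setIntegral_congr_fun measurableSet_Ioc (fun s hs => ?_)
      rw [← hJIoc (u - s) (by linarith [hs.2]), mul_comm]
    -- Step B : the E-convolution
    have stepB : ∀ u ∈ Ioc (0:ℝ) r, (∫ s in Ioc (0:ℝ) u, E (u - s) * f s) =
        a * w u + b * ∫ s in Ioc (0:ℝ) u, J (u - s) * f s := by
      intro u hu
      have e1 : (∫ s in Ioc (0:ℝ) u, E (u - s) * f s) =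
          ∫ s in Ioc (0:ℝ) u, (a * (X (u - s) * f s) + b * (J (u - s) * f s)) := by
        refine setIntegral_congr_fun measurableSet_Ioc (fun s _ => ?_)
        rw [hEdef]
        simp only []
        ring
      have i1 : IntegrableOn (fun s => a * (X (u - s) * f s)) (Ioc 0 u) := by
        refine Integrable.const_mul ?_ a
        refine intOn_bdd _ _ measurableSet_Ioc (by simp) (BX * C)
          ((hXm.comp (measurable_const.sub measurable_id)).mul hfm) ?_
        intro s hs
        rw [abs_mul]
        exact mul_le_mul (hBX (u - s) (by simp only [mem_Iic]; linarith [hs.1, hu.2]))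
          (hfbd s hs.1.le) (abs_nonneg _) hBX0
      have i2 : IntegrableOn (fun s => b * (J (u - s) * f s)) (Ioc 0 u) := by
        refine Integrable.const_mul ?_ b
        refine intOn_bdd _ _ measurableSet_Ioc (by simp) (BJ * C)
          ((hJm.comp (measurable_const.sub measurable_id)).mul hfm) ?_
        intro s hs
        rw [abs_mul]
        exact mul_le_mul (hBJ (u - s) (by simp only [mem_Iic]; linarith [hs.1, hu.2]))
          (hfbd s hs.1.le) (abs_nonneg _) hBJ0
      rw [e1, integral_add i1 i2, integral_const_mul, integral_const_mul, hwdef]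
    -- pointwise identity of integrands
    have hpt : EqOn (fun u => a * g u + b * ((∫ s in Ioc (0:ℝ) u, K s * g (u - s)) + f u))
        (fun u => φ 0 * E u + b * ((∫ s in Ioc (0:ℝ) u, E (u - s) * f s) + f u))
        (Ioc (0:ℝ) r) := by
      intro u hu
      simp only []
      rw [stepA u hu, stepB u hu, hgdef, hEdef]
      simp only []
      ring
    -- measurability and bounds for the E-convolution in u
    have hconvEm : Measurable fun u => ∫ s in Ioc (0:ℝ) u, E (u - s) * f s :=
      meas_slice {p : ℝ × ℝ | p.2 ∈ Ioc 0 p.1} hSIoc (fun u s => E (u - s) * f s)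
        ((hEm.comp (measurable_fst.sub measurable_snd)).mul (hfm.comp measurable_snd))
    have hconvEb : ∀ u ∈ Ioc (0:ℝ) r, |∫ s in Ioc (0:ℝ) u, E (u - s) * f s| ≤ BE * C * r := by
      intro u hu
      have hb : ∀ s ∈ Ioc (0:ℝ) u, |E (u - s) * f s| ≤ BE * C := by
        intro s hs
        rw [abs_mul]
        exact mul_le_mul (hBE (u - s) (by simp only [mem_Iic]; linarith [hs.1, hu.2]))
          (hfbd s hs.1.le) (abs_nonneg _) hBE0
      have hint : IntegrableOn (fun s => E (u - s) * f s) (Ioc 0 u) :=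
        intOn_bdd _ _ measurableSet_Ioc (by simp) (BE * C)
          ((hEm.comp (measurable_const.sub measurable_id)).mul hfm) hb
      have hle := abs_integral_Ioc_le (fun s => E (u - s) * f s) 0 u (BE * C) hu.1.le hint
        (by positivity) hb
      refine hle.trans ?_
      rw [sub_zero]
      exact mul_le_mul_of_nonneg_left hu.2 (by positivity)
    -- integrabilities over Ioc 0 r
    have iE : IntegrableOn E (Ioc 0 r) :=
      intOn_bdd E _ measurableSet_Ioc (by simp) BE hEm
        (fun v hv => hBE v (mem_Iic.2 hv.2))
    have iconvE : IntegrableOn (fun u => ∫ s in Ioc (0:ℝ) u, E (u - s) * f s) (Ioc 0 r) :=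
      intOn_bdd _ _ measurableSet_Ioc (by simp) (BE * C * r) hconvEm hconvEb
    have iF : IntegrableOn f (Ioc 0 r) :=
      intOn_bdd f _ measurableSet_Ioc (by simp) C hfm (fun s hs => hfbd s hs.1.le)
    -- expansion of w r
    have hwexp : w r = (∫ s in Ioc (0:ℝ) r, f s) +
        ∫ u in Ioc (0:ℝ) r, (∫ s in Ioc (0:ℝ) u, E (u - s) * f s) := by
      have hfub := fubini_conv E f hEm hfm r BE C hr hBE0 hC0
        (fun v hv => hBE v hv) (fun s hs => hfbd s hs.1.le)
      rw [hfub]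
      have hEI : Measurable fun s => ∫ v in Ioc (0:ℝ) (r - s), E v :=
        meas_slice {p : ℝ × ℝ | p.2 ∈ Ioc 0 (r - p.1)}
          ((measurableSet_lt measurable_const measurable_snd).inter
            (measurableSet_le measurable_snd (measurable_const.sub measurable_fst)))
          (fun _ v => E v) (hEm.comp measurable_snd)
      have hEIb : ∀ s ∈ Ioc (0:ℝ) r, |∫ v in Ioc (0:ℝ) (r - s), E v| ≤ BE * r := by
        intro s hs
        have h1 := abs_integral_Ioc_le E 0 (r - s) BE (by linarith [hs.2])
          (intOn_bdd E _ measurableSet_Ioc (by simp) BE hEm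
            (fun v hv => hBE v (mem_Iic.2 (by linarith [hv.2, hs.1]))))
          hBE0
          (fun v hv => hBE v (mem_Iic.2 (by linarith [hv.2, hs.1])))
        refine h1.trans ?_
        rw [sub_zero]
        exact mul_le_mul_of_nonneg_left (by linarith [hs.1]) hBE0
      have i2 : IntegrableOn (fun s => f s * ∫ v in Ioc (0:ℝ) (r - s), E v) (Ioc 0 r) := by
        refine intOn_bdd _ _ measurableSet_Ioc (by simp) (C * (BE * r)) (hfm.mul hEI) ?_
        intro s hs
        rw [abs_mul]
        exact mul_le_mul (hfbd s hs.1.le) (hEIb s hs) (abs_nonneg _) hC0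
      have e1 : w r = ∫ s in Ioc (0:ℝ) r, (f s + f s * ∫ v in Ioc (0:ℝ) (r - s), E v) := by
        rw [hwdef]
        beta_reduce
        refine setIntegral_congr_fun measurableSet_Ioc (fun s hs => ?_)
        rw [hXeq' (r - s) (by linarith [hs.2])]
        ring
      rw [e1, integral_add iF i2]
    -- assemble
    have i23 : IntegrableOn (fun u => (∫ s in Ioc (0:ℝ) u, E (u - s) * f s) + f u)
        (Ioc 0 r) := iconvE.add iF
    have iE' : IntegrableOn (fun u => φ 0 * E u) (Ioc 0 r) := iE.const_mul (φ 0)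
    rw [setIntegral_congr_fun measurableSet_Ioc hpt]
    have e3 : (∫ u in Ioc (0:ℝ) r,
        (φ 0 * E u + b * ((∫ s in Ioc (0:ℝ) u, E (u - s) * f s) + f u))) =
        φ 0 * (∫ u in Ioc (0:ℝ) r, E u) +
          b * ((∫ u in Ioc (0:ℝ) r, (∫ s in Ioc (0:ℝ) u, E (u - s) * f s)) +
            ∫ s in Ioc (0:ℝ) r, f s) := by
      rw [integral_add iE' (i23.const_mul b), integral_const_mul,
        integral_const_mul, integral_add iconvE iF]
    rw [e3]
    have e4 : (∫ u in Ioc (0:ℝ) r, E u) = X r - 1 := by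
      have := hXeq' r hr
      linarith [this]
    rw [e4, hgdef]
    beta_reduce
    have e5 : (∫ u in Ioc (0:ℝ) r, (∫ s in Ioc (0:ℝ) u, E (u - s) * f s)) =
        w r - ∫ s in Ioc (0:ℝ) r, f s := by
      rw [hwexp]; ring
    rw [e5]
    ring
  -- conclude via uniqueness
  have hzm : Measurable fun v => x v - g v := hxm.sub hgm
  have hzb : ∀ T : ℝ, ∃ B, 0 ≤ B ∧ ∀ v ∈ Icc (0:ℝ) T, |x v - g v| ≤ B := by
    intro T
    obtain ⟨B1, hB10, hB1⟩ := hxB T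
    obtain ⟨B2, hB20, hB2⟩ := hgB T
    refine ⟨B1 + B2, by positivity, fun v hv => ?_⟩
    rw [sub_eq_add_neg]
    refine (abs_add_le _ _).trans ?_
    rw [abs_neg]
    exact add_le_add (hB1 v (mem_Iic.2 hv.2)) (hB2 v (mem_Iic.2 hv.2))
  have hzeq : ∀ r ≥ (0:ℝ), x r - g r = ∫ u in Ioc (0:ℝ) r,
      (a * (x u - g u) + b * ∫ s in Ioc (0:ℝ) u, K s * (x (u - s) - g (u - s))) := by
    intro r hr
    obtain ⟨Bx, hBx0, hBx⟩ := hxB r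
    obtain ⟨Bg, hBg0, hBg⟩ := hgB r
    have iFr : IntegrableOn f (Ioc 0 r) :=
      intOn_bdd f _ measurableSet_Ioc (by simp) C hfm (fun s hs => hfbd s hs.1.le)
    have icxm : Measurable fun u => ∫ s in Ioc (0:ℝ) u, K s * x (u - s) :=
      meas_slice {p : ℝ × ℝ | p.2 ∈ Ioc 0 p.1} hSIoc (fun u s => K s * x (u - s))
        ((hKmeas.comp measurable_snd).mul (hxm.comp (measurable_fst.sub measurable_snd)))
    have icgm : Measurable fun u => ∫ s in Ioc (0:ℝ) u, K s * g (u - s) :=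
      meas_slice {p : ℝ × ℝ | p.2 ∈ Ioc 0 p.1} hSIoc (fun u s => K s * g (u - s))
        ((hKmeas.comp measurable_snd).mul (hgm.comp (measurable_fst.sub measurable_snd)))
    have icx : IntegrableOn (fun u => ∫ s in Ioc (0:ℝ) u, K s * x (u - s)) (Ioc 0 r) := by
      refine intOn_bdd _ _ measurableSet_Ioc (by simp) Bx icxm ?_
      intro u hu
      exact abs_K_conv_le K (fun s => x (u - s)) hKpos hKint hKone
        (hxm.comp (measurable_const.sub measurable_id)) Bx hBx0 (Ioc 0 u) measurableSet_Ioc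
        Ioc_subset_Ioi_self
        (fun s hs => hBx (u - s) (by simp only [mem_Iic]; linarith [hs.1, hu.2]))
    have icg : IntegrableOn (fun u => ∫ s in Ioc (0:ℝ) u, K s * g (u - s)) (Ioc 0 r) := by
      refine intOn_bdd _ _ measurableSet_Ioc (by simp) Bg icgm ?_
      intro u hu
      exact abs_K_conv_le K (fun s => g (u - s)) hKpos hKint hKone
        (hgm.comp (measurable_const.sub measurable_id)) Bg hBg0 (Ioc 0 u) measurableSet_Ioc
        Ioc_subset_Ioi_self
        (fun s hs => hBg (u - s) (by simp only [mem_Iic]; linarith [hs.1, hu.2]))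
    have ixa : IntegrableOn (fun u => a * x u) (Ioc 0 r) :=
      (intOn_bdd x _ measurableSet_Ioc (by simp) Bx hxm
        (fun u hu => hBx u (mem_Iic.2 hu.2))).const_mul a
    have iga : IntegrableOn (fun u => a * g u) (Ioc 0 r) :=
      (intOn_bdd g _ measurableSet_Ioc (by simp) Bg hgm
        (fun u hu => hBg u (mem_Iic.2 hu.2))).const_mul a
    have ixf : IntegrableOn (fun u => (∫ s in Ioc (0:ℝ) u, K s * x (u - s)) + f u)
        (Ioc 0 r) := icx.add iFr
    have igf : IntegrableOn (fun u => (∫ s in Ioc (0:ℝ) u, K s * g (u - s)) + f u)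
        (Ioc 0 r) := icg.add iFr
    have ix : IntegrableOn (fun u => a * x u +
        b * ((∫ s in Ioc (0:ℝ) u, K s * x (u - s)) + f u)) (Ioc 0 r) :=
      ixa.add (ixf.const_mul b)
    have ig : IntegrableOn (fun u => a * g u +
        b * ((∫ s in Ioc (0:ℝ) u, K s * g (u - s)) + f u)) (Ioc 0 r) :=
      iga.add (igf.const_mul b)
    rw [hxeq' r hr, hgeq r hr, add_sub_add_left_eq_sub, ← integral_sub ix ig]
    refine setIntegral_congr_fun measurableSet_Ioc (fun u hu => ?_)
    have hsub : (∫ s in Ioc (0:ℝ) u, K s * x (u - s)) -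
        (∫ s in Ioc (0:ℝ) u, K s * g (u - s)) =
        ∫ s in Ioc (0:ℝ) u, K s * (x (u - s) - g (u - s)) := by
      rw [← integral_sub
        (intOn_K_mul K (fun s => x (u - s)) (Ioc 0 u) measurableSet_Ioc
          (hKint.mono_set Ioc_subset_Ioi_self)
          (hxm.comp (measurable_const.sub measurable_id)) Bx
          (fun s hs => hBx (u - s) (by simp only [mem_Iic]; linarith [hs.1, hu.2])))
        (intOn_K_mul K (fun s => g (u - s)) (Ioc 0 u) measurableSet_Ioc
          (hKint.mono_set Ioc_subset_Ioi_self)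
          (hgm.comp (measurable_const.sub measurable_id)) Bg
          (fun s hs => hBg (u - s) (by simp only [mem_Iic]; linarith [hs.1, hu.2])))]
      refine setIntegral_congr_fun measurableSet_Ioc (fun s _ => ?_)
      ring
    rw [← hsub]
    ring
  have hzero := volterra_unique a b K (fun v => x v - g v) hKmeas hKpos hKint hKone
    hzm hzb hzeq
  intro t ht
  have h0 := hzero t ht
  rw [hgdef] at h0
  simp only [] at h0
  linarith [h0]

theorem stmt1 (a b μ : ℝ) (K : ℝ → ℝ)
    (hKmeas : Measurable K) (hKpos : ∀ s ≥ (0 : ℝ), 0 ≤ K s)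
    (hKint : IntegrableOn K (Set.Ioi 0))
    (hKone : (∫ s in Set.Ioi (0 : ℝ), K s) = 1)
    (hμ : 0 < μ)
    (hρint : IntegrableOn (fun s => Real.exp (μ * s) * K s) (Set.Ioi 0))
    (φ x X : ℝ → ℝ)
    (hφc : ContinuousOn φ (Set.Iic 0))
    (hφb : ∃ C, ∀ θ ≤ (0 : ℝ), |φ θ| ≤ C)
    (hx : IsSolution a b K φ x)
    (hX : IsFundamental a b K X) :
    ∀ t ≥ (0 : ℝ),
      x t = X t * φ 0 +
        b * ∫ s in (0 : ℝ)..t, X (t - s) * ∫ θ in Set.Ioi s, K θ * φ (s - θ) := by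
  obtain ⟨C, hC⟩ := hφb
  obtain ⟨hx0, hxc, hxeq⟩ := hx
  obtain ⟨hX0, hX1, hXc, hXeq⟩ := hX
  set φ' : ℝ → ℝ := fun θ => φ (min θ 0) with hφ'def
  have hφ'c : Continuous φ' :=
    hφc.comp_continuous (continuous_id.min continuous_const)
      (fun t => mem_Iic.2 (min_le_right _ _))
  have hφ'b : ∀ θ, |φ' θ| ≤ C := fun θ => hC _ (min_le_right _ _)
  have hx0' : ∀ t ≤ (0:ℝ), x t = φ' t := by
    intro t htle
    rw [hx0 t htle, hφ'def]
    simp only []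
    rw [min_eq_left htle]
  have hφ'0 : φ' 0 = φ 0 := by rw [hφ'def]; simp
  rw [← hφ'0] at hxeq
  have key := main_aux a b K φ' x X C hKmeas hKpos hKint hKone hφ'c hφ'b hx0' hxc hxeq
    hX0 hX1 hXc hXeq
  intro t ht
  rw [key t ht, intervalIntegral.integral_of_le ht, hφ'0]
  congr 2
  refine setIntegral_congr_fun measurableSet_Ioc (fun s hs => ?_)
  congr 1
  refine setIntegral_congr_fun measurableSet_Ioi (fun θ hθ => ?_)
  congr 1
  rw [hφ'def]
  simp only []
  rw [min_eq_left (by linarith [mem_Ioi.1 hθ] : s - θ ≤ 0)]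
end

section
/- Let α₁ ∈ ℝ and suppose there exists λ* ∈ ℂ with Re λ* > α₁, Re λ* > −μ, and h(λ*) = 0. Then there exist a real number ᾱ > α₁ and a Lebesgue-measurable set U ⊆ [0,∞) of infinite Lebesgue measure such that |X(t)| ≥ e^{ᾱt} for every t ∈ U. -/
set_option maxHeartbeats 1000000

open MeasureTheory Real Set

/-- The characteristic function `h(λ) = λ - a - b ∫₀^∞ e^{-λ s} K(s) ds`. -/
noncomputable def charFn (a b : ℝ) (K : ℝ → ℝ) (z : ℂ) : ℂ :=
  z - (a : ℂ) - (b : ℂ) * ∫ s in Set.Ioi (0 : ℝ), Complex.exp (-z * s) * (K s : ℂ)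

lemma conv_bound (K X : ℝ → ℝ) (γ D u : ℝ)
    (hKmeas : Measurable K) (hKpos : ∀ s ≥ (0:ℝ), 0 ≤ K s) (hXmeas : Measurable X)
    (hρ : IntegrableOn (fun s => K s * Real.exp (-γ * s)) (Set.Ioi 0))
    (hb : ∀ v ≤ u, |X v| ≤ D * Real.exp (γ * v)) :
    IntegrableOn (fun s => K s * X (u - s)) (Set.Ioi 0) ∧
    |∫ s in Set.Ioi (0:ℝ), K s * X (u - s)| ≤
      D * (∫ s in Set.Ioi (0:ℝ), K s * Real.exp (-γ * s)) * Real.exp (γ * u) := by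
  have hmeas : Measurable (fun s => K s * X (u - s)) :=
    hKmeas.mul (hXmeas.comp (measurable_const.sub measurable_id))
  have hdom : ∀ᵐ s ∂(volume.restrict (Set.Ioi 0)),
      ‖K s * X (u - s)‖ ≤ D * Real.exp (γ * u) * (K s * Real.exp (-γ * s)) := by
    rw [ae_restrict_iff' measurableSet_Ioi]
    filter_upwards with s hs
    have hK0 := hKpos s hs.le
    have h1 : |X (u - s)| ≤ D * Real.exp (γ * (u - s)) := hb _ (by linarith [(Set.mem_Ioi.mp hs).le])
    have : ‖K s * X (u - s)‖ = K s * |X (u - s)| := by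
      rw [norm_mul, Real.norm_eq_abs, Real.norm_eq_abs, abs_of_nonneg hK0]
    rw [this]
    calc K s * |X (u - s)| ≤ K s * (D * Real.exp (γ * (u - s))) :=
          mul_le_mul_of_nonneg_left h1 hK0
      _ = D * Real.exp (γ * u) * (K s * Real.exp (-γ * s)) := by
          rw [show γ * (u - s) = γ * u + (-γ * s) by ring, Real.exp_add]; ring
  have hdomInt : IntegrableOn (fun s => D * Real.exp (γ * u) * (K s * Real.exp (-γ * s)))
      (Set.Ioi 0) := hρ.const_mul _
  have hint : IntegrableOn (fun s => K s * X (u - s)) (Set.Ioi 0) :=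
    Integrable.mono' hdomInt hmeas.aestronglyMeasurable hdom
  refine ⟨hint, ?_⟩
  have := norm_integral_le_of_norm_le hdomInt hdom
  rw [integral_const_mul] at this
  rw [← Real.norm_eq_abs]
  calc ‖∫ s in Set.Ioi (0:ℝ), K s * X (u - s)‖ ≤
      D * Real.exp (γ * u) * ∫ s in Set.Ioi (0:ℝ), K s * Real.exp (-γ * s) := this
    _ = _ := by ring

lemma conv_meas (K X : ℝ → ℝ) (hKmeas : Measurable K) (hXmeas : Measurable X) :
    Measurable (fun u => ∫ s in Set.Ioi (0:ℝ), K s * X (u - s)) := by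
  have h : StronglyMeasurable (Function.uncurry (fun (u s : ℝ) => K s * X (u - s))) := by
    apply Measurable.stronglyMeasurable
    exact (hKmeas.comp measurable_snd).mul (hXmeas.comp (measurable_fst.sub measurable_snd))
  exact (h.integral_prod_right).measurable

lemma g_meas (a b : ℝ) (K X : ℝ → ℝ) (hKmeas : Measurable K) (hXmeas : Measurable X) :
    Measurable (fun u => a * X u + b * ∫ s in Set.Ioi (0:ℝ), K s * X (u - s)) :=
  ((measurable_const.mul hXmeas).add
    (measurable_const.mul (conv_meas K X hKmeas hXmeas)))

lemma intInt_of_bound (g : ℝ → ℝ) (B γ : ℝ) (hgmeas : Measurable g)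
    (p q : ℝ) (hbd : ∀ u ∈ Set.uIoc p q, |g u| ≤ B * Real.exp (γ * u)) :
    IntervalIntegrable g volume p q := by
  have hcont : IntervalIntegrable (fun u => B * Real.exp (γ * u)) volume p q :=
    (Continuous.continuousOn (by continuity)).intervalIntegrable
  refine IntervalIntegrable.mono_fun' hcont hgmeas.aestronglyMeasurable ?_
  rw [Filter.EventuallyLE, ae_restrict_iff' measurableSet_uIoc]
  filter_upwards with u hu
  simpa [Real.norm_eq_abs] using hbd u hu

lemma Xmeas_of (X : ℝ → ℝ) (h0 : ∀ t < (0:ℝ), X t = 0) (hc : ContinuousOn X (Set.Ici 0)) :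
    Measurable X := by
  have hY : Continuous (fun t => X (max t 0)) := by
    apply hc.comp_continuous (continuous_id.max continuous_const)
    intro x; exact le_max_right x 0
  have : X = fun t => if t < 0 then 0 else X (max t 0) := by
    funext t
    by_cases ht : t < 0
    · simp [ht, h0 t ht]
    · simp [ht, max_eq_left (not_lt.mp ht)]
  rw [this]
  exact Measurable.ite measurableSet_Iio measurable_const hY.measurable

lemma conv_cont (K X : ℝ → ℝ) (C γ : ℝ) (hC : 0 ≤ C)
    (hKmeas : Measurable K) (hKpos : ∀ s ≥ (0:ℝ), 0 ≤ K s)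
    (hKint : IntegrableOn K (Set.Ioi 0))
    (h0 : ∀ t < (0:ℝ), X t = 0) (hcont : ContinuousOn X (Set.Ici 0))
    (hXmeas : Measurable X)
    (hbd : ∀ t, |X t| ≤ C * Real.exp (γ * t)) :
    ContinuousOn (fun u => ∫ s in Set.Ioi (0:ℝ), K s * X (u - s)) (Set.Ici 0) := by
  intro u₀ hu₀
  have hC' : ∀ v ≤ u₀ + 1, |X v| ≤ C * Real.exp (|γ| * (|u₀| + 1)) := by
    intro v hv
    by_cases hv0 : v < 0
    · rw [h0 v hv0, abs_zero]; positivity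
    · push_neg at hv0
      calc |X v| ≤ C * Real.exp (γ * v) := hbd v
        _ ≤ C * Real.exp (|γ| * (|u₀| + 1)) := by
            apply mul_le_mul_of_nonneg_left _ hC
            apply Real.exp_le_exp.mpr
            calc γ * v ≤ |γ * v| := le_abs_self _
              _ = |γ| * |v| := abs_mul _ _
              _ ≤ |γ| * (|u₀| + 1) := by
                  apply mul_le_mul_of_nonneg_left _ (abs_nonneg γ)
                  rw [abs_le]
                  refine ⟨by linarith [abs_nonneg u₀], by linarith [le_abs_self u₀]⟩
  unfold ContinuousWithinAt
  apply tendsto_integral_filter_of_dominated_convergence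
    (fun s => K s * (C * Real.exp (|γ| * (|u₀| + 1))))
  · filter_upwards with u
    exact ((hKmeas.mul (hXmeas.comp (measurable_const.sub measurable_id)))).aestronglyMeasurable
  · have hev : ∀ᶠ u in nhdsWithin u₀ (Set.Ici 0), u < u₀ + 1 :=
      Filter.Eventually.filter_mono nhdsWithin_le_nhds
        (Filter.Tendsto.eventually_lt_const (by linarith) Filter.tendsto_id)
    filter_upwards [hev] with u hu
    rw [ae_restrict_iff' measurableSet_Ioi]
    filter_upwards with s hs
    have hK0 := hKpos s hs.le
    rw [Real.norm_eq_abs, abs_mul, abs_of_nonneg hK0]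
    exact mul_le_mul_of_nonneg_left (hC' (u - s) (by linarith [(Set.mem_Ioi.mp hs).le])) hK0
  · exact hKint.mul_const _
  · have hae : ∀ᵐ s ∂(volume.restrict (Set.Ioi 0)), s ≠ u₀ := by
      refine (ae_iff).mpr ?_
      have h1 : {s : ℝ | ¬s ≠ u₀} = {u₀} := by ext x; simp
      rw [h1, Measure.restrict_apply (measurableSet_singleton u₀)]
      exact measure_mono_null Set.inter_subset_left (measure_singleton u₀)
    filter_upwards [hae] with s hs
    have hXc : ContinuousAt X (u₀ - s) := by
      rcases lt_trichotomy (u₀ - s) 0 with h | h | h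
      · have hmem : Set.Iio (0:ℝ) ∈ nhds (u₀ - s) := Iio_mem_nhds h
        apply continuousAt_const.congr
        exact Filter.eventuallyEq_of_mem hmem (fun x hx => (h0 x hx).symm)
      · exact absurd (by linarith [sub_eq_zero.mp h] : s = u₀) hs
      · exact (hcont (u₀ - s) (le_of_lt h)).continuousAt (Ici_mem_nhds h)
    have hsubc : ContinuousAt (fun u : ℝ => u - s) u₀ :=
      (continuous_id.sub continuous_const).continuousAt
    have h2 : ContinuousAt (fun u => K s * X (u - s)) u₀ :=
      continuousAt_const.mul (ContinuousAt.comp (x := u₀) hXc hsubc)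
    exact h2.tendsto.mono_left nhdsWithin_le_nhds

lemma global_bound (a b : ℝ) (K X : ℝ → ℝ) (α α' : ℝ) (hαα' : α < α')
    (hKmeas : Measurable K) (hKpos : ∀ s ≥ (0:ℝ), 0 ≤ K s)
    (hρ : IntegrableOn (fun s => K s * Real.exp (-α' * s)) (Set.Ioi 0))
    (h0 : ∀ t < (0:ℝ), X t = 0) (hX1 : X 0 = 1) (hcont : ContinuousOn X (Set.Ici 0))
    (hXeq : ∀ t ≥ (0:ℝ), X t = 1 + ∫ u in (0:ℝ)..t,
      (a * X u + b * ∫ s in Set.Ioi (0:ℝ), K s * X (u - s)))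
    (hU : volume {t : ℝ | 0 ≤ t ∧ Real.exp (α * t) ≤ |X t|} ≠ ⊤) :
    ∃ C : ℝ, 1 ≤ C ∧ ∀ t, |X t| ≤ C * Real.exp (α' * t) := by
  have hXmeas : Measurable X := Xmeas_of X h0 hcont
  set Y : ℝ → ℝ := fun t => X (max t 0) with hYdef
  have hYc : Continuous Y := by
    apply hcont.comp_continuous (continuous_id.max continuous_const)
    intro x; exact le_max_right x 0
  have hXY : ∀ t, 0 ≤ t → X t = Y t := by
    intro t ht; simp [hYdef, max_eq_left ht]
  set g : ℝ → ℝ := fun u => a * X u + b * ∫ s in Set.Ioi (0:ℝ), K s * X (u - s) with hgdef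
  have hgmeas : Measurable g := g_meas a b K X hKmeas hXmeas
  set ρ' : ℝ := ∫ s in Set.Ioi (0:ℝ), K s * Real.exp (-α' * s) with hρ'def
  have hρ'0 : 0 ≤ ρ' := by
    apply setIntegral_nonneg measurableSet_Ioi
    intro s hs
    exact mul_nonneg (hKpos s (le_of_lt hs)) (Real.exp_nonneg _)
  set c : ℝ := |a| + |b| * ρ' with hcdef
  have hc0 : 0 ≤ c := by positivity
  -- pointwise bound on g
  have hgb : ∀ (D w : ℝ), (∀ v ≤ w, |X v| ≤ D * Real.exp (α' * v)) →
      ∀ u ≤ w, |g u| ≤ c * D * Real.exp (α' * u) := by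
    intro D w hb u hu
    have hconv := conv_bound K X α' D u hKmeas hKpos hXmeas hρ
      (fun v hv => hb v (le_trans hv hu))
    have h1 : |X u| ≤ D * Real.exp (α' * u) := hb u hu
    calc |g u| ≤ |a * X u| + |b * ∫ s in Set.Ioi (0:ℝ), K s * X (u - s)| := abs_add_le _ _
      _ = |a| * |X u| + |b| * |∫ s in Set.Ioi (0:ℝ), K s * X (u - s)| := by
          rw [abs_mul, abs_mul]
      _ ≤ |a| * (D * Real.exp (α' * u)) + |b| * (D * ρ' * Real.exp (α' * u)) := by
          gcongr
          exact hconv.2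
      _ = c * D * Real.exp (α' * u) := by rw [hcdef]; ring
  set E' : ℝ := Real.exp |α'| with hE'def
  have hE'1 : 1 ≤ E' := Real.one_le_exp (abs_nonneg _)
  set ε : ℝ := min 1 (1 / (2 * (c + 1) * E')) with hεdef
  have hε0 : 0 < ε := by
    apply lt_min one_pos
    positivity
  have hε1 : ε ≤ 1 := min_le_left _ _
  have hεc : ε * (c * E') ≤ 1 / 2 := by
    have h2 : ε ≤ 1 / (2 * (c + 1) * E') := min_le_right _ _
    have h3 : (0:ℝ) < 2 * (c + 1) * E' := by positivity
    have h4 : ε * (2 * (c + 1) * E') ≤ 1 := by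
      rw [← le_div_iff₀ h3]; exact h2
    nlinarith [hε0.le, hE'1, hc0]
  set U : Set ℝ := {t : ℝ | 0 ≤ t ∧ Real.exp (α * t) ≤ |X t|} with hUdef
  have hUc : IsClosed U := by
    have : U = Set.Ici 0 ∩ {t : ℝ | Real.exp (α * t) ≤ |Y t|} := by
      ext t
      simp only [hUdef, Set.mem_setOf_eq, Set.mem_inter_iff, Set.mem_Ici]
      constructor
      · rintro ⟨h1, h2⟩; exact ⟨h1, by rwa [← hXY t h1]⟩
      · rintro ⟨h1, h2⟩; exact ⟨h1, by rwa [hXY t h1]⟩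
    rw [this]
    exact isClosed_Ici.inter (isClosed_le (Real.continuous_exp.comp (continuous_const.mul continuous_id)) hYc.abs)
  -- tail of U has small measure
  obtain ⟨T, hT0, hTtail⟩ : ∃ T : ℝ, 0 ≤ T ∧ volume (U ∩ Set.Ici T) ≤ ENNReal.ofReal ε := by
    have hmeasS : ∀ n : ℕ, NullMeasurableSet (U ∩ Set.Ici (n:ℝ)) volume :=
      fun n => (hUc.measurableSet.inter measurableSet_Ici).nullMeasurableSet
    have hanti : Antitone (fun n : ℕ => U ∩ Set.Ici (n:ℝ)) := by
      intro n m hnm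
      exact Set.inter_subset_inter_right U (Set.Ici_subset_Ici.mpr (by exact_mod_cast hnm))
    have hfin : ∃ n : ℕ, volume (U ∩ Set.Ici (n:ℝ)) ≠ ⊤ :=
      ⟨0, fun h => hU (top_le_iff.mp (h ▸ measure_mono Set.inter_subset_left))⟩
    have hiInter : ⋂ n : ℕ, (U ∩ Set.Ici (n:ℝ)) = ∅ := by
      ext t
      simp only [Set.mem_iInter, Set.mem_inter_iff, Set.mem_Ici, Set.mem_empty_iff_false,
        iff_false, not_forall]
      obtain ⟨n, hn⟩ := exists_nat_gt t
      exact ⟨n, fun h => absurd h.2 (not_le.mpr hn)⟩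
    have htend := tendsto_measure_iInter_atTop hmeasS hanti hfin
    rw [hiInter, measure_empty] at htend
    have hlt : (0:ENNReal) < ENNReal.ofReal ε := by
      rw [ENNReal.ofReal_pos]; exact hε0
    obtain ⟨n, hn⟩ := (htend.eventually_lt_const hlt).exists
    exact ⟨(n:ℝ), Nat.cast_nonneg n, hn.le⟩
  set T₂ : ℝ := T + ε + 1 with hT₂def
  have hT₂0 : 0 ≤ T₂ := by positivity
  -- bound on the compact interval [0, T₂]
  obtain ⟨C₀, hC₀⟩ := (isCompact_Icc (a := (0:ℝ)) (b := T₂)).exists_bound_of_continuousOn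
    (f := fun t => Y t * Real.exp (-α' * t))
    (Continuous.continuousOn (by fun_prop))
  have hC₀0 : 0 ≤ C₀ := le_trans (norm_nonneg _) (hC₀ 0 ⟨le_refl 0, hT₂0⟩)
  have hC₀bd : ∀ t ∈ Set.Icc (0:ℝ) T₂, |X t| ≤ C₀ * Real.exp (α' * t) := by
    intro t ht
    have h1 := hC₀ t ht
    rw [Real.norm_eq_abs, abs_mul, Real.abs_exp] at h1
    have h2 : |X t| = |Y t| := by rw [hXY t ht.1]
    have h3 : |Y t| = (|Y t| * Real.exp (-α' * t)) * Real.exp (α' * t) := by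
      rw [mul_assoc, ← Real.exp_add]; simp
    rw [h2, h3]
    exact mul_le_mul_of_nonneg_right h1 (Real.exp_nonneg _)
  set C : ℝ := 2 * (Real.exp |α| + C₀ + 1) with hCdef
  have hexpa : (0:ℝ) < Real.exp |α| := Real.exp_pos _
  have hC1 : 1 ≤ C := by nlinarith
  have hC0' : 0 < C := by nlinarith
  refine ⟨C, hC1, ?_⟩
  by_contra hcon
  push_neg at hcon
  obtain ⟨tw, htw⟩ := hcon
  set G : Set ℝ := {t : ℝ | 0 ≤ t ∧ C * Real.exp (α' * t) < |X t|} with hGdef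
  have hGne : G.Nonempty := by
    refine ⟨tw, ?_, htw⟩
    by_contra htw0
    push_neg at htw0
    rw [h0 tw htw0, abs_zero] at htw
    nlinarith [Real.exp_pos (α' * tw)]
  have hbddG : BddBelow G := ⟨0, fun x hx => hx.1⟩
  set t₁ : ℝ := sInf G with ht₁def
  have ht₁0 : 0 ≤ t₁ := le_csInf hGne (fun x hx => hx.1)
  have hup : ∀ u, u < t₁ → |X u| ≤ C * Real.exp (α' * u) := by
    intro u hu
    by_cases hu0 : u < 0
    · rw [h0 u hu0, abs_zero]; positivity
    · have hnotG : u ∉ G := fun h => absurd hu (not_lt.mpr (csInf_le hbddG h))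
      rw [hGdef, Set.mem_setOf_eq, not_and] at hnotG
      exact not_lt.mp (hnotG (not_lt.mp hu0))
  have hclosG : t₁ ∈ closure G := csInf_mem_closure hGne hbddG
  have hlow : C * Real.exp (α' * t₁) ≤ |Y t₁| := by
    have hsub : G ⊆ {t : ℝ | C * Real.exp (α' * t) ≤ |Y t|} := by
      intro t ht
      rw [Set.mem_setOf_eq, ← hXY t ht.1]
      exact ht.2.le
    have hcl : IsClosed {t : ℝ | C * Real.exp (α' * t) ≤ |Y t|} :=
      isClosed_le (continuous_const.mul (Real.continuous_exp.comp
        (continuous_const.mul continuous_id))) hYc.abs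
    exact closure_minimal hsub hcl hclosG
  have hlowX : C * Real.exp (α' * t₁) ≤ |X t₁| := by rwa [hXY t₁ ht₁0]
  have ht₁T₂ : T₂ < t₁ := by
    by_contra h
    push_neg at h
    have h1 := hC₀bd t₁ ⟨ht₁0, h⟩
    have h2 := le_trans hlowX h1
    have h3 : C ≤ C₀ := le_of_mul_le_mul_right h2 (Real.exp_pos _)
    nlinarith
  have ht₁pos : 0 < t₁ := lt_of_le_of_lt (by positivity : (0:ℝ) ≤ T₂) ht₁T₂
  have hXle : ∀ u ≤ t₁, |X u| ≤ C * Real.exp (α' * u) := by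
    intro u hu
    rcases lt_or_eq_of_le hu with h | h
    · exact hup u h
    · rw [h]
      have hsub : Set.Ico (0:ℝ) t₁ ⊆ {t : ℝ | |Y t| ≤ C * Real.exp (α' * t)} := by
        intro v hv
        rw [Set.mem_setOf_eq, ← hXY v hv.1]
        exact hup v hv.2
      have hcl : IsClosed {t : ℝ | |Y t| ≤ C * Real.exp (α' * t)} :=
        isClosed_le hYc.abs (continuous_const.mul (Real.continuous_exp.comp
          (continuous_const.mul continuous_id)))
      have hmem : t₁ ∈ closure (Set.Ico (0:ℝ) t₁) := by
        rw [closure_Ico (ne_of_lt ht₁pos)]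
        exact ⟨ht₁0, le_refl t₁⟩
      have := closure_minimal hsub hcl hmem
      rwa [Set.mem_setOf_eq, ← hXY t₁ ht₁0] at this
  have hXeqt₁ : |X t₁| = C * Real.exp (α' * t₁) := le_antisymm (hXle t₁ le_rfl) hlowX
  set S : Set ℝ := Set.Icc (t₁ - (ε + 1)) t₁ \ U with hSdef
  have hTle : T ≤ t₁ - (ε + 1) := by
    have : T₂ < t₁ := ht₁T₂
    rw [hT₂def] at this
    linarith
  have hSne : S.Nonempty := by
    rw [Set.nonempty_iff_ne_empty]
    intro hS
    rw [hSdef, Set.diff_eq_empty] at hS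
    have hsub2 : Set.Icc (t₁ - (ε + 1)) t₁ ⊆ U ∩ Set.Ici T := by
      intro x hx
      exact ⟨hS hx, le_trans hTle hx.1⟩
    have hv1 : volume (Set.Icc (t₁ - (ε + 1)) t₁) ≤ ENNReal.ofReal ε :=
      le_trans (measure_mono hsub2) hTtail
    rw [Real.volume_Icc, show t₁ - (t₁ - (ε + 1)) = ε + 1 by ring] at hv1
    rw [ENNReal.ofReal_le_ofReal_iff hε0.le] at hv1
    linarith
  have hbddS : BddAbove S := ⟨t₁, fun x hx => hx.1.2⟩
  set t₀ : ℝ := sSup S with ht₀def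
  have ht₀cl : t₀ ∈ closure S := csSup_mem_closure hSne hbddS
  have ht₀Icc : t₀ ∈ Set.Icc (t₁ - (ε + 1)) t₁ :=
    closure_minimal Set.diff_subset isClosed_Icc ht₀cl
  have ht₀0 : 0 ≤ t₀ := le_trans (le_trans hT0 hTle) ht₀Icc.1
  have hXt₀ : |X t₀| ≤ Real.exp (α * t₀) := by
    have hsub : S ⊆ {t : ℝ | |Y t| ≤ Real.exp (α * t)} := by
      intro v hv
      have hv0 : 0 ≤ v := le_trans (le_trans hT0 hTle) hv.1.1
      have hvU : v ∉ U := hv.2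
      rw [hUdef, Set.mem_setOf_eq, not_and] at hvU
      have := not_le.mp (hvU hv0)
      rw [Set.mem_setOf_eq, ← hXY v hv0]
      exact this.le
    have hcl : IsClosed {t : ℝ | |Y t| ≤ Real.exp (α * t)} :=
      isClosed_le hYc.abs (Real.continuous_exp.comp (continuous_const.mul continuous_id))
    have := closure_minimal hsub hcl ht₀cl
    rwa [Set.mem_setOf_eq, ← hXY t₀ ht₀0] at this
  have hIocU : Set.Ioc t₀ t₁ ⊆ U := by
    intro v hv
    by_contra hvU
    have hvS : v ∈ S := ⟨⟨le_trans ht₀Icc.1 hv.1.le, hv.2⟩, hvU⟩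
    exact absurd (le_csSup hbddS hvS) (not_le.mpr hv.1)
  have hlen : t₁ - t₀ ≤ ε := by
    have hsub2 : Set.Ioc t₀ t₁ ⊆ U ∩ Set.Ici T := by
      intro v hv
      exact ⟨hIocU hv, le_trans (le_trans hTle ht₀Icc.1) hv.1.le⟩
    have hv1 : volume (Set.Ioc t₀ t₁) ≤ ENNReal.ofReal ε :=
      le_trans (measure_mono hsub2) hTtail
    rw [Real.volume_Ioc] at hv1
    rw [ENNReal.ofReal_le_ofReal_iff hε0.le] at hv1
    linarith
  have ht₀t₁ : t₀ ≤ t₁ := ht₀Icc.2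
  -- the integral equation difference
  have hgbd : ∀ u ≤ t₁, |g u| ≤ c * C * Real.exp (α' * u) := hgb C t₁ hXle
  have hint1 : IntervalIntegrable g volume 0 t₁ := by
    apply intInt_of_bound g (c * C) α' hgmeas
    intro u hu
    rw [Set.uIoc_of_le ht₁0] at hu
    exact hgbd u hu.2
  have hint0 : IntervalIntegrable g volume 0 t₀ := by
    apply intInt_of_bound g (c * C) α' hgmeas
    intro u hu
    rw [Set.uIoc_of_le ht₀0] at hu
    exact hgbd u (le_trans hu.2 ht₀t₁)
  have hdiff : X t₁ - X t₀ = ∫ u in t₀..t₁, g u := by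
    rw [hXeq t₁ ht₁0, hXeq t₀ ht₀0]
    rw [show (1 + ∫ u in (0:ℝ)..t₁, g u) - (1 + ∫ u in (0:ℝ)..t₀, g u)
      = (∫ u in (0:ℝ)..t₁, g u) - (∫ u in (0:ℝ)..t₀, g u) by ring]
    exact intervalIntegral.integral_interval_sub_left hint1 hint0
  have habs : |∫ u in t₀..t₁, g u| ≤
      c * C * (Real.exp (α' * t₁) * Real.exp (|α'| * ε)) * |t₁ - t₀| := by
    rw [← Real.norm_eq_abs (∫ u in t₀..t₁, g u)]
    apply intervalIntegral.norm_integral_le_of_norm_le_const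
    intro u hu
    rw [Set.uIoc_of_le ht₀t₁] at hu
    have h1 : |g u| ≤ c * C * Real.exp (α' * u) := hgbd u hu.2
    have h2 : Real.exp (α' * u) ≤ Real.exp (α' * t₁) * Real.exp (|α'| * ε) := by
      rw [← Real.exp_add]
      apply Real.exp_le_exp.mpr
      have h3 : α' * u - α' * t₁ ≤ |α'| * ε := by
        calc α' * u - α' * t₁ = α' * (u - t₁) := by ring
          _ ≤ |α' * (u - t₁)| := le_abs_self _
          _ = |α'| * |u - t₁| := abs_mul _ _
          _ ≤ |α'| * ε := by
              apply mul_le_mul_of_nonneg_left _ (abs_nonneg α')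
              rw [abs_le]
              constructor <;> [linarith [hu.1, hlen]; linarith [hu.2, hε0.le]]
      linarith
    rw [Real.norm_eq_abs]
    calc |g u| ≤ c * C * Real.exp (α' * u) := h1
      _ ≤ c * C * (Real.exp (α' * t₁) * Real.exp (|α'| * ε)) := by
          apply mul_le_mul_of_nonneg_left h2 (by positivity)
  have hfin1 : |X t₁| ≤ |X t₀| + |∫ u in t₀..t₁, g u| := by
    calc |X t₁| = |X t₀ + (X t₁ - X t₀)| := by ring_nf
      _ ≤ |X t₀| + |X t₁ - X t₀| := abs_add_le _ _
      _ = |X t₀| + |∫ u in t₀..t₁, g u| := by rw [hdiff]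
  -- final estimates
  have hexp1 : Real.exp (α * t₀) ≤ Real.exp |α| * Real.exp (α' * t₁) := by
    rw [← Real.exp_add]
    apply Real.exp_le_exp.mpr
    have h1 : α * t₁ ≤ α' * t₁ := mul_le_mul_of_nonneg_right hαα'.le ht₁0
    have h2 : α * t₀ - α * t₁ ≤ |α| := by
      calc α * t₀ - α * t₁ = α * (t₀ - t₁) := by ring
        _ ≤ |α * (t₀ - t₁)| := le_abs_self _
        _ = |α| * |t₀ - t₁| := abs_mul _ _
        _ ≤ |α| * 1 := by
            apply mul_le_mul_of_nonneg_left _ (abs_nonneg α)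
            rw [abs_le]; constructor <;> linarith
        _ = |α| := mul_one _
    linarith
  have habs2 : |∫ u in t₀..t₁, g u| ≤ (1/2) * C * Real.exp (α' * t₁) := by
    have h1 : |t₁ - t₀| ≤ ε := by
      rw [abs_le]; constructor <;> linarith
    have h2 : Real.exp (|α'| * ε) ≤ E' := by
      rw [hE'def]
      apply Real.exp_le_exp.mpr
      calc |α'| * ε ≤ |α'| * 1 := mul_le_mul_of_nonneg_left hε1 (abs_nonneg α')
        _ = |α'| := mul_one _
    calc |∫ u in t₀..t₁, g u| ≤
        c * C * (Real.exp (α' * t₁) * Real.exp (|α'| * ε)) * |t₁ - t₀| := habs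
      _ ≤ c * C * (Real.exp (α' * t₁) * E') * ε := by
          apply mul_le_mul _ h1 (abs_nonneg _) (by positivity)
          apply mul_le_mul_of_nonneg_left _ (by positivity)
          exact mul_le_mul_of_nonneg_left h2 (Real.exp_nonneg _)
      _ = (ε * (c * E')) * C * Real.exp (α' * t₁) := by ring
      _ ≤ (1/2) * C * Real.exp (α' * t₁) := by
          apply mul_le_mul_of_nonneg_right _ (Real.exp_nonneg _)
          exact mul_le_mul_of_nonneg_right hεc hC0'.le
  have hcontra : C * Real.exp (α' * t₁) ≤
      Real.exp |α| * Real.exp (α' * t₁) + (1/2) * C * Real.exp (α' * t₁) := by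
    rw [← hXeqt₁]
    calc |X t₁| ≤ |X t₀| + |∫ u in t₀..t₁, g u| := hfin1
      _ ≤ Real.exp (α * t₀) + (1/2) * C * Real.exp (α' * t₁) := add_le_add hXt₀ habs2
      _ ≤ Real.exp |α| * Real.exp (α' * t₁) + (1/2) * C * Real.exp (α' * t₁) :=
          add_le_add hexp1 le_rfl
  have hep : (0:ℝ) < Real.exp (α' * t₁) := Real.exp_pos _
  nlinarith [hcontra, hep, hC₀0, hexpa]

lemma laplace_contra (a b : ℝ) (K X g : ℝ → ℝ) (z : ℂ) (C α' cg ρC : ℝ)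
    (hKmeas : Measurable K) (hKpos : ∀ s ≥ (0:ℝ), 0 ≤ K s)
    (hρ : IntegrableOn (fun s => K s * Real.exp (-α' * s)) (Set.Ioi 0))
    (hβ : α' < z.re)
    (h0 : ∀ t < (0:ℝ), X t = 0) (hX1 : X 0 = 1) (hcont : ContinuousOn X (Set.Ici 0))
    (hXmeas : Measurable X)
    (hXeq : ∀ t ≥ (0:ℝ), X t = 1 + ∫ u in (0:ℝ)..t, g u)
    (hgdef : ∀ u, g u = a * X u + b * ∫ s in Set.Ioi (0:ℝ), K s * X (u - s))
    (hgmeas : Measurable g) (hgcont : ContinuousOn g (Set.Ici 0))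
    (hC : 0 ≤ C) (hbd : ∀ t, |X t| ≤ C * Real.exp (α' * t))
    (hcg : 0 ≤ cg) (hgbd : ∀ u, |g u| ≤ cg * Real.exp (α' * u))
    (hρC : 0 ≤ ρC)
    (hconvmeas : Measurable (fun u => ∫ s in Set.Ioi (0:ℝ), K s * X (u - s)))
    (hconvbd : ∀ u, |∫ s in Set.Ioi (0:ℝ), K s * X (u - s)| ≤ ρC * Real.exp (α' * u))
    (hchar : z - (a:ℂ) - (b:ℂ) * ∫ s in Set.Ioi (0:ℝ), Complex.exp (-z * s) * (K s:ℂ) = 0) :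
    False := by
  set β : ℝ := z.re with hβdef
  have hβα : 0 < β - α' := by linarith
  set E : ℝ → ℂ := fun t => Complex.exp (-z * t) with hEdef
  have hEnorm : ∀ t : ℝ, ‖E t‖ = Real.exp (-β * t) := by
    intro t
    rw [hEdef, Complex.norm_exp]
    congr 1
    simp [Complex.mul_re, hβdef]
  have hEcont : Continuous E :=
    Complex.continuous_exp.comp (continuous_const.mul Complex.continuous_ofReal)
  have hdecay : ∀ D : ℝ, IntegrableOn (fun t => D * Real.exp ((α' - β) * t)) (Set.Ioi 0) := by
    intro D
    have h1 : IntegrableOn (fun t => Real.exp (-(β - α') * t)) (Set.Ioi 0) :=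
      exp_neg_integrableOn_Ioi 0 hβα
    have h2 : (fun t => D * Real.exp ((α' - β) * t)) =
        fun t => D * Real.exp (-(β - α') * t) := by
      funext t; ring_nf
    rw [h2]
    exact h1.const_mul D
  have hEXmeas : AEStronglyMeasurable (fun t => E t * (X t : ℂ)) (volume.restrict (Set.Ioi 0)) :=
    (hEcont.measurable.mul (Complex.measurable_ofReal.comp hXmeas)).aestronglyMeasurable
  have hEXnorm : ∀ t : ℝ, ‖E t * (X t : ℂ)‖ ≤ C * Real.exp ((α' - β) * t) := by
    intro t
    rw [norm_mul, hEnorm, Complex.norm_real, Real.norm_eq_abs]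
    calc Real.exp (-β * t) * |X t| ≤ Real.exp (-β * t) * (C * Real.exp (α' * t)) :=
          mul_le_mul_of_nonneg_left (hbd t) (Real.exp_nonneg _)
      _ = C * Real.exp ((α' - β) * t) := by
          rw [show (α' - β) * t = -β * t + α' * t by ring, Real.exp_add]; ring
  have hEXint : IntegrableOn (fun t => E t * (X t : ℂ)) (Set.Ioi 0) :=
    Integrable.mono' (hdecay C) hEXmeas (Filter.Eventually.of_forall hEXnorm)
  have hEgmeas : AEStronglyMeasurable (fun t => E t * (g t : ℂ)) (volume.restrict (Set.Ioi 0)) :=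
    (hEcont.measurable.mul (Complex.measurable_ofReal.comp hgmeas)).aestronglyMeasurable
  have hEgnorm : ∀ t : ℝ, ‖E t * (g t : ℂ)‖ ≤ cg * Real.exp ((α' - β) * t) := by
    intro t
    rw [norm_mul, hEnorm, Complex.norm_real, Real.norm_eq_abs]
    calc Real.exp (-β * t) * |g t| ≤ Real.exp (-β * t) * (cg * Real.exp (α' * t)) :=
          mul_le_mul_of_nonneg_left (hgbd t) (Real.exp_nonneg _)
      _ = cg * Real.exp ((α' - β) * t) := by
          rw [show (α' - β) * t = -β * t + α' * t by ring, Real.exp_add]; ring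
  have hEgint : IntegrableOn (fun t => E t * (g t : ℂ)) (Set.Ioi 0) :=
    Integrable.mono' (hdecay cg) hEgmeas (Filter.Eventually.of_forall hEgnorm)
  set F : ℂ := ∫ t in Set.Ioi (0:ℝ), E t * (X t : ℂ) with hFdef
  set G : ℂ := ∫ u in Set.Ioi (0:ℝ), E u * (g u : ℂ) with hGdef
  -- derivative of E
  have hEderiv : ∀ t : ℝ, HasDerivAt E (-z * E t) t := by
    intro t
    have h1 : HasDerivAt (fun y : ℝ => ((y : ℝ) : ℂ)) 1 t := (hasDerivAt_id t).ofReal_comp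
    have h2 : HasDerivAt (fun t : ℝ => -z * (t : ℂ)) (-z) t := by
      simpa using h1.const_mul (-z)
    simpa [hEdef, mul_comm] using h2.cexp
  -- derivative of X
  have hgIntable : ∀ p q : ℝ, IntervalIntegrable g volume p q := by
    intro p q
    exact intInt_of_bound g cg α' hgmeas p q (fun u _ => hgbd u)
  have hXderiv : ∀ t : ℝ, 0 < t → HasDerivAt X (g t) t := by
    intro t ht
    have hgc : ContinuousAt g t := (hgcont t ht.le).continuousAt (Ici_mem_nhds ht)
    have h1 : HasDerivAt (fun w => 1 + ∫ u in (0:ℝ)..w, g u) (g t) t :=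
      (intervalIntegral.integral_hasDerivAt_right (hgIntable 0 t)
        (hgmeas.stronglyMeasurable.stronglyMeasurableAtFilter) hgc).const_add 1
    apply h1.congr_of_eventuallyEq
    filter_upwards [Ioi_mem_nhds ht] with w hw
    exact hXeq w (le_of_lt hw)
  have hΦderiv : ∀ t : ℝ, 0 < t →
      HasDerivAt (fun t => E t * (X t : ℂ)) (-z * E t * (X t : ℂ) + E t * (g t : ℂ)) t := by
    intro t ht
    have h1 : HasDerivAt (fun t : ℝ => (X t : ℂ)) ((g t : ℂ)) t := (hXderiv t ht).ofReal_comp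
    have := (hEderiv t).mul h1
    convert this using 1
    all_goals rfl
  have hXCcont : ContinuousOn (fun t : ℝ => (X t : ℂ)) (Set.Ici 0) :=
    Complex.continuous_ofReal.comp_continuousOn hcont
  have hgCcont : ContinuousOn (fun t : ℝ => (g t : ℂ)) (Set.Ici 0) :=
    Complex.continuous_ofReal.comp_continuousOn hgcont
  have hId : ∀ T : ℝ, 0 ≤ T →
      (∫ t in (0:ℝ)..T, (-z * E t * (X t : ℂ) + E t * (g t : ℂ)))
        = E T * (X T : ℂ) - 1 := by
    intro T hT
    have hres := intervalIntegral.integral_eq_sub_of_hasDeriv_right_of_le hT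
      (f := fun t => E t * (X t : ℂ))
      (f' := fun t => -z * E t * (X t : ℂ) + E t * (g t : ℂ))
      (hEcont.continuousOn.mul (hXCcont.mono (Set.Icc_subset_Ici_self)))
      (fun t htt => (hΦderiv t htt.1).hasDerivWithinAt)
      (by
        apply ContinuousOn.intervalIntegrable
        rw [Set.uIcc_of_le hT]
        exact (((continuous_const.mul hEcont).continuousOn.mul
          (hXCcont.mono Set.Icc_subset_Ici_self)).add
          (hEcont.continuousOn.mul (hgCcont.mono Set.Icc_subset_Ici_self))))
    rw [hres]
    have hE0 : E 0 = 1 := by rw [hEdef]; simp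
    simp [hE0, hX1]
  have hsplit : ∀ T : ℝ, 0 ≤ T →
      z * ∫ t in (0:ℝ)..T, E t * (X t : ℂ)
        = 1 - E T * (X T : ℂ) + ∫ u in (0:ℝ)..T, E u * (g u : ℂ) := by
    intro T hT
    have hi1 : IntervalIntegrable (fun t => -z * E t * (X t : ℂ)) volume 0 T := by
      apply ContinuousOn.intervalIntegrable
      rw [Set.uIcc_of_le hT]
      exact (continuous_const.mul hEcont).continuousOn.mul
        (hXCcont.mono Set.Icc_subset_Ici_self)
    have hi2 : IntervalIntegrable (fun t => E t * (g t : ℂ)) volume 0 T := by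
      apply ContinuousOn.intervalIntegrable
      rw [Set.uIcc_of_le hT]
      exact hEcont.continuousOn.mul (hgCcont.mono Set.Icc_subset_Ici_self)
    have h1 := hId T hT
    rw [intervalIntegral.integral_add hi1 hi2] at h1
    have h2 : (∫ t in (0:ℝ)..T, -z * E t * (X t : ℂ))
        = -z * ∫ t in (0:ℝ)..T, E t * (X t : ℂ) := by
      rw [← intervalIntegral.integral_const_mul]
      congr 1
      funext t
      ring
    rw [h2] at h1
    linear_combination -h1
  -- limits
  have hL1 : Filter.Tendsto (fun T => ∫ t in (0:ℝ)..T, E t * (X t : ℂ))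
      Filter.atTop (nhds F) :=
    intervalIntegral_tendsto_integral_Ioi 0 hEXint Filter.tendsto_id
  have hL2 : Filter.Tendsto (fun T => ∫ u in (0:ℝ)..T, E u * (g u : ℂ))
      Filter.atTop (nhds G) :=
    intervalIntegral_tendsto_integral_Ioi 0 hEgint Filter.tendsto_id
  have hL3 : Filter.Tendsto (fun T => E T * (X T : ℂ)) Filter.atTop (nhds 0) := by
    apply squeeze_zero_norm hEXnorm
    have h1 : Filter.Tendsto (fun T : ℝ => (α' - β) * T) Filter.atTop Filter.atBot :=
      Filter.tendsto_id.const_mul_atTop_of_neg (by linarith)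
    have h2 := Real.tendsto_exp_atBot.comp h1
    have h3 := h2.const_mul C
    simpa using h3
  have heq : z * F = 1 - 0 + G := by
    have hsL : Filter.Tendsto (fun T => z * ∫ t in (0:ℝ)..T, E t * (X t : ℂ))
        Filter.atTop (nhds (z * F)) := hL1.const_mul z
    have hsR : Filter.Tendsto (fun T => 1 - E T * (X T : ℂ) + ∫ u in (0:ℝ)..T, E u * (g u : ℂ))
        Filter.atTop (nhds (1 - 0 + G)) := (tendsto_const_nhds.sub hL3).add hL2
    apply tendsto_nhds_unique hsL
    apply hsR.congr'
    filter_upwards [Filter.eventually_ge_atTop (0:ℝ)] with T hT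
    exact (hsplit T hT).symm
  rw [sub_zero] at heq
  -- split G using the definition of g
  set conv : ℝ → ℝ := fun u => ∫ s in Set.Ioi (0:ℝ), K s * X (u - s) with hconvdef
  have hEconvmeas : AEStronglyMeasurable (fun u => E u * (conv u : ℂ))
      (volume.restrict (Set.Ioi 0)) :=
    (hEcont.measurable.mul (Complex.measurable_ofReal.comp hconvmeas)).aestronglyMeasurable
  have hEconvnorm : ∀ u : ℝ, ‖E u * (conv u : ℂ)‖ ≤ ρC * Real.exp ((α' - β) * u) := by
    intro u
    rw [norm_mul, hEnorm, Complex.norm_real, Real.norm_eq_abs]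
    calc Real.exp (-β * u) * |conv u| ≤ Real.exp (-β * u) * (ρC * Real.exp (α' * u)) :=
          mul_le_mul_of_nonneg_left (hconvbd u) (Real.exp_nonneg _)
      _ = ρC * Real.exp ((α' - β) * u) := by
          rw [show (α' - β) * u = -β * u + α' * u by ring, Real.exp_add]; ring
  have hEconvint : IntegrableOn (fun u => E u * (conv u : ℂ)) (Set.Ioi 0) :=
    Integrable.mono' (hdecay ρC) hEconvmeas (Filter.Eventually.of_forall hEconvnorm)
  have hG1 : G = (a:ℂ) * F + (b:ℂ) * ∫ u in Set.Ioi (0:ℝ), E u * (conv u : ℂ) := by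
    rw [hGdef]
    have hcongr : ∀ u ∈ Set.Ioi (0:ℝ),
        E u * (g u : ℂ) = (a:ℂ) * (E u * (X u : ℂ)) + (b:ℂ) * (E u * (conv u : ℂ)) := by
      intro u _
      rw [hgdef u]
      push_cast
      ring
    rw [setIntegral_congr_fun measurableSet_Ioi hcongr,
      integral_add (hEXint.const_mul _) (hEconvint.const_mul _),
      integral_const_mul, integral_const_mul, hFdef]
  set J : ℂ := ∫ u in Set.Ioi (0:ℝ), E u * (conv u : ℂ) with hJdef
  have hJ1 : J = ∫ u in Set.Ioi (0:ℝ), ∫ s in Set.Ioi (0:ℝ),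
      E u * ((K s : ℂ) * (X (u - s) : ℂ)) := by
    rw [hJdef]
    apply setIntegral_congr_fun measurableSet_Ioi
    intro u _
    show E u * ((conv u : ℝ) : ℂ) = _
    have hco : ((conv u : ℝ) : ℂ) = ∫ s in Set.Ioi (0:ℝ), ((K s * X (u - s) : ℝ) : ℂ) := by
      rw [hconvdef]
      exact integral_ofReal.symm
    rw [hco, ← integral_const_mul]
    simp only [Complex.ofReal_mul]
  have hFub : Integrable
      (Function.uncurry (fun u s => E u * ((K s : ℂ) * (X (u - s) : ℂ))))
      ((volume.restrict (Set.Ioi 0)).prod (volume.restrict (Set.Ioi 0))) := by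
    have hmeas : AEStronglyMeasurable
        (Function.uncurry (fun u s => E u * ((K s : ℂ) * (X (u - s) : ℂ))))
        ((volume.restrict (Set.Ioi 0)).prod (volume.restrict (Set.Ioi 0))) := by
      apply Measurable.aestronglyMeasurable
      exact (hEcont.measurable.comp measurable_fst).mul
        ((Complex.measurable_ofReal.comp (hKmeas.comp measurable_snd)).mul
          (Complex.measurable_ofReal.comp (hXmeas.comp (measurable_fst.sub measurable_snd))))
    have hbddInt : Integrable
        (fun p : ℝ × ℝ => (C * Real.exp ((α' - β) * p.1)) * (K p.2 * Real.exp (-α' * p.2)))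
        ((volume.restrict (Set.Ioi 0)).prod (volume.restrict (Set.Ioi 0))) :=
      Integrable.mul_prod (hdecay C) hρ
    apply Integrable.mono' hbddInt hmeas
    rw [Measure.prod_restrict, ae_restrict_iff' (measurableSet_Ioi.prod measurableSet_Ioi)]
    filter_upwards with p hp
    obtain ⟨hp1, hp2⟩ := hp
    have hK0 : 0 ≤ K p.2 := hKpos p.2 (le_of_lt hp2)
    have hXb := hbd (p.1 - p.2)
    calc ‖Function.uncurry (fun u s => E u * ((K s : ℂ) * (X (u - s) : ℂ))) p‖
        = Real.exp (-β * p.1) * (K p.2 * |X (p.1 - p.2)|) := by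
          rw [Function.uncurry]
          rw [norm_mul, norm_mul, hEnorm, Complex.norm_real, Complex.norm_real,
            Real.norm_eq_abs, Real.norm_eq_abs, abs_of_nonneg hK0]
      _ ≤ Real.exp (-β * p.1) * (K p.2 * (C * Real.exp (α' * (p.1 - p.2)))) := by
          apply mul_le_mul_of_nonneg_left _ (Real.exp_nonneg _)
          exact mul_le_mul_of_nonneg_left hXb hK0
      _ = (C * Real.exp ((α' - β) * p.1)) * (K p.2 * Real.exp (-α' * p.2)) := by
          rw [show (α' - β) * p.1 = -β * p.1 + α' * p.1 by ring,
            show α' * (p.1 - p.2) = α' * p.1 + -α' * p.2 by ring,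
            Real.exp_add, Real.exp_add]
          ring
  have hswap := MeasureTheory.integral_integral_swap hFub
  have hinner : ∀ s ∈ Set.Ioi (0:ℝ),
      (∫ u in Set.Ioi (0:ℝ), E u * ((K s : ℂ) * (X (u - s) : ℂ)))
        = (Complex.exp (-z * s) * (K s : ℂ)) * F := by
    intro s hs
    rw [Set.mem_Ioi] at hs
    have h1 : (fun u => E u * ((K s : ℂ) * (X (u - s) : ℂ)))
        = fun u => (K s : ℂ) * (E u * (X (u - s) : ℂ)) := by funext u; ring
    rw [h1, integral_const_mul]
    have h2 : (∫ u in Set.Ioi (0:ℝ), E u * (X (u - s) : ℂ))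
        = ∫ u : ℝ, E u * (X (u - s) : ℂ) := by
      apply setIntegral_eq_integral_of_forall_compl_eq_zero
      intro u hu
      rw [Set.mem_Ioi, not_lt] at hu
      rw [h0 (u - s) (by linarith)]
      simp
    have h3 : (∫ u : ℝ, E u * (X (u - s) : ℂ))
        = ∫ v : ℝ, E (v + s) * (X (v + s - s) : ℂ) :=
      (integral_add_right_eq_self (fun u => E u * (X (u - s) : ℂ)) s).symm
    have h4 : (fun v : ℝ => E (v + s) * (X (v + s - s) : ℂ))
        = fun v : ℝ => Complex.exp (-z * s) * (E v * (X v : ℂ)) := by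
      funext v
      rw [add_sub_cancel_right, hEdef]
      simp only
      rw [show ((v + s : ℝ) : ℂ) = (v : ℂ) + (s : ℂ) by push_cast; ring,
        show -z * ((v : ℂ) + (s : ℂ)) = -z * v + -z * s by ring, Complex.exp_add]
      ring
    have h5 : (∫ v : ℝ, E v * (X v : ℂ)) = F := by
      have hs0 := setIntegral_eq_integral_of_forall_compl_eq_zero
        (μ := volume) (s := Set.Ici (0:ℝ)) (f := fun v => E v * (X v : ℂ))
        (fun v hv => by
          show E v * ((X v : ℝ) : ℂ) = 0
          rw [h0 v (by simpa using hv)]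
          simp)
      rw [← hs0, integral_Ici_eq_integral_Ioi, hFdef]
    rw [h2, h3, h4, integral_const_mul, h5]
    ring
  have hJ2 : J = (∫ s in Set.Ioi (0:ℝ), Complex.exp (-z * s) * (K s : ℂ)) * F := by
    rw [hJ1, hswap, setIntegral_congr_fun measurableSet_Ioi hinner, integral_mul_const]
  rw [hG1, hJ2] at heq
  have hzero : (1:ℂ) = 0 := by linear_combination F * hchar - heq
  exact one_ne_zero hzero

theorem stmt4 (a b μ : ℝ) (K : ℝ → ℝ)
    (hKmeas : Measurable K) (hKpos : ∀ s ≥ (0 : ℝ), 0 ≤ K s)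
    (hKint : IntegrableOn K (Set.Ioi 0))
    (hKone : (∫ s in Set.Ioi (0 : ℝ), K s) = 1)
    (hμ : 0 < μ)
    (hρint : IntegrableOn (fun s => Real.exp (μ * s) * K s) (Set.Ioi 0))
    (X : ℝ → ℝ) (hX : IsFundamental a b K X)
    (α₁ : ℝ)
    (hzero : ∃ zstar : ℂ, α₁ < zstar.re ∧ -μ < zstar.re ∧ charFn a b K zstar = 0) :
    ∃ αbar : ℝ, α₁ < αbar ∧ ∃ U : Set ℝ, U ⊆ Set.Ici 0 ∧ MeasurableSet U ∧
      volume U = ⊤ ∧ ∀ t ∈ U, Real.exp (αbar * t) ≤ |X t| := by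
  obtain ⟨h0, hX1, hcont, hXeq⟩ := hX
  obtain ⟨z, hz1, hz2, hz3⟩ := hzero
  set β : ℝ := z.re with hβdef
  set m : ℝ := max α₁ (-μ) with hmdef
  have hmβ : m < β := max_lt hz1 hz2
  set α : ℝ := (m + β) / 2 with hαdef
  set α' : ℝ := (α + β) / 2 with hα'def
  have hmα : m < α := by rw [hαdef]; linarith
  have hαα' : α < α' := by rw [hα'def, hαdef]; linarith
  have hα'β : α' < β := by rw [hα'def]; linarith
  have hα₁α : α₁ < α := lt_of_le_of_lt (le_max_left _ _) hmα
  have hμα : -μ < α := lt_of_le_of_lt (le_max_right _ _) hmα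
  have hμα' : -α' < μ := by linarith
  have hXmeas : Measurable X := Xmeas_of X h0 hcont
  -- integrability of the weighted kernel
  have hρ : IntegrableOn (fun s => K s * Real.exp (-α' * s)) (Set.Ioi 0) := by
    have hm1 : AEStronglyMeasurable (fun s : ℝ => K s * Real.exp (-α' * s))
        (volume.restrict (Set.Ioi 0)) :=
      (hKmeas.mul (by fun_prop : Measurable fun s : ℝ => Real.exp (-α' * s))).aestronglyMeasurable
    apply Integrable.mono' hρint hm1
    rw [ae_restrict_iff' measurableSet_Ioi]
    filter_upwards with s hs
    have hK0 := hKpos s hs.le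
    rw [Real.norm_eq_abs, abs_mul, abs_of_nonneg hK0, Real.abs_exp]
    rw [mul_comm (Real.exp (μ * s)) (K s)]
    apply mul_le_mul_of_nonneg_left _ hK0
    apply Real.exp_le_exp.mpr
    nlinarith [(Set.mem_Ioi.mp hs).le]
  -- the set U
  set U : Set ℝ := {t : ℝ | 0 ≤ t ∧ Real.exp (α * t) ≤ |X t|} with hUdef
  have hUsub : U ⊆ Set.Ici 0 := fun t ht => ht.1
  have hUclosed : IsClosed U := by
    set Y : ℝ → ℝ := fun t => X (max t 0) with hYdef
    have hYc : Continuous Y := by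
      apply hcont.comp_continuous (continuous_id.max continuous_const)
      intro x; exact le_max_right x 0
    have hXY : ∀ t, 0 ≤ t → X t = Y t := by
      intro t ht; simp [hYdef, max_eq_left ht]
    have : U = Set.Ici 0 ∩ {t : ℝ | Real.exp (α * t) ≤ |Y t|} := by
      ext t
      simp only [hUdef, Set.mem_setOf_eq, Set.mem_inter_iff, Set.mem_Ici]
      constructor
      · rintro ⟨h1, h2⟩; exact ⟨h1, by rwa [← hXY t h1]⟩
      · rintro ⟨h1, h2⟩; exact ⟨h1, by rwa [hXY t h1]⟩
    rw [this]
    exact isClosed_Ici.inter (isClosed_le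
      (Real.continuous_exp.comp (continuous_const.mul continuous_id)) hYc.abs)
  refine ⟨α, hα₁α, U, hUsub, hUclosed.measurableSet, ?_, fun t ht => ht.2⟩
  by_contra hvol
  -- global exponential bound
  obtain ⟨C, hC1, hbd⟩ := global_bound a b K X α α' hαα' hKmeas hKpos hρ h0 hX1 hcont hXeq hvol
  have hC0 : 0 ≤ C := le_trans zero_le_one hC1
  -- data for the Laplace argument
  set g : ℝ → ℝ := fun u => a * X u + b * ∫ s in Set.Ioi (0:ℝ), K s * X (u - s) with hgdef
  have hgmeas : Measurable g := g_meas a b K X hKmeas hXmeas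
  have hconvmeas : Measurable (fun u => ∫ s in Set.Ioi (0:ℝ), K s * X (u - s)) :=
    conv_meas K X hKmeas hXmeas
  have hgcont : ContinuousOn g (Set.Ici 0) := by
    apply (continuousOn_const.mul hcont).add
    exact continuousOn_const.mul (conv_cont K X C α' hC0 hKmeas hKpos hKint h0 hcont hXmeas hbd)
  set ρ' : ℝ := ∫ s in Set.Ioi (0:ℝ), K s * Real.exp (-α' * s) with hρ'def
  have hρ'0 : 0 ≤ ρ' := by
    apply setIntegral_nonneg measurableSet_Ioi
    intro s hs
    exact mul_nonneg (hKpos s (le_of_lt hs)) (Real.exp_nonneg _)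
  have hconvb : ∀ u : ℝ, |∫ s in Set.Ioi (0:ℝ), K s * X (u - s)| ≤
      (C * ρ') * Real.exp (α' * u) := by
    intro u
    have h := (conv_bound K X α' C u hKmeas hKpos hXmeas hρ (fun v _ => hbd v)).2
    calc |∫ s in Set.Ioi (0:ℝ), K s * X (u - s)| ≤ C * ρ' * Real.exp (α' * u) := h
      _ = (C * ρ') * Real.exp (α' * u) := by ring
  have hgbd : ∀ u : ℝ, |g u| ≤ ((|a| + |b| * ρ') * C) * Real.exp (α' * u) := by
    intro u
    calc |g u| ≤ |a * X u| + |b * ∫ s in Set.Ioi (0:ℝ), K s * X (u - s)| := abs_add_le _ _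
      _ = |a| * |X u| + |b| * |∫ s in Set.Ioi (0:ℝ), K s * X (u - s)| := by
          rw [abs_mul, abs_mul]
      _ ≤ |a| * (C * Real.exp (α' * u)) + |b| * ((C * ρ') * Real.exp (α' * u)) := by
          gcongr
          · exact hbd u
          · exact hconvb u
      _ = ((|a| + |b| * ρ') * C) * Real.exp (α' * u) := by ring
  have hchar' : z - (a:ℂ) - (b:ℂ) * ∫ s in Set.Ioi (0:ℝ),
      Complex.exp (-z * s) * (K s:ℂ) = 0 := hz3
  exact laplace_contra a b K X g z C α' ((|a| + |b| * ρ') * C) (C * ρ')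
    hKmeas hKpos hρ (by rw [← hβdef]; exact hα'β) h0 hX1 hcont hXmeas
    hXeq (fun u => rfl) hgmeas hgcont hC0 hbd
    (by positivity) hgbd (by positivity) hconvmeas hconvb hchar'
end

section
/- If a < 0 and a < b < −a, then h(λ) ≠ 0 for every λ ∈ ℂ with Re λ ≥ 0; that is, all zeros of the characteristic function have negative real part. -/
open MeasureTheory Real Set

theorem stmt6 (a b μ : ℝ) (K : ℝ → ℝ)
    (hKmeas : Measurable K) (hKpos : ∀ s ≥ (0 : ℝ), 0 ≤ K s)
    (hKint : IntegrableOn K (Set.Ioi 0))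
    (hKone : (∫ s in Set.Ioi (0 : ℝ), K s) = 1)
    (hμ : 0 < μ)
    (hρint : IntegrableOn (fun s => Real.exp (μ * s) * K s) (Set.Ioi 0))
    (ha : a < 0) (hab : a < b) (hba : b < -a) :
    ∀ z : ℂ, 0 ≤ z.re → charFn a b K z ≠ 0 := by
  intro z hz h0
  set I := ∫ s in Set.Ioi (0 : ℝ), Complex.exp (-z * s) * (K s : ℂ) with hI
  have hIle : ‖I‖ ≤ 1 := by
    rw [← hKone]
    apply norm_integral_le_of_norm_le hKint
    filter_upwards [ae_restrict_mem measurableSet_Ioi] with s hs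
    rw [norm_mul, Complex.norm_exp]
    have hre : ((-z * (s : ℂ)).re) ≤ 0 := by
      simp only [neg_mul, Complex.neg_re, Complex.mul_re, Complex.ofReal_re,
        Complex.ofReal_im, mul_zero, sub_zero, neg_nonpos]
      exact mul_nonneg hz hs.le
    have hle1 : Real.exp ((-z * (s : ℂ)).re) ≤ 1 := Real.exp_le_one_iff.mpr hre
    have hK := hKpos s hs.le
    calc Real.exp ((-z * (s : ℂ)).re) * ‖(K s : ℂ)‖
        ≤ 1 * ‖(K s : ℂ)‖ := mul_le_mul_of_nonneg_right hle1 (norm_nonneg _)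
      _ = K s := by simp [abs_of_nonneg hK]
  have heq : z - (a : ℂ) = (b : ℂ) * I := by
    unfold charFn at h0
    rw [← hI] at h0
    linear_combination h0
  have h1 : z.re - a ≤ ‖z - (a : ℂ)‖ := by
    have := Complex.re_le_norm (z - (a : ℂ))
    simpa [Complex.sub_re] using this
  have h2 : ‖z - (a : ℂ)‖ ≤ |b| := by
    rw [heq, norm_mul]
    calc ‖(b : ℂ)‖ * ‖I‖ ≤ ‖(b : ℂ)‖ * 1 :=
          mul_le_mul_of_nonneg_left hIle (norm_nonneg _)
      _ = |b| := by simp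
  have hb : |b| < -a := abs_lt.mpr ⟨by linarith, hba⟩
  linarith
end

section
/- Set m₁ := ∫₀^∞ t K(t) dt (which is finite and positive under the standing assumptions). If b ≤ a ≤ 0, (a,b) ≠ (0,0), and b·m₁ > −1, then h(λ) ≠ 0 for every λ ∈ ℂ with Re λ ≥ 0; that is, all zeros of the characteristic function have negative real part. -/
open MeasureTheory Real Set

theorem stmt7 (a b μ : ℝ) (K : ℝ → ℝ)
    (hKmeas : Measurable K) (hKpos : ∀ s ≥ (0 : ℝ), 0 ≤ K s)
    (hKint : IntegrableOn K (Set.Ioi 0))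
    (hKone : (∫ s in Set.Ioi (0 : ℝ), K s) = 1)
    (hμ : 0 < μ)
    (hρint : IntegrableOn (fun s => Real.exp (μ * s) * K s) (Set.Ioi 0))
    (m₁ : ℝ) (hm₁ : m₁ = ∫ t in Set.Ioi (0 : ℝ), t * K t)
    (hba : b ≤ a) (ha : a ≤ 0) (hne : ¬(a = 0 ∧ b = 0)) (hbm : b * m₁ > -1) :
    ∀ z : ℂ, 0 ≤ z.re → charFn a b K z ≠ 0 := by
  intro z hz hzero
  -- b < 0
  have hb : b < 0 := by
    rcases lt_or_eq_of_le (hba.trans ha) with h | h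
    · exact h
    · exact absurd (⟨by linarith, h⟩ : a = 0 ∧ b = 0) hne
  set x := z.re with hx
  set y := z.im with hy
  -- integrability of t * K t
  have hsK : IntegrableOn (fun t => t * K t) (Set.Ioi 0) := by
    refine Integrable.mono' (hρint.const_mul (1/μ))
      ((measurable_id.mul hKmeas).aestronglyMeasurable.restrict) ?_
    filter_upwards [ae_restrict_mem measurableSet_Ioi] with t ht
    have ht0 : (0:ℝ) < t := ht
    have hKt : 0 ≤ K t := hKpos t ht0.le
    have h1 : t ≤ Real.exp (μ * t) / μ := by
      rw [le_div_iff₀ hμ]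
      have := Real.add_one_le_exp (μ * t)
      nlinarith
    have : |t * K t| = t * K t := abs_of_nonneg (mul_nonneg ht0.le hKt)
    rw [Real.norm_eq_abs, this]
    have h2 : t * K t ≤ (Real.exp (μ * t) / μ) * K t := mul_le_mul_of_nonneg_right h1 hKt
    calc t * K t ≤ Real.exp (μ * t) / μ * K t := h2
      _ = 1/μ * (Real.exp (μ * t) * K t) := by ring
  have hm₁nn : 0 ≤ m₁ := by
    rw [hm₁]
    exact setIntegral_nonneg measurableSet_Ioi
      (fun t ht => mul_nonneg (le_of_lt ht) (hKpos t (le_of_lt ht)))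
  -- integrability of the complex integrand
  set f : ℝ → ℂ := fun s => Complex.exp (-z * s) * (K s : ℂ) with hfdef
  have hfmeas : Measurable f :=
    ((Complex.measurable_ofReal.const_mul (-z)).cexp).mul
      (Complex.measurable_ofReal.comp hKmeas)
  have hre' : ∀ s : ℝ, (-z * (s:ℂ)).re = -(x * s) := by
    intro s; simp [Complex.mul_re, hx]
  have him' : ∀ s : ℝ, (-z * (s:ℂ)).im = -(y * s) := by
    intro s; simp [Complex.mul_im, hy]
  have hfint : IntegrableOn f (Set.Ioi 0) := by
    refine Integrable.mono hKint hfmeas.aestronglyMeasurable.restrict ?_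
    filter_upwards [ae_restrict_mem measurableSet_Ioi] with s hs
    have hs0 : (0:ℝ) < s := hs
    have h1 : ‖f s‖ = Real.exp (-(x * s)) * |K s| := by
      rw [norm_mul, Complex.norm_exp, hre', Complex.norm_real,
        Real.norm_eq_abs]
    rw [h1, Real.norm_eq_abs]
    have : Real.exp (-(x * s)) ≤ 1 := by
      rw [Real.exp_le_one_iff]
      nlinarith
    nlinarith [abs_nonneg (K s), Real.exp_pos (-(x*s))]
  set I : ℂ := ∫ s in Set.Ioi (0:ℝ), f s with hIdef
  have heq : z - (a:ℂ) - (b:ℂ) * I = 0 := hzero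
  -- imaginary part
  have hIim : I.im = ∫ s in Set.Ioi (0:ℝ),
      Real.exp (-(x * s)) * Real.sin (-(y * s)) * K s := by
    have hcomm := Complex.imCLM.integral_comp_comm hfint
    simp only [Complex.imCLM_apply] at hcomm
    rw [hIdef, ← hcomm]
    refine setIntegral_congr_fun measurableSet_Ioi (fun s hs => ?_)
    show (f s).im = _
    rw [hfdef]
    simp only [Complex.mul_im, Complex.ofReal_re, Complex.ofReal_im, mul_zero, add_zero,
      Complex.exp_im, hre', him']
    ring
  have himeq : y = b * I.im := by
    have := congrArg Complex.im heq
    simp only [Complex.sub_im, Complex.ofReal_im, Complex.mul_im, Complex.ofReal_re,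
      Complex.zero_im] at this
    -- this : z.im - 0 - (b * I.im + 0 * I.re) = 0
    linarith [this]
  -- the integrand of I.im is bounded by |y| * s * K s
  have habs : |I.im| ≤ |y| * m₁ := by
    rw [hIim]
    calc |∫ s in Set.Ioi (0:ℝ), Real.exp (-(x * s)) * Real.sin (-(y * s)) * K s|
        ≤ ∫ s in Set.Ioi (0:ℝ), |Real.exp (-(x * s)) * Real.sin (-(y * s)) * K s| := by
          simpa only [Real.norm_eq_abs] using
            norm_integral_le_integral_norm
              (μ := volume.restrict (Set.Ioi (0:ℝ)))
              (fun s => Real.exp (-(x * s)) * Real.sin (-(y * s)) * K s)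
      _ ≤ ∫ s in Set.Ioi (0:ℝ), |y| * (s * K s) := by
          refine setIntegral_mono_on ?_ (hsK.const_mul |y|) measurableSet_Ioi ?_
          · exact (hfint.im.congr (by
              refine (ae_restrict_mem measurableSet_Ioi).mono (fun s hs => ?_)
              show (f s).im = _
              rw [hfdef]
              simp only [Complex.mul_im, Complex.ofReal_re, Complex.ofReal_im, mul_zero,
                add_zero, Complex.exp_im, hre', him']
              ring)).abs
          · intro s hs
            have hs0 : (0:ℝ) < s := hs
            have hK : 0 ≤ K s := hKpos s hs0.le
            have he : Real.exp (-(x * s)) ≤ 1 := by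
              rw [Real.exp_le_one_iff]; nlinarith
            have hsin : |Real.sin (-(y * s))| ≤ |y| * s := by
              calc |Real.sin (-(y * s))| ≤ |(-(y * s))| := Real.abs_sin_le_abs
                _ = |y| * s := by rw [abs_neg, abs_mul, abs_of_pos hs0]
            calc |Real.exp (-(x * s)) * Real.sin (-(y * s)) * K s|
                = Real.exp (-(x * s)) * |Real.sin (-(y * s))| * K s := by
                  rw [abs_mul, abs_mul, abs_of_pos (Real.exp_pos _), abs_of_nonneg hK]
              _ ≤ 1 * (|y| * s) * K s := by
                  apply mul_le_mul_of_nonneg_right _ hK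
                  exact mul_le_mul he hsin (abs_nonneg _) zero_le_one
              _ = |y| * (s * K s) := by ring
      _ = |y| * m₁ := by rw [hm₁, ← integral_const_mul]
  -- conclude y = 0
  have hy0 : y = 0 := by
    by_contra hy0
    have h1 : |y| ≤ |b| * (|y| * m₁) := by
      calc |y| = |b| * |I.im| := by conv_lhs => rw [himeq, abs_mul]
        _ ≤ |b| * (|y| * m₁) := mul_le_mul_of_nonneg_left habs (abs_nonneg b)
    have hby : |b| = -b := abs_of_neg hb
    have hyy : 0 < |y| := abs_pos.mpr hy0
    rw [hby] at h1
    nlinarith [mul_lt_mul_of_pos_right (show -(b*m₁) < 1 by linarith) hyy]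
  -- real part
  have hIre : I.re = ∫ s in Set.Ioi (0:ℝ), Real.exp (-(x * s)) * K s := by
    have hcomm := Complex.reCLM.integral_comp_comm hfint
    simp only [Complex.reCLM_apply] at hcomm
    rw [hIdef, ← hcomm]
    refine setIntegral_congr_fun measurableSet_Ioi (fun s hs => ?_)
    show (f s).re = _
    rw [hfdef]
    simp only [Complex.mul_re, Complex.ofReal_re, Complex.ofReal_im, mul_zero, sub_zero,
      Complex.exp_re, hre', him', hy0]
    simp
  have hreeq : x - a = b * I.re := by
    have := congrArg Complex.re heq
    simp only [Complex.sub_re, Complex.ofReal_re, Complex.mul_re, Complex.ofReal_im,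
      Complex.zero_re] at this
    linarith [this]
  have hRnn : 0 ≤ I.re := by
    rw [hIre]
    exact setIntegral_nonneg measurableSet_Ioi
      (fun s hs => mul_nonneg (Real.exp_pos _).le (hKpos s (le_of_lt hs)))
  have hR0 : I.re = 0 := by nlinarith
  have hx0 : x = 0 := by nlinarith
  have hR1 : I.re = 1 := by
    rw [hIre, ← hKone]
    refine setIntegral_congr_fun measurableSet_Ioi (fun s hs => ?_)
    rw [hx0]
    simp
  rw [hR0] at hR1
  exact one_ne_zero hR1.symm
end

section
/- Suppose there exists λ* ∈ ℂ with Re λ* > 0 and h(λ*) = 0. Then ∫₀ᵗ X(s)² ds → +∞ as t → +∞; in particular, for every σ₀ ≠ 0 the function M(t) = σ₀² ∫₀ᵗ X(s)² ds is unbounded on [0,∞). -/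
open MeasureTheory Real Set

section Aux

variable {E : Type*} [NormedAddCommGroup E]

lemma meas_of_zero_neg {Y : ℝ → ℝ} (hY0 : ∀ t < (0:ℝ), Y t = 0)
    (hYc : ContinuousOn Y (Ici 0)) : Measurable Y := by
  apply measurable_of_restrict_of_restrict_compl (measurableSet_Ici (a := (0:ℝ)))
  · exact (ContinuousOn.restrict hYc).measurable
  · have : (Ici (0:ℝ))ᶜ.domRestrict Y = fun _ => 0 := by
      funext x
      exact hY0 x (by simpa using x.2)
    rw [this]; exact measurable_const

lemma cexp_norm (z : ℂ) (t : ℝ) : ‖Complex.exp (-z * t)‖ = Real.exp (-z.re * t) := by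
  rw [Complex.norm_exp]
  congr 1
  simp [Complex.mul_re]

lemma cexp_integrableOn {z : ℂ} (hz : 0 < z.re) (u : ℝ) :
    IntegrableOn (fun t : ℝ => Complex.exp (-z * t)) (Ioi u) := by
  refine Integrable.mono' ((exp_neg_integrableOn_Ioi u hz)) ?_ ?_
  · exact ((Complex.continuous_exp.comp (continuous_const.mul Complex.continuous_ofReal))).aestronglyMeasurable.restrict
  · filter_upwards with t
    rw [cexp_norm]

lemma cexp_integral {z : ℂ} (hz : 0 < z.re) (u : ℝ) :
    ∫ t in Ioi u, Complex.exp (-z * t) = Complex.exp (-z * u) / z := by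
  have hz0 : z ≠ 0 := fun h => by simp [h] at hz
  have hD : ∀ x ∈ Ioi u, HasDerivAt (fun t : ℝ => -Complex.exp (-z * t) / z)
      (Complex.exp (-z * x)) x := by
    intro x _
    have h1 : HasDerivAt (fun t : ℝ => -z * t) (-z) x := by
      simpa using ((Complex.ofRealCLM.hasDerivAt (x := x)).const_mul (-z))
    have h2 := h1.cexp
    have h3 := (h2.neg).div_const z
    have e : -(Complex.exp (-z * ↑x) * -z) / z = Complex.exp (-z * ↑x) := by
      rw [mul_neg, neg_neg, mul_div_assoc, div_self hz0, mul_one]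
    rw [e] at h3
    exact h3
  have htend : Filter.Tendsto (fun t : ℝ => -Complex.exp (-z * t) / z)
      Filter.atTop (nhds 0) := by
    rw [show (0:ℂ) = -0/z by simp]
    apply Filter.Tendsto.div_const
    apply Filter.Tendsto.neg
    rw [tendsto_zero_iff_norm_tendsto_zero]
    have h1 : Filter.Tendsto (fun t : ℝ => Real.exp (-(z.re * t))) Filter.atTop (nhds 0) :=
      Real.tendsto_exp_neg_atTop_nhds_zero.comp
        (Filter.Tendsto.const_mul_atTop hz Filter.tendsto_id)
    have h2 : (fun t : ℝ => ‖Complex.exp (-z * t)‖) = fun t => Real.exp (-(z.re * t)) := by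
      funext t; rw [cexp_norm, neg_mul]
    rw [h2]
    exact h1
  have := integral_Ioi_of_hasDerivAt_of_tendsto
    (f := fun t : ℝ => -Complex.exp (-z * t) / z) (f' := fun t : ℝ => Complex.exp (-z * t))
    (a := u) (m := 0) ?_ hD (cexp_integrableOn hz u) htend
  · rw [this]; field_simp; ring
  · exact (((Complex.continuous_exp.comp (continuous_const.mul
      Complex.continuous_ofReal)).neg.div_const z)).continuousWithinAt

lemma indicator_shift_ae {g : ℝ → E} (hg0 : ∀ v < (0:ℝ), g v = 0) {s : ℝ} (hs : 0 ≤ s) :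
    (Ioi (0:ℝ)).indicator (fun u => g (u - s)) =ᵐ[volume] fun u => g (u - s) := by
  have h0 : (volume : Measure ℝ) {0} = 0 := measure_singleton 0
  rw [Filter.eventuallyEq_iff_exists_mem]
  refine ⟨{0}ᶜ, by rwa [mem_ae_iff, compl_compl], ?_⟩
  intro u hu
  by_cases h : u ∈ Ioi (0:ℝ)
  · simp [indicator_of_mem h]
  · have hu0 : u < 0 := lt_of_le_of_ne (by simpa using h) (by simpa using hu)
    have : g (u - s) = 0 := hg0 _ (by linarith)
    simp [indicator_of_notMem h, this]

lemma shift_integrableOn {g : ℝ → E} (hg0 : ∀ v < (0:ℝ), g v = 0) {s : ℝ} (hs : 0 ≤ s)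
    (hg : IntegrableOn g (Ioi 0)) : IntegrableOn (fun u => g (u - s)) (Ioi 0) := by
  have hind : (Ioi (0:ℝ)).indicator g =ᵐ[volume] g := by
    have := indicator_shift_ae hg0 (le_refl 0) (g := g)
    simpa using this
  have hgv : Integrable g volume := by
    rw [← integrable_indicator_iff measurableSet_Ioi] at hg
    exact hg.congr hind
  exact (hgv.comp_sub_right s).integrableOn

lemma shift_integral [NormedSpace ℝ E] {g : ℝ → E} (hg0 : ∀ v < (0:ℝ), g v = 0) {s : ℝ}
    (hs : 0 ≤ s) : ∫ u in Ioi 0, g (u - s) = ∫ v in Ioi 0, g v := by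
  have hind : (Ioi (0:ℝ)).indicator g =ᵐ[volume] g := by
    have := indicator_shift_ae hg0 (le_refl 0) (g := g)
    simpa using this
  rw [← integral_indicator measurableSet_Ioi, ← integral_indicator measurableSet_Ioi]
  rw [integral_congr_ae (indicator_shift_ae hg0 hs), integral_congr_ae hind]
  exact integral_sub_right_eq_self g s

end Aux

noncomputable def Cv (K X : ℝ → ℝ) (u : ℝ) : ℝ := ∫ s in Ioi 0, K s * X (u - s)
noncomputable def Psi (K X : ℝ → ℝ) (u : ℝ) : ℝ := ∫ s in Ioi 0, |K s * X (u - s)|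

section Stage2

variable {K X : ℝ → ℝ} {τ : ℝ}

lemma I1 (hX0 : ∀ t < (0:ℝ), X t = 0) (hXc : ContinuousOn X (Ici 0))
    (hX2 : IntegrableOn (fun t => X t ^ 2) (Ioi 0)) (hτ : 0 < τ) :
    IntegrableOn (fun t => Real.exp (-τ * t) * |X t|) (Ioi 0) := by
  have hXm := meas_of_zero_neg hX0 hXc
  refine Integrable.mono' (g := fun t => (1/2) * (Real.exp (-(2*τ) * t) + X t ^ 2)) ?_ ?_ ?_
  · exact ((exp_neg_integrableOn_Ioi 0 (by positivity)).add hX2).const_mul _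
  · exact ((Real.measurable_exp.comp (measurable_const.mul measurable_id)).mul
      hXm.abs).aestronglyMeasurable
  · filter_upwards with t
    have h1 : Real.exp (-τ*t) * Real.exp (-τ*t) = Real.exp (-(2*τ) * t) := by
      rw [← Real.exp_add]; ring_nf
    have h2 : ‖Real.exp (-τ * t) * |X t|‖ = Real.exp (-τ*t) * |X t| := by
      rw [Real.norm_eq_abs, abs_of_nonneg (by positivity)]
    rw [h2]
    nlinarith [sq_nonneg (Real.exp (-τ*t) - |X t|), sq_abs (X t)]

lemma I1' (hX0 : ∀ t < (0:ℝ), X t = 0) (hXc : ContinuousOn X (Ici 0))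
    (hX2 : IntegrableOn (fun t => X t ^ 2) (Ioi 0)) (hτ : 0 < τ) :
    IntegrableOn (fun t => Real.exp (-τ * t) * X t) (Ioi 0) := by
  have hXm := meas_of_zero_neg hX0 hXc
  refine Integrable.mono' (I1 hX0 hXc hX2 hτ) ?_ ?_
  · exact ((Real.measurable_exp.comp (measurable_const.mul measurable_id)).mul
      hXm).aestronglyMeasurable
  · filter_upwards with t
    rw [Real.norm_eq_abs, abs_mul, abs_of_nonneg (Real.exp_pos _).le]

lemma Pprod (hKmeas : Measurable K) (hKpos : ∀ s ≥ (0:ℝ), 0 ≤ K s)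
    (hKint : IntegrableOn K (Ioi 0))
    (hX0 : ∀ t < (0:ℝ), X t = 0) (hXc : ContinuousOn X (Ici 0))
    (hX2 : IntegrableOn (fun t => X t ^ 2) (Ioi 0)) (hτ : 0 < τ) :
    Integrable (fun p : ℝ × ℝ => Real.exp (-τ * p.1) * (K p.2 * X (p.1 - p.2)))
      ((volume.restrict (Ioi 0)).prod (volume.restrict (Ioi 0))) := by
  have hXm := meas_of_zero_neg hX0 hXc
  have hfm : Measurable (fun p : ℝ × ℝ => Real.exp (-τ * p.1) * (K p.2 * X (p.1 - p.2))) :=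
    (Real.measurable_exp.comp (measurable_fst.const_mul (-τ))).mul
      ((hKmeas.comp measurable_snd).mul (hXm.comp (measurable_fst.sub measurable_snd)))
  have base : IntegrableOn (fun v => Real.exp (-τ * v) * X v) (Ioi 0) := I1' hX0 hXc hX2 hτ
  have baseabs : IntegrableOn (fun v => Real.exp (-τ * v) * |X v|) (Ioi 0) := I1 hX0 hXc hX2 hτ
  have hg0 : ∀ v < (0:ℝ), Real.exp (-τ * v) * X v = 0 := fun v hv => by
    rw [hX0 v hv, mul_zero]
  have hg0abs : ∀ v < (0:ℝ), Real.exp (-τ * v) * |X v| = 0 := fun v hv => by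
    rw [hX0 v hv, abs_zero, mul_zero]
  have hsplit : ∀ (s : ℝ) (u : ℝ), Real.exp (-τ * u) = Real.exp (-τ * s) * Real.exp (-τ * (u - s)) := by
    intro s u; rw [← Real.exp_add]; ring_nf
  rw [integrable_prod_iff' hfm.aestronglyMeasurable]
  constructor
  · filter_upwards [ae_restrict_mem measurableSet_Ioi] with s hs
    have heq : (fun u => Real.exp (-τ * u) * (K s * X (u - s)))
        = fun u => (K s * Real.exp (-τ * s)) * (Real.exp (-τ * (u - s)) * X (u - s)) := by
      funext u; rw [hsplit s u]; ring
    rw [heq]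
    exact (shift_integrableOn hg0 (le_of_lt hs) base).const_mul _
  · set C := ∫ v in Ioi 0, Real.exp (-τ * v) * |X v| with hC
    have hCnn : 0 ≤ C := setIntegral_nonneg measurableSet_Ioi (fun v _ => by positivity)
    refine Integrable.mono' (hKint.const_mul C) ?_ ?_
    · exact ((hfm.norm).stronglyMeasurable.integral_prod_left').aestronglyMeasurable
    · filter_upwards [ae_restrict_mem measurableSet_Ioi] with s hs
      have hval : ∫ u in Ioi 0, ‖Real.exp (-τ * u) * (K s * X (u - s))‖
          = (|K s| * Real.exp (-τ * s)) * C := by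
        have heq : (fun u => ‖Real.exp (-τ * u) * (K s * X (u - s))‖)
            = fun u => (|K s| * Real.exp (-τ * s)) * (Real.exp (-τ * (u - s)) * |X (u - s)|) := by
          funext u
          rw [Real.norm_eq_abs, abs_mul, abs_mul, abs_of_nonneg (Real.exp_pos _).le, hsplit s u]
          ring
        rw [heq, integral_const_mul, hC,
          shift_integral hg0abs (le_of_lt hs)]
      rw [Real.norm_eq_abs, hval, abs_of_nonneg (by positivity)]
      have h1 : Real.exp (-τ * s) ≤ 1 := by
        rw [show (1:ℝ) = Real.exp 0 by simp]
        apply Real.exp_le_exp.2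
        nlinarith [le_of_lt (mem_Ioi.mp hs)]
      have h2 : |K s| = K s := abs_of_nonneg (hKpos s (le_of_lt (mem_Ioi.mp hs)))
      rw [h2]
      calc K s * Real.exp (-τ * s) * C ≤ K s * 1 * C := by
            apply mul_le_mul_of_nonneg_right _ hCnn
            exact mul_le_mul_of_nonneg_left h1 (hKpos s (le_of_lt (mem_Ioi.mp hs)))
        _ = C * K s := by ring

lemma PsiInt (hKmeas : Measurable K) (hKpos : ∀ s ≥ (0:ℝ), 0 ≤ K s)
    (hKint : IntegrableOn K (Ioi 0))
    (hX0 : ∀ t < (0:ℝ), X t = 0) (hXc : ContinuousOn X (Ici 0))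
    (hX2 : IntegrableOn (fun t => X t ^ 2) (Ioi 0)) (hτ : 0 < τ) :
    Integrable (fun u => Real.exp (-τ * u) * Psi K X u) (volume.restrict (Ioi 0)) := by
  have h := (Pprod hKmeas hKpos hKint hX0 hXc hX2 hτ).integral_norm_prod_left
  refine h.congr ?_
  filter_upwards with u
  have : (fun s => ‖Real.exp (-τ * u) * (K s * X (u - s))‖)
      = fun s => Real.exp (-τ * u) * |K s * X (u - s)| := by
    funext s
    rw [Real.norm_eq_abs, abs_mul, abs_of_nonneg (Real.exp_pos _).le]
  rw [this, integral_const_mul]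
  rfl

end Stage2

section Stage3

variable {a b : ℝ} {K X : ℝ → ℝ}

lemma Xbound (hX0 : ∀ t < (0:ℝ), X t = 0) (hXc : ContinuousOn X (Ici 0)) (T : ℝ) :
    ∃ M : ℝ, ∀ t ≤ T, |X t| ≤ M := by
  rcases lt_or_ge T 0 with h | h
  · exact ⟨0, fun t ht => by rw [hX0 t (lt_of_le_of_lt ht h)]; simp⟩
  · obtain ⟨C, hC⟩ := (isCompact_Icc (a := (0:ℝ)) (b := T)).exists_bound_of_continuousOn
      (hXc.mono Icc_subset_Ici_self)
    refine ⟨max C 0, fun t ht => ?_⟩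
    rcases lt_or_ge t 0 with h' | h'
    · rw [hX0 t h']; simp
    · exact le_trans (by simpa [Real.norm_eq_abs] using hC t ⟨h', ht⟩) (le_max_left _ _)

lemma XintOn (hX0 : ∀ t < (0:ℝ), X t = 0) (hXc : ContinuousOn X (Ici 0)) (c d : ℝ) :
    IntegrableOn X (Ioc c d) := by
  obtain ⟨M, hM⟩ := Xbound hX0 hXc d
  refine Measure.integrableOn_of_bounded (M := M) measure_Ioc_lt_top.ne
    (meas_of_zero_neg hX0 hXc).aestronglyMeasurable ?_
  filter_upwards [ae_restrict_mem measurableSet_Ioc] with t ht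
  simpa [Real.norm_eq_abs] using hM t ht.2

lemma X2intOn (hX0 : ∀ t < (0:ℝ), X t = 0) (hXc : ContinuousOn X (Ici 0)) (c d : ℝ) :
    IntegrableOn (fun t => X t ^ 2) (Ioc c d) := by
  obtain ⟨M, hM⟩ := Xbound hX0 hXc d
  refine Measure.integrableOn_of_bounded (M := M ^ 2) measure_Ioc_lt_top.ne
    ((meas_of_zero_neg hX0 hXc).pow_const 2).aestronglyMeasurable ?_
  filter_upwards [ae_restrict_mem measurableSet_Ioc] with t ht
  have := hM t ht.2
  rw [Real.norm_eq_abs, abs_pow]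
  have h0 : (0:ℝ) ≤ |X t| := abs_nonneg _
  nlinarith

lemma Cv_meas (hKmeas : Measurable K) (hX0 : ∀ t < (0:ℝ), X t = 0)
    (hXc : ContinuousOn X (Ici 0)) : Measurable (Cv K X) := by
  have hXm := meas_of_zero_neg hX0 hXc
  have : StronglyMeasurable fun p : ℝ × ℝ => K p.2 * X (p.1 - p.2) :=
    ((hKmeas.comp measurable_snd).mul (hXm.comp (measurable_fst.sub measurable_snd))).stronglyMeasurable
  exact this.integral_prod_right'.measurable

lemma Psi_meas (hKmeas : Measurable K) (hX0 : ∀ t < (0:ℝ), X t = 0)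
    (hXc : ContinuousOn X (Ici 0)) : Measurable (Psi K X) := by
  have hXm := meas_of_zero_neg hX0 hXc
  have : StronglyMeasurable fun p : ℝ × ℝ => |K p.2 * X (p.1 - p.2)| :=
    ((hKmeas.comp measurable_snd).mul (hXm.comp (measurable_fst.sub measurable_snd))).abs.stronglyMeasurable
  exact this.integral_prod_right'.measurable

lemma Cv_le (K X : ℝ → ℝ) (u : ℝ) : |Cv K X u| ≤ Psi K X u := by
  simp only [Cv, Psi]
  simpa only [Real.norm_eq_abs] using
    norm_integral_le_integral_norm (μ := volume.restrict (Ioi 0)) (fun s => K s * X (u - s))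

lemma Psi_nonneg (K X : ℝ → ℝ) (u : ℝ) : 0 ≤ Psi K X u :=
  setIntegral_nonneg measurableSet_Ioi fun s _ => abs_nonneg _

lemma PsiIntOc (hKmeas : Measurable K) (hKpos : ∀ s ≥ (0:ℝ), 0 ≤ K s)
    (hKint : IntegrableOn K (Ioi 0))
    (hX0 : ∀ t < (0:ℝ), X t = 0) (hXc : ContinuousOn X (Ici 0))
    (hX2 : IntegrableOn (fun t => X t ^ 2) (Ioi 0)) (t : ℝ) :
    IntegrableOn (Psi K X) (Ioc 0 t) := by
  have base0 : IntegrableOn (fun u => Real.exp (-1 * u) * Psi K X u) (Ioi 0) :=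
    PsiInt hKmeas hKpos hKint hX0 hXc hX2 one_pos
  have base : IntegrableOn (fun u => Real.exp (-1 * u) * Psi K X u) (Ioc 0 t) :=
    base0.mono_set Ioc_subset_Ioi_self
  refine Integrable.mono' (base.const_mul (Real.exp t)) ?_ ?_
  · exact (Psi_meas hKmeas hX0 hXc).aestronglyMeasurable
  · filter_upwards [ae_restrict_mem measurableSet_Ioc] with u hu
    have h1 : Real.exp u ≤ Real.exp t := Real.exp_le_exp.2 hu.2
    have h2 : 0 ≤ Psi K X u := Psi_nonneg K X u
    have h3 : Real.exp (-1 * u) * Real.exp u = 1 := by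
      rw [← Real.exp_add]; ring_nf; exact Real.exp_zero
    rw [Real.norm_eq_abs, abs_of_nonneg h2]
    calc Psi K X u = Real.exp u * (Real.exp (-1 * u) * Psi K X u) := by
          rw [← mul_assoc, mul_comm (Real.exp u), h3, one_mul]
      _ ≤ Real.exp t * (Real.exp (-1 * u) * Psi K X u) := by
          apply mul_le_mul_of_nonneg_right h1 (by positivity)

lemma CvIntOc (hKmeas : Measurable K) (hKpos : ∀ s ≥ (0:ℝ), 0 ≤ K s)
    (hKint : IntegrableOn K (Ioi 0))
    (hX0 : ∀ t < (0:ℝ), X t = 0) (hXc : ContinuousOn X (Ici 0))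
    (hX2 : IntegrableOn (fun t => X t ^ 2) (Ioi 0)) (t : ℝ) :
    IntegrableOn (Cv K X) (Ioc 0 t) := by
  refine Integrable.mono' (PsiIntOc hKmeas hKpos hKint hX0 hXc hX2 t) ?_ ?_
  · exact (Cv_meas hKmeas hX0 hXc).aestronglyMeasurable
  · filter_upwards with u
    rw [Real.norm_eq_abs]
    exact Cv_le K X u

lemma GIntOc (hKmeas : Measurable K) (hKpos : ∀ s ≥ (0:ℝ), 0 ≤ K s)
    (hKint : IntegrableOn K (Ioi 0))
    (hX0 : ∀ t < (0:ℝ), X t = 0) (hXc : ContinuousOn X (Ici 0))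
    (hX2 : IntegrableOn (fun t => X t ^ 2) (Ioi 0)) (a b t : ℝ) :
    IntegrableOn (fun u => a * X u + b * Cv K X u) (Ioc 0 t) :=
  ((XintOn hX0 hXc 0 t).const_mul a).add ((CvIntOc hKmeas hKpos hKint hX0 hXc hX2 t).const_mul b)

end Stage3

lemma key (a b : ℝ) (K X : ℝ → ℝ)
    (hKmeas : Measurable K) (hKpos : ∀ s ≥ (0:ℝ), 0 ≤ K s)
    (hKint : IntegrableOn K (Ioi 0))
    (hX0 : ∀ t < (0:ℝ), X t = 0) (hXc : ContinuousOn X (Ici 0))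
    (hXeq : ∀ t ≥ (0:ℝ), X t = 1 + ∫ u in (0:ℝ)..t,
      (a * X u + b * ∫ s in Set.Ioi (0:ℝ), K s * X (u - s)))
    {z : ℂ} (hz : 0 < z.re) (hchar : charFn a b K z = 0)
    (hX2 : IntegrableOn (fun t => X t ^ 2) (Ioi 0)) : False := by
  have hz0 : z ≠ 0 := fun h => by simp [h] at hz
  have hσ2 : (0:ℝ) < z.re / 2 := half_pos hz
  have hXm : Measurable X := meas_of_zero_neg hX0 hXc
  have hCvm : Measurable (Cv K X) := Cv_meas hKmeas hX0 hXc
  set Gc : ℝ → ℂ := fun u => ((a * X u + b * Cv K X u : ℝ) : ℂ) with hGcdef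
  set L : ℂ := ∫ t in Ioi (0:ℝ), Complex.exp (-z * t) * (X t : ℂ) with hLdef
  set Khat : ℂ := ∫ s in Ioi (0:ℝ), Complex.exp (-z * s) * (K s : ℂ) with hKhatdef
  have hchar' : z - (a:ℂ) - (b:ℂ) * Khat = 0 := hchar
  have hGcm : Measurable Gc :=
    Complex.measurable_ofReal.comp ((hXm.const_mul a).add (hCvm.const_mul b))
  -- basic integrabilities
  have hcXnorm : ∀ t : ℝ, ‖Complex.exp (-z * t) * (X t : ℂ)‖
      = Real.exp (-z.re * t) * |X t| := by
    intro t
    rw [norm_mul, cexp_norm, Complex.norm_real, Real.norm_eq_abs]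
  have hLi : IntegrableOn (fun t : ℝ => Complex.exp (-z * t) * (X t : ℂ)) (Ioi 0) := by
    refine Integrable.mono' (I1 hX0 hXc hX2 hz) ?_ ?_
    · exact ((Complex.measurable_exp.comp (Complex.measurable_ofReal.const_mul (-z))).mul
        (Complex.measurable_ofReal.comp hXm)).aestronglyMeasurable
    · filter_upwards with t
      rw [hcXnorm t]
  have hCvci : IntegrableOn (fun u : ℝ => Complex.exp (-z * u) * (Cv K X u : ℂ)) (Ioi 0) := by
    refine Integrable.mono' (PsiInt hKmeas hKpos hKint hX0 hXc hX2 hz) ?_ ?_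
    · exact ((Complex.measurable_exp.comp (Complex.measurable_ofReal.const_mul (-z))).mul
        (Complex.measurable_ofReal.comp hCvm)).aestronglyMeasurable
    · filter_upwards with u
      rw [norm_mul, cexp_norm, Complex.norm_real, Real.norm_eq_abs]
      exact mul_le_mul_of_nonneg_left (Cv_le K X u) (Real.exp_pos _).le
  have hGcIoc : ∀ t : ℝ, IntegrableOn Gc (Ioc 0 t) := by
    intro t
    have h1 : IntegrableOn (fun u => a * X u + b * Cv K X u) (Ioc 0 t) :=
      ((XintOn hX0 hXc 0 t).const_mul a).add
        ((CvIntOc hKmeas hKpos hKint hX0 hXc hX2 t).const_mul b)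
    exact h1.ofReal
  -- Fubini 2
  have hf2i : Integrable
      (Function.uncurry fun u s : ℝ => Complex.exp (-z * u) * ((K s * X (u - s) : ℝ) : ℂ))
      ((volume.restrict (Ioi (0:ℝ))).prod (volume.restrict (Ioi (0:ℝ)))) := by
    constructor
    · exact ((Complex.measurable_exp.comp
        ((Complex.measurable_ofReal.comp measurable_fst).const_mul (-z))).mul
        (Complex.measurable_ofReal.comp ((hKmeas.comp measurable_snd).mul
          (hXm.comp (measurable_fst.sub measurable_snd))))).aestronglyMeasurable
    · refine (Pprod hKmeas hKpos hKint hX0 hXc hX2 hz).2.congr' ?_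
      filter_upwards with p
      rw [Function.uncurry]
      rw [Real.norm_eq_abs, abs_mul, abs_of_nonneg (Real.exp_pos _).le, norm_mul, cexp_norm,
        Complex.norm_real, Real.norm_eq_abs]
  have hg0c : ∀ v < (0:ℝ), Complex.exp (-z * v) * (X v : ℂ) = 0 := by
    intro v hv; rw [hX0 v hv]; simp
  have hF2 : ∫ u in Ioi (0:ℝ), Complex.exp (-z * u) * (Cv K X u : ℂ) = Khat * L := by
    have hLHS : ∀ u : ℝ, Complex.exp (-z * u) * (Cv K X u : ℂ)
        = ∫ s in Ioi (0:ℝ), Complex.exp (-z * u) * ((K s * X (u - s) : ℝ) : ℂ) := by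
      intro u
      rw [integral_const_mul]
      congr 1
      exact integral_ofReal.symm
    calc ∫ u in Ioi (0:ℝ), Complex.exp (-z * u) * (Cv K X u : ℂ)
        = ∫ u in Ioi (0:ℝ), ∫ s in Ioi (0:ℝ),
            Complex.exp (-z * u) * ((K s * X (u - s) : ℝ) : ℂ) := by
          exact integral_congr_ae (Filter.Eventually.of_forall hLHS)
      _ = ∫ s in Ioi (0:ℝ), ∫ u in Ioi (0:ℝ),
            Complex.exp (-z * u) * ((K s * X (u - s) : ℝ) : ℂ) := by
          exact integral_integral_swap hf2i
      _ = ∫ s in Ioi (0:ℝ), (Complex.exp (-z * s) * (K s : ℂ)) * L := by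
          refine integral_congr_ae ?_
          filter_upwards [ae_restrict_mem measurableSet_Ioi] with s hs
          have hsp : (0:ℝ) ≤ s := (mem_Ioi.mp hs).le
          have hfac : ∀ u : ℝ, Complex.exp (-z * u) * ((K s * X (u - s) : ℝ) : ℂ)
              = (Complex.exp (-z * s) * (K s : ℂ))
                * (Complex.exp (-z * ((u - s : ℝ) : ℂ)) * (X (u - s) : ℂ)) := by
            intro u
            have he : Complex.exp (-z * u)
                = Complex.exp (-z * s) * Complex.exp (-z * ((u - s : ℝ) : ℂ)) := by
              rw [← Complex.exp_add]; push_cast; ring_nf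
            rw [he]; push_cast; ring
          simp_rw [hfac]
          rw [integral_const_mul,
            shift_integral (g := fun v => Complex.exp (-z * v) * (X v : ℂ)) hg0c hsp]
      _ = Khat * L := by
          rw [show (fun s : ℝ => Complex.exp (-z * s) * (K s : ℂ) * L)
              = fun s : ℝ => (Complex.exp (-z * s) * (K s : ℂ)) * L from rfl,
            integral_mul_const]
  -- split of the weighted G integral
  have hGci : IntegrableOn (fun u : ℝ => Complex.exp (-z * u) * Gc u) (Ioi 0) := by
    have h1 := (hLi.const_mul (a:ℂ)).add (hCvci.const_mul (b:ℂ))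
    refine h1.congr ?_
    filter_upwards with u
    simp only [Pi.add_apply, hGcdef]
    push_cast
    ring
  have hB : ∫ u in Ioi (0:ℝ), Complex.exp (-z * u) * Gc u
      = (a:ℂ) * L + (b:ℂ) * (Khat * L) := by
    have hsplit : ∀ u : ℝ, Complex.exp (-z * u) * Gc u
        = (a:ℂ) * (Complex.exp (-z * u) * (X u : ℂ))
          + (b:ℂ) * (Complex.exp (-z * u) * (Cv K X u : ℂ)) := by
      intro u
      simp only [hGcdef]
      push_cast
      ring
    calc ∫ u in Ioi (0:ℝ), Complex.exp (-z * u) * Gc u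
        = ∫ u in Ioi (0:ℝ), ((a:ℂ) * (Complex.exp (-z * u) * (X u : ℂ))
            + (b:ℂ) * (Complex.exp (-z * u) * (Cv K X u : ℂ))) := by
          exact integral_congr_ae (Filter.Eventually.of_forall hsplit)
      _ = (a:ℂ) * L + (b:ℂ) * (Khat * L) := by
          rw [integral_add (hLi.const_mul (a:ℂ)) (hCvci.const_mul (b:ℂ)),
            integral_const_mul, integral_const_mul, hF2]
  -- Fubini 1
  have hSm : MeasurableSet {p : ℝ × ℝ | p.2 ∈ Ioc 0 p.1} := by
    have : {p : ℝ × ℝ | p.2 ∈ Ioc 0 p.1}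
        = {p : ℝ × ℝ | (0:ℝ) < p.2} ∩ {p : ℝ × ℝ | p.2 ≤ p.1} := by
      ext p; simp [mem_Ioc, and_comm]
    rw [this]
    exact (measurableSet_lt measurable_const measurable_snd).inter
      (measurableSet_le measurable_snd measurable_fst)
  have hf1meq : (Function.uncurry fun t u : ℝ =>
        (z * Complex.exp (-z * t)) * (Ioc (0:ℝ) t).indicator Gc u)
      = Set.indicator {p : ℝ × ℝ | p.2 ∈ Ioc 0 p.1}
          (fun p => (z * Complex.exp (-z * p.1)) * Gc p.2) := by
    funext p
    by_cases h : p.2 ∈ Ioc 0 p.1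
    · rw [Function.uncurry, indicator_of_mem h,
        Set.indicator_of_mem (show p ∈ {p : ℝ × ℝ | p.2 ∈ Ioc 0 p.1} from h)]
    · rw [Function.uncurry, indicator_of_notMem h,
        Set.indicator_of_notMem (show p ∉ {p : ℝ × ℝ | p.2 ∈ Ioc 0 p.1} from h), mul_zero]
  have hf1m : AEStronglyMeasurable (Function.uncurry fun t u : ℝ =>
      (z * Complex.exp (-z * t)) * (Ioc (0:ℝ) t).indicator Gc u)
      ((volume.restrict (Ioi (0:ℝ))).prod (volume.restrict (Ioi (0:ℝ)))) := by
    rw [hf1meq]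
    exact (((measurable_const.mul (Complex.measurable_exp.comp
      ((Complex.measurable_ofReal.comp measurable_fst).const_mul (-z)))).mul
      (hGcm.comp measurable_snd)).indicator hSm).aestronglyMeasurable
  have hGcIocν : ∀ t : ℝ, Integrable ((Ioc (0:ℝ) t).indicator Gc)
      (volume.restrict (Ioi (0:ℝ))) := by
    intro t
    rw [integrable_indicator_iff measurableSet_Ioc]
    rw [IntegrableOn, Measure.restrict_restrict measurableSet_Ioc,
      inter_eq_left.mpr Ioc_subset_Ioi_self]
    exact hGcIoc t
  have hslice1 : ∀ᵐ (t : ℝ) ∂(volume.restrict (Ioi (0:ℝ))), Integrable (fun u =>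
      (z * Complex.exp (-z * t)) * (Ioc (0:ℝ) t).indicator Gc u)
      (volume.restrict (Ioi (0:ℝ))) := by
    filter_upwards with t
    exact (hGcIocν t).const_mul _
  -- the norm bound for Fubini 1
  have habs : IntegrableOn (fun u : ℝ =>
      Real.exp (-(z.re/2) * u) * (|a| * |X u| + |b| * Psi K X u)) (Ioi 0) := by
    have h1 := ((I1 hX0 hXc hX2 hσ2).const_mul |a|).add
      ((PsiInt hKmeas hKpos hKint hX0 hXc hX2 hσ2).const_mul |b|)
    refine h1.congr ?_
    filter_upwards with u
    simp only [Pi.add_apply]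
    ring
  set C2 : ℝ := ∫ u in Ioi (0:ℝ),
    Real.exp (-(z.re/2) * u) * (|a| * |X u| + |b| * Psi K X u) with hC2def
  have hintnn : ∀ u : ℝ, 0 ≤ |a| * |X u| + |b| * Psi K X u := fun u =>
    add_nonneg (mul_nonneg (abs_nonneg _) (abs_nonneg _))
      (mul_nonneg (abs_nonneg _) (Psi_nonneg K X u))
  have hC2nn : 0 ≤ C2 :=
    setIntegral_nonneg measurableSet_Ioi fun u _ =>
      mul_nonneg (Real.exp_pos _).le (hintnn u)
  have hGnorm : ∀ u : ℝ, ‖Gc u‖ ≤ |a| * |X u| + |b| * Psi K X u := by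
    intro u
    simp only [hGcdef]
    rw [Complex.norm_real, Real.norm_eq_abs]
    calc |a * X u + b * Cv K X u| ≤ |a * X u| + |b * Cv K X u| := abs_add_le _ _
      _ = |a| * |X u| + |b| * |Cv K X u| := by rw [abs_mul, abs_mul]
      _ ≤ |a| * |X u| + |b| * Psi K X u := by
          exact add_le_add le_rfl (mul_le_mul_of_nonneg_left (Cv_le K X u) (abs_nonneg _))
  have hAbsIntOc : ∀ t : ℝ, IntegrableOn
      (fun u => |a| * |X u| + |b| * Psi K X u) (Ioc 0 t) := by
    intro t
    exact (((XintOn hX0 hXc 0 t).abs.const_mul |a|)).add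
      ((PsiIntOc hKmeas hKpos hKint hX0 hXc hX2 t).const_mul |b|)
  have hDbound : ∀ t : ℝ, 0 < t →
      (∫ u in Ioc (0:ℝ) t, ‖Gc u‖) ≤ Real.exp ((z.re/2) * t) * C2 := by
    intro t ht
    have hD1 : (∫ u in Ioc (0:ℝ) t, ‖Gc u‖)
        ≤ ∫ u in Ioc (0:ℝ) t, (|a| * |X u| + |b| * Psi K X u) :=
      setIntegral_mono_on (hGcIoc t).norm (hAbsIntOc t) measurableSet_Ioc
        (fun u _ => hGnorm u)
    have hD2 : (∫ u in Ioc (0:ℝ) t, (|a| * |X u| + |b| * Psi K X u))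
        ≤ ∫ u in Ioc (0:ℝ) t, Real.exp ((z.re/2) * t)
            * (Real.exp (-(z.re/2) * u) * (|a| * |X u| + |b| * Psi K X u)) := by
      refine setIntegral_mono_on (hAbsIntOc t)
        ((habs.mono_set Ioc_subset_Ioi_self).const_mul _) measurableSet_Ioc ?_
      intro u hu
      have h4 : Real.exp ((z.re/2) * u) ≤ Real.exp ((z.re/2) * t) :=
        Real.exp_le_exp.2 (mul_le_mul_of_nonneg_left hu.2 hσ2.le)
      have h5 : Real.exp ((z.re/2) * u) * Real.exp (-(z.re/2) * u) = 1 := by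
        rw [← Real.exp_add, show (z.re/2) * u + -(z.re/2) * u = 0 by ring, Real.exp_zero]
      calc |a| * |X u| + |b| * Psi K X u
          = Real.exp ((z.re/2) * u)
            * (Real.exp (-(z.re/2) * u) * (|a| * |X u| + |b| * Psi K X u)) := by
            rw [← mul_assoc, h5, one_mul]
        _ ≤ Real.exp ((z.re/2) * t)
            * (Real.exp (-(z.re/2) * u) * (|a| * |X u| + |b| * Psi K X u)) :=
            mul_le_mul_of_nonneg_right h4
              (mul_nonneg (Real.exp_pos _).le (hintnn u))
    have hD3 : (∫ u in Ioc (0:ℝ) t, Real.exp ((z.re/2) * t)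
          * (Real.exp (-(z.re/2) * u) * (|a| * |X u| + |b| * Psi K X u)))
        ≤ Real.exp ((z.re/2) * t) * C2 := by
      rw [integral_const_mul]
      refine mul_le_mul_of_nonneg_left ?_ (Real.exp_pos _).le
      refine setIntegral_mono_set habs ?_ (HasSubset.Subset.eventuallyLE Ioc_subset_Ioi_self)
      exact Filter.Eventually.of_forall fun u => mul_nonneg (Real.exp_pos _).le (hintnn u)
    exact hD1.trans (hD2.trans hD3)
  have hnormint : Integrable (fun t : ℝ => ∫ u, ‖(z * Complex.exp (-z * t))
      * (Ioc (0:ℝ) t).indicator Gc u‖ ∂(volume.restrict (Ioi (0:ℝ))))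
      (volume.restrict (Ioi (0:ℝ))) := by
    refine Integrable.mono'
      (g := fun t => (‖z‖ * C2) * Real.exp (-(z.re/2) * t))
      (((exp_neg_integrableOn_Ioi 0 hσ2).const_mul _)) ?_ ?_
    · exact hf1m.norm.integral_prod_right'
    · filter_upwards [ae_restrict_mem measurableSet_Ioi] with t ht
      have hval : (∫ u, ‖(z * Complex.exp (-z * t))
            * (Ioc (0:ℝ) t).indicator Gc u‖ ∂(volume.restrict (Ioi (0:ℝ))))
          = (‖z‖ * Real.exp (-z.re * t)) * ∫ u in Ioc (0:ℝ) t, ‖Gc u‖ := by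
        have hpt : ∀ u : ℝ, ‖(z * Complex.exp (-z * t)) * (Ioc (0:ℝ) t).indicator Gc u‖
            = (‖z‖ * Real.exp (-z.re * t))
              * (Ioc (0:ℝ) t).indicator (fun u => ‖Gc u‖) u := by
          intro u
          rw [norm_mul, norm_mul, cexp_norm, ← norm_indicator_eq_indicator_norm]
        simp_rw [hpt]
        rw [integral_const_mul, setIntegral_indicator measurableSet_Ioc,
          inter_eq_right.mpr Ioc_subset_Ioi_self]
      have hnn : 0 ≤ (‖z‖ * Real.exp (-z.re * t)) * ∫ u in Ioc (0:ℝ) t, ‖Gc u‖ :=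
        mul_nonneg (mul_nonneg (norm_nonneg _) (Real.exp_pos _).le)
          (setIntegral_nonneg measurableSet_Ioc fun u _ => norm_nonneg _)
      rw [Real.norm_eq_abs, hval, abs_of_nonneg hnn]
      have h6 : Real.exp (-z.re * t) * Real.exp ((z.re/2) * t) = Real.exp (-(z.re/2) * t) := by
        rw [← Real.exp_add]; congr 1; ring
      calc (‖z‖ * Real.exp (-z.re * t)) * ∫ u in Ioc (0:ℝ) t, ‖Gc u‖
          ≤ (‖z‖ * Real.exp (-z.re * t)) * (Real.exp ((z.re/2) * t) * C2) := by
            refine mul_le_mul_of_nonneg_left (hDbound t ht) ?_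
            exact mul_nonneg (norm_nonneg _) (Real.exp_pos _).le
        _ = (‖z‖ * C2) * Real.exp (-(z.re/2) * t) := by
            rw [show (‖z‖ * Real.exp (-z.re * t)) * (Real.exp ((z.re/2) * t) * C2)
              = (‖z‖ * C2) * (Real.exp (-z.re * t) * Real.exp ((z.re/2) * t)) from
                by ring, h6]
  have hf1i : Integrable (Function.uncurry fun t u : ℝ =>
      (z * Complex.exp (-z * t)) * (Ioc (0:ℝ) t).indicator Gc u)
      ((volume.restrict (Ioi (0:ℝ))).prod (volume.restrict (Ioi (0:ℝ)))) :=
    (integrable_prod_iff hf1m).2 ⟨hslice1, hnormint⟩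
  have hT2i : Integrable (fun t : ℝ => (z * Complex.exp (-z * t))
      * ∫ u in (0:ℝ)..t, Gc u) (volume.restrict (Ioi (0:ℝ))) := by
    refine hf1i.integral_prod_left.congr ?_
    filter_upwards [ae_restrict_mem measurableSet_Ioi] with t ht
    show (∫ u, (z * Complex.exp (-z * t))
        * (Ioc (0:ℝ) t).indicator Gc u ∂(volume.restrict (Ioi (0:ℝ)))) = _
    rw [integral_const_mul, setIntegral_indicator measurableSet_Ioc,
      inter_eq_right.mpr Ioc_subset_Ioi_self,
      intervalIntegral.integral_of_le (le_of_lt ht)]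
  have hT2 : (∫ t in Ioi (0:ℝ), (z * Complex.exp (-z * t)) * ∫ u in (0:ℝ)..t, Gc u)
      = ∫ u in Ioi (0:ℝ), Complex.exp (-z * u) * Gc u := by
    calc (∫ t in Ioi (0:ℝ), (z * Complex.exp (-z * t)) * ∫ u in (0:ℝ)..t, Gc u)
        = ∫ t in Ioi (0:ℝ), ∫ u in Ioi (0:ℝ),
            (z * Complex.exp (-z * t)) * (Ioc (0:ℝ) t).indicator Gc u := by
          refine integral_congr_ae ?_
          filter_upwards [ae_restrict_mem measurableSet_Ioi] with t ht
          rw [integral_const_mul, setIntegral_indicator measurableSet_Ioc,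
            inter_eq_right.mpr Ioc_subset_Ioi_self,
            intervalIntegral.integral_of_le (le_of_lt ht)]
      _ = ∫ u in Ioi (0:ℝ), ∫ t in Ioi (0:ℝ),
            (z * Complex.exp (-z * t)) * (Ioc (0:ℝ) t).indicator Gc u :=
          integral_integral_swap hf1i
      _ = ∫ u in Ioi (0:ℝ), Complex.exp (-z * u) * Gc u := by
          refine integral_congr_ae ?_
          filter_upwards [ae_restrict_mem measurableSet_Ioi] with u hu
          have hu0 : (0:ℝ) < u := hu
          have hind : ∀ t : ℝ, (z * Complex.exp (-z * t)) * (Ioc (0:ℝ) t).indicator Gc u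
              = (Ici u).indicator (fun t : ℝ => (z * Complex.exp (-z * t)) * Gc u) t := by
            intro t
            by_cases h : u ≤ t
            · rw [Set.indicator_of_mem (mem_Ici.2 h), indicator_of_mem (mem_Ioc.2 ⟨hu0, h⟩)]
            · rw [indicator_of_notMem (fun hc => h (mem_Ioc.mp hc).2), mul_zero,
                Set.indicator_of_notMem (fun hc => h (mem_Ici.mp hc))]
          simp_rw [hind]
          have hsub : Ici u ⊆ Ioi (0:ℝ) := fun x hx => lt_of_lt_of_le hu0 hx
          rw [setIntegral_indicator measurableSet_Ici, inter_eq_right.mpr hsub,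
            integral_Ici_eq_integral_Ioi, integral_mul_const, integral_const_mul,
            cexp_integral hz u]
          field_simp
  have hA : (∫ t in Ioi (0:ℝ), z * Complex.exp (-z * t)) = 1 := by
    rw [integral_const_mul, cexp_integral hz 0]
    simp only [Complex.ofReal_zero, mul_zero, Complex.exp_zero]
    field_simp
  have hmain : z * L = 1 + ((a:ℂ) * L + (b:ℂ) * (Khat * L)) := by
    calc z * L = ∫ t in Ioi (0:ℝ), z * (Complex.exp (-z * t) * (X t : ℂ)) := by
          rw [hLdef, integral_const_mul]
      _ = ∫ t in Ioi (0:ℝ), (z * Complex.exp (-z * t)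
            + (z * Complex.exp (-z * t)) * ∫ u in (0:ℝ)..t, Gc u) := by
          refine integral_congr_ae ?_
          filter_upwards [ae_restrict_mem measurableSet_Ioi] with t ht
          have h1 : X t = 1 + ∫ u in (0:ℝ)..t, (a * X u + b * Cv K X u) := hXeq t (le_of_lt ht)
          have h2 : (X t : ℂ) = 1 + ∫ u in (0:ℝ)..t, Gc u := by
            rw [h1, Complex.ofReal_add, Complex.ofReal_one, ← intervalIntegral.integral_ofReal]
          rw [h2]; ring
      _ = (∫ t in Ioi (0:ℝ), z * Complex.exp (-z * t))
            + ∫ t in Ioi (0:ℝ), (z * Complex.exp (-z * t)) * ∫ u in (0:ℝ)..t, Gc u :=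
          integral_add ((cexp_integrableOn hz 0).const_mul z) hT2i
      _ = 1 + ((a:ℂ) * L + (b:ℂ) * (Khat * L)) := by rw [hA, hT2, hB]
  have hcontra : (1:ℂ) = 0 := by linear_combination (-1 : ℂ) * hmain + L * hchar'
  exact one_ne_zero hcontra

theorem stmt15 (a b μ : ℝ) (K : ℝ → ℝ)
    (hKmeas : Measurable K) (hKpos : ∀ s ≥ (0 : ℝ), 0 ≤ K s)
    (hKint : IntegrableOn K (Set.Ioi 0))
    (hKone : (∫ s in Set.Ioi (0 : ℝ), K s) = 1)
    (hμ : 0 < μ)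
    (hρint : IntegrableOn (fun s => Real.exp (μ * s) * K s) (Set.Ioi 0))
    (X : ℝ → ℝ) (hX : IsFundamental a b K X)
    (hzero : ∃ zstar : ℂ, 0 < zstar.re ∧ charFn a b K zstar = 0) :
    Filter.Tendsto (fun t : ℝ => ∫ s in (0 : ℝ)..t, X s ^ 2)
      Filter.atTop Filter.atTop ∧
    ∀ σ₀ : ℝ, σ₀ ≠ 0 →
      ¬∃ R : ℝ, ∀ t ≥ (0 : ℝ), σ₀ ^ 2 * (∫ s in (0 : ℝ)..t, X s ^ 2) ≤ R := by
  obtain ⟨hX0, hX1, hXc, hXeq⟩ := hX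
  obtain ⟨zstar, hzre, hzchar⟩ := hzero
  have hII : ∀ c d : ℝ, IntervalIntegrable (fun s => X s ^ 2) volume c d := by
    intro c d
    rw [intervalIntegrable_iff]
    exact X2intOn hX0 hXc _ _
  have hmono : Monotone (fun t : ℝ => ∫ s in (0 : ℝ)..t, X s ^ 2) := by
    intro t1 t2 h
    have hadd := intervalIntegral.integral_add_adjacent_intervals (hII 0 t1) (hII t1 t2)
    have hnn : 0 ≤ ∫ s in t1..t2, X s ^ 2 :=
      intervalIntegral.integral_nonneg h (fun u _ => sq_nonneg _)
    simp only []
    linarith [hadd]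
  have hnb : ¬ ∃ R : ℝ, ∀ t ≥ (0:ℝ), (∫ s in (0 : ℝ)..t, X s ^ 2) ≤ R := by
    rintro ⟨R, hR⟩
    have hX2 : IntegrableOn (fun t => X t ^ 2) (Ioi 0) := by
      refine integrableOn_Ioi_of_intervalIntegral_norm_bounded (μ := volume)
        (b := fun i : ℝ => i) (l := Filter.atTop) R 0
        (fun i => X2intOn hX0 hXc 0 i) Filter.tendsto_id ?_
      filter_upwards [Filter.eventually_ge_atTop (0:ℝ)] with i hi
      have heq : (∫ x in (0:ℝ)..i, ‖X x ^ 2‖) = ∫ x in (0:ℝ)..i, X x ^ 2 := by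
        apply intervalIntegral.integral_congr
        intro x _
        show ‖X x ^ 2‖ = X x ^ 2
        rw [Real.norm_eq_abs, abs_of_nonneg (sq_nonneg _)]
      rw [heq]
      exact hR i hi
    exact key a b K X hKmeas hKpos hKint hX0 hXc hXeq hzre hzchar hX2
  constructor
  · refine Filter.tendsto_atTop_atTop_of_monotone' hmono ?_
    intro hbdd
    obtain ⟨R, hR⟩ := hbdd
    exact hnb ⟨R, fun t _ => hR (mem_range_self t)⟩
  · rintro σ₀ hσ ⟨R, hR⟩
    have h2 : (0:ℝ) < σ₀ ^ 2 := by positivity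
    refine hnb ⟨R / σ₀ ^ 2, fun t ht => ?_⟩
    rw [le_div_iff₀ h2]
    have := hR t ht
    linarith
end

section
/- Let α < 0 and β < 0 with α ≠ β, and let C₃ ≥ 0, K₃ ≥ 0, K₄ ≥ 0. Suppose Y, P : [0,∞) → ℝ are measurable with |Y(t)| ≤ C₃ e^{βt} and |P(t) − K₃| ≤ K₄ e^{αt} for all t ≥ 0. Set M(t) = ∫₀ᵗ Y(s) P(t−s) ds and M_∞ = K₃ ∫₀^∞ Y(s) ds. Then for all t ≥ 0, |M(t) − M_∞| ≤ C₃ ( K₃/|β| + 2K₄/|α−β| ) e^{t·max(α,β)}; in particular M(t) converges to M_∞ exponentially as t → +∞. -/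
open MeasureTheory Real Set

lemma expMulDeriv (c : ℝ) (hc : c ≠ 0) (x : ℝ) :
    HasDerivAt (fun y : ℝ => Real.exp (c * y) / c) (Real.exp (c * x)) x := by
  have h : HasDerivAt (fun y : ℝ => Real.exp (c * y)) (Real.exp (c * x) * c) x := by
    have := (Real.hasDerivAt_exp (c * x)).comp x ((hasDerivAt_id x).const_mul c)
    exact this.congr_deriv (by simp only [id, mul_one])
  simpa [mul_div_cancel_right₀ _ hc] using h.div_const c

lemma expMulIntOn (c a : ℝ) (hc : c < 0) :
    IntegrableOn (fun s : ℝ => Real.exp (c * s)) (Ioi a) := by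
  have := exp_neg_integrableOn_Ioi a (neg_pos.2 hc)
  simpa using this

lemma intExpMul (c a b : ℝ) (hc : c ≠ 0) :
    ∫ x in a..b, Real.exp (c * x) = (Real.exp (c * b) - Real.exp (c * a)) / c := by
  rw [intervalIntegral.integral_eq_sub_of_hasDerivAt
      (fun x _ => expMulDeriv c hc x)
      ((Real.continuous_exp.comp (continuous_const.mul continuous_id)).intervalIntegrable a b)]
  ring

lemma intExpMulIoi (c a : ℝ) (hc : c < 0) :
    ∫ x in Ioi a, Real.exp (c * x) = -(Real.exp (c * a) / c) := by
  have hconv : Filter.Tendsto (fun y : ℝ => Real.exp (c * y) / c) Filter.atTop (nhds 0) := by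
    have h1 : Filter.Tendsto (fun y : ℝ => c * y) Filter.atTop Filter.atBot :=
      Filter.Tendsto.const_mul_atTop_of_neg hc Filter.tendsto_id
    have h2 : Filter.Tendsto (fun y : ℝ => Real.exp (c * y)) Filter.atTop (nhds 0) :=
      Real.tendsto_exp_atBot.comp h1
    simpa using h2.div_const c
  have := MeasureTheory.integral_Ioi_of_hasDerivAt_of_tendsto
      (f := fun y : ℝ => Real.exp (c * y) / c) (f' := fun y : ℝ => Real.exp (c * y))
      (a := a) (m := 0)
      ((Real.continuous_exp.comp (continuous_const.mul continuous_id)).continuousWithinAt.div_const c)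
      (fun x _ => expMulDeriv c hc.ne x) (expMulIntOn c a hc) hconv
  rw [this]; ring

theorem stmt17 (α β C₃ K₃ K₄ : ℝ)
    (hα : α < 0) (hβ : β < 0) (hαβ : α ≠ β)
    (hC₃ : 0 ≤ C₃) (hK₃ : 0 ≤ K₃) (hK₄ : 0 ≤ K₄)
    (Y P : ℝ → ℝ) (hYm : Measurable Y) (hPm : Measurable P)
    (hY : ∀ t ≥ (0 : ℝ), |Y t| ≤ C₃ * Real.exp (β * t))
    (hP : ∀ t ≥ (0 : ℝ), |P t - K₃| ≤ K₄ * Real.exp (α * t)) :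
    ∀ t ≥ (0 : ℝ),
      |(∫ s in (0 : ℝ)..t, Y s * P (t - s)) -
          K₃ * (∫ s in Set.Ioi (0 : ℝ), Y s)| ≤
        C₃ * (K₃ / |β| + 2 * K₄ / |α - β|) * Real.exp (t * max α β) := by
  intro t ht
  set m := max α β with hm_def
  have hαm : α ≤ m := le_max_left _ _
  have hβm : β ≤ m := le_max_right _ _
  have hβne : β ≠ 0 := hβ.ne
  have hba : β - α ≠ 0 := sub_ne_zero.2 (Ne.symm hαβ)
  have habs : (0:ℝ) < |α - β| := abs_pos.2 (sub_ne_zero.2 hαβ)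
  have hβabs : (0:ℝ) < |β| := abs_pos.2 hβne
  -- integrability of Y on Ioi 0
  have hgint : IntegrableOn (fun s : ℝ => C₃ * Real.exp (β * s)) (Ioi 0) :=
    (expMulIntOn β 0 hβ).const_mul C₃
  have hYae : ∀ᵐ s ∂(volume.restrict (Ioi (0:ℝ))), ‖Y s‖ ≤ C₃ * Real.exp (β * s) := by
    filter_upwards [ae_restrict_mem measurableSet_Ioi] with s hs
    simpa [Real.norm_eq_abs] using hY s (le_of_lt hs)
  have hYint : IntegrableOn Y (Ioi 0) :=
    Integrable.mono' hgint hYm.aestronglyMeasurable hYae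
  have hY1 : IntegrableOn Y (Ioc 0 t) := hYint.mono_set Ioc_subset_Ioi_self
  have hY2 : IntegrableOn Y (Ioi t) := hYint.mono_set (Ioi_subset_Ioi ht)
  -- split
  have hsplit : ∫ s in Ioi (0:ℝ), Y s = (∫ s in Ioc 0 t, Y s) + ∫ s in Ioi t, Y s := by
    rw [← setIntegral_union (Ioc_disjoint_Ioi le_rfl) measurableSet_Ioi hY1 hY2,
      Ioc_union_Ioi_eq_Ioi ht]
  -- interval integrabilities
  have hYii : IntervalIntegrable Y volume 0 t := by
    rw [intervalIntegrable_iff, uIoc_of_le ht]; exact hY1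
  have hfm : Measurable (fun s => Y s * (P (t - s) - K₃)) :=
    hYm.mul ((hPm.comp (measurable_const.sub measurable_id)).sub measurable_const)
  have hbnd : ∀ s ∈ Icc (0:ℝ) t,
      |Y s * (P (t - s) - K₃)| ≤ C₃ * K₄ * Real.exp (α * t) * Real.exp ((β - α) * s) := by
    intro s hs
    have hs0 : (0:ℝ) ≤ s := hs.1
    have hts : (0:ℝ) ≤ t - s := sub_nonneg.2 hs.2
    have h1 := hY s hs0
    have h2 := hP (t - s) hts
    calc |Y s * (P (t - s) - K₃)| = |Y s| * |P (t - s) - K₃| := abs_mul _ _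
      _ ≤ (C₃ * Real.exp (β * s)) * (K₄ * Real.exp (α * (t - s))) :=
          mul_le_mul h1 h2 (abs_nonneg _) (le_trans (abs_nonneg _) h1)
      _ = C₃ * K₄ * (Real.exp (β * s) * Real.exp (α * (t - s))) := by ring
      _ = C₃ * K₄ * Real.exp (α * t + (β - α) * s) := by
          rw [← Real.exp_add]; congr 1; ring
      _ = C₃ * K₄ * Real.exp (α * t) * Real.exp ((β - α) * s) := by
          rw [Real.exp_add]; ring
  have hfii : IntervalIntegrable (fun s => Y s * (P (t - s) - K₃)) volume 0 t := by
    rw [intervalIntegrable_iff, uIoc_of_le ht]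
    refine Integrable.mono' (g := fun s => C₃ * K₄ * Real.exp (α * t) * Real.exp ((β - α) * s))
      ?_ hfm.aestronglyMeasurable ?_
    · exact (Integrable.const_mul ((Real.continuous_exp.comp
        (continuous_const.mul continuous_id)).integrableOn_Ioc) _)
    · filter_upwards [ae_restrict_mem measurableSet_Ioc] with s hs
      rw [Real.norm_eq_abs]; exact hbnd s (Ioc_subset_Icc_self hs)
  have hgii : IntervalIntegrable (fun s => C₃ * K₄ * Real.exp (α * t) * Real.exp ((β - α) * s))
      volume 0 t :=
    (Real.continuous_exp.comp (continuous_const.mul continuous_id)).intervalIntegrable 0 t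
      |>.const_mul _
  -- key algebraic rewrite
  have key : (∫ s in (0:ℝ)..t, Y s * P (t - s)) - K₃ * ∫ s in Ioi (0:ℝ), Y s
      = (∫ s in (0:ℝ)..t, Y s * (P (t - s) - K₃)) - K₃ * ∫ s in Ioi t, Y s := by
    have hYPii : IntervalIntegrable (fun s => Y s * P (t - s)) volume 0 t := by
      have : (fun s => Y s * P (t - s)) = fun s => Y s * (P (t - s) - K₃) + Y s * K₃ := by
        funext s; ring
      rw [this]; exact hfii.add (hYii.mul_const K₃)
    have h3 : ∫ s in (0:ℝ)..t, Y s * (P (t - s) - K₃)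
        = (∫ s in (0:ℝ)..t, Y s * P (t - s)) - K₃ * ∫ s in (0:ℝ)..t, Y s := by
      have : (fun s => Y s * (P (t - s) - K₃)) = fun s => Y s * P (t - s) - Y s * K₃ := by
        funext s; ring
      rw [this, intervalIntegral.integral_sub hYPii (hYii.mul_const K₃),
        intervalIntegral.integral_mul_const]
      ring
    have h4 : ∫ s in (0:ℝ)..t, Y s = ∫ s in Ioc 0 t, Y s := intervalIntegral.integral_of_le ht
    rw [hsplit, h3, h4]; ring
  rw [key]
  -- bound A
  have hA : |∫ s in (0:ℝ)..t, Y s * (P (t - s) - K₃)|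
      ≤ C₃ * (2 * K₄ / |α - β|) * Real.exp (t * m) := by
    have step1 := intervalIntegral.abs_integral_le_integral_abs
      (f := fun s => Y s * (P (t - s) - K₃)) (μ := volume) ht
    have step2 : (∫ s in (0:ℝ)..t, |Y s * (P (t - s) - K₃)|)
        ≤ ∫ s in (0:ℝ)..t, C₃ * K₄ * Real.exp (α * t) * Real.exp ((β - α) * s) :=
      intervalIntegral.integral_mono_on ht hfii.abs hgii hbnd
    have step3 : (∫ s in (0:ℝ)..t, C₃ * K₄ * Real.exp (α * t) * Real.exp ((β - α) * s))
        = C₃ * K₄ * ((Real.exp (β * t) - Real.exp (α * t)) / (β - α)) := by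
      have he : Real.exp (α * t) * Real.exp ((β - α) * t) = Real.exp (β * t) := by
        rw [← Real.exp_add]; congr 1; ring
      rw [intervalIntegral.integral_const_mul, intExpMul _ _ _ hba, mul_zero, Real.exp_zero]
      field_simp
      rw [mul_comm (β - α) t, mul_comm β t] at he
      linear_combination (C₃ * K₄) * he
    have step4 : C₃ * K₄ * ((Real.exp (β * t) - Real.exp (α * t)) / (β - α))
        ≤ C₃ * (2 * K₄ / |α - β|) * Real.exp (t * m) := by
      have h5 : (Real.exp (β * t) - Real.exp (α * t)) / (β - α)
          ≤ |(Real.exp (β * t) - Real.exp (α * t)) / (β - α)| := le_abs_self _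
      have h6 : |(Real.exp (β * t) - Real.exp (α * t)) / (β - α)|
          ≤ 2 * Real.exp (t * m) / |α - β| := by
        rw [abs_div, abs_sub_comm β α]
        apply div_le_div_of_nonneg_right ?_ habs.le |>.trans_eq rfl
        calc |Real.exp (β * t) - Real.exp (α * t)|
            ≤ Real.exp (β * t) + Real.exp (α * t) := by
              refine (abs_sub _ _).trans ?_
              rw [abs_of_pos (Real.exp_pos _), abs_of_pos (Real.exp_pos _)]
          _ ≤ 2 * Real.exp (t * m) := by
              have e1 : Real.exp (β * t) ≤ Real.exp (t * m) :=
                Real.exp_le_exp.2 (by nlinarith)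
              have e2 : Real.exp (α * t) ≤ Real.exp (t * m) :=
                Real.exp_le_exp.2 (by nlinarith)
              linarith
      calc C₃ * K₄ * ((Real.exp (β * t) - Real.exp (α * t)) / (β - α))
          ≤ C₃ * K₄ * (2 * Real.exp (t * m) / |α - β|) := by
            apply mul_le_mul_of_nonneg_left (h5.trans h6) (by positivity)
        _ = C₃ * (2 * K₄ / |α - β|) * Real.exp (t * m) := by ring
    exact step1.trans (step2.trans (step3.le.trans step4))
  -- bound B
  have hB : |K₃ * ∫ s in Ioi t, Y s| ≤ C₃ * (K₃ / |β|) * Real.exp (t * m) := by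
    have hInorm : ‖∫ s in Ioi t, Y s‖ ≤ ∫ s in Ioi t, C₃ * Real.exp (β * s) := by
      refine MeasureTheory.norm_integral_le_of_norm_le
        ((expMulIntOn β t hβ).const_mul C₃) ?_
      filter_upwards [ae_restrict_mem measurableSet_Ioi] with s hs
      simpa [Real.norm_eq_abs] using hY s (ht.trans (le_of_lt hs))
    have hIval : (∫ s in Ioi t, C₃ * Real.exp (β * s)) = C₃ * (Real.exp (β * t) / (-β)) := by
      rw [integral_const_mul, intExpMulIoi β t hβ]
      ring
    have hβeq : -β = |β| := (abs_of_neg hβ).symm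
    calc |K₃ * ∫ s in Ioi t, Y s| = K₃ * |∫ s in Ioi t, Y s| := by
          rw [abs_mul, abs_of_nonneg hK₃]
      _ ≤ K₃ * (C₃ * (Real.exp (β * t) / |β|)) := by
          apply mul_le_mul_of_nonneg_left _ hK₃
          rw [← hβeq, ← hIval]
          simpa [Real.norm_eq_abs] using hInorm
      _ ≤ K₃ * (C₃ * (Real.exp (t * m) / |β|)) := by
          have : Real.exp (β * t) ≤ Real.exp (t * m) := Real.exp_le_exp.2 (by nlinarith)
          gcongr
      _ = C₃ * (K₃ / |β|) * Real.exp (t * m) := by ring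
  calc |(∫ s in (0:ℝ)..t, Y s * (P (t - s) - K₃)) - K₃ * ∫ s in Ioi t, Y s|
      ≤ |∫ s in (0:ℝ)..t, Y s * (P (t - s) - K₃)| + |K₃ * ∫ s in Ioi t, Y s| :=
        abs_sub _ _
    _ ≤ C₃ * (2 * K₄ / |α - β|) * Real.exp (t * m) + C₃ * (K₃ / |β|) * Real.exp (t * m) :=
        add_le_add hA hB
    _ = C₃ * (K₃ / |β| + 2 * K₄ / |α - β|) * Real.exp (t * m) := by ring
end
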